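/- arXiv:2302.13182 — 7 statements merged into one kernel-verified Lean document; each statement's English description precedes it below -/
import Mathlib

section
/- Let K be a commutative ring and let ℓ ≥ 1. Let f and g be formal power series in K[[X]] that are ℓ-tangent to the identity, i.e., with constant coefficient 0, linear coefficient 1, and coefficient of X^n equal to 0 for all 2 ≤ n ≤ ℓ. Then the formal composition f∘g (obtained by substituting g into f) is again ℓ-tangent to the identity and its coefficients satisfy: (i) for every n with ℓ+1 ≤ n ≤ 2ℓ, the coefficient of X^n in f∘g equals (coefficient of X^n in f) + (coefficient of X^n in g); and (ii) the coefficient of X^{2ℓ+1} in f∘g equals (coefficient of X^{2ℓ+1} in f) + (coefficient of X^{2ℓ+1} in g) + (ℓ+1)·(coefficient of X^{ℓ+1} in f)·(coefficient of X^{ℓ+1} in g). -/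
/-- Formal composition (substitution) `f ∘ g` of power series, meaningful when `g`
has zero constant coefficient: the coefficient of `X^n` in `f ∘ g` is
`∑_{k ≤ n} a_k · (coefficient of X^n in g^k)`. -/
noncomputable def psComp {K : Type*} [CommRing K] (f g : PowerSeries K) : PowerSeries K :=
  PowerSeries.mk fun n => ∑ k ∈ Finset.range (n + 1),
    PowerSeries.coeff (R := K) k f * PowerSeries.coeff (R := K) n (g ^ k)

/-- A formal power series is `ℓ`-tangent to the identity if its constant coefficient is `0`,
its linear coefficient is `1`, and its coefficient of `X^n` vanishes for `2 ≤ n ≤ ℓ`. -/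
def IsTangentToId {K : Type*} [CommRing K] (ℓ : ℕ) (f : PowerSeries K) : Prop :=
  PowerSeries.coeff (R := K) 0 f = 0 ∧ PowerSeries.coeff (R := K) 1 f = 1 ∧
    ∀ n, 2 ≤ n → n ≤ ℓ → PowerSeries.coeff (R := K) n f = 0

open PowerSeries Finset

section Aux
variable {K : Type*} [CommRing K]

lemma ord_pow (h : PowerSeries K) (r : ℕ)
    (hh : ∀ m, m < r → PowerSeries.coeff (R := K) m h = 0) (j m : ℕ) (hm : m < j * r) :
    PowerSeries.coeff (R := K) m (h ^ j) = 0 := by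
  have h1 : (X : PowerSeries K) ^ r ∣ h := X_pow_dvd_iff.mpr hh
  have h2 : (X : PowerSeries K) ^ (j * r) ∣ h ^ j := by
    rw [mul_comm, pow_mul]
    exact pow_dvd_pow_of_dvd h1 j
  exact (X_pow_dvd_iff.mp h2) m hm

lemma coeff_gpow (ℓ : ℕ) (hℓ : 1 ≤ ℓ) (g : PowerSeries K) (hg : IsTangentToId ℓ g)
    (k n : ℕ) (hk : 1 ≤ k) (hkn : k ≤ n) (hn : n ≤ 2 * ℓ + 1) :
    PowerSeries.coeff (R := K) n (g ^ k)
      = (if n = k then 1 else 0)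
        + (if ℓ + k ≤ n then (k : K) * PowerSeries.coeff (R := K) (n + 1 - k) g else 0) := by
  obtain ⟨hg0, hg1, hgn⟩ := hg
  set h : PowerSeries K := g - X with hh
  have hhc : ∀ m, m < ℓ + 1 → PowerSeries.coeff (R := K) m h = 0 := by
    intro m hm
    rcases Nat.lt_or_ge m 2 with hm2 | hm2
    · have hg0' : constantCoeff (R := K) g = 0 := by simpa using hg0
      interval_cases m <;> simp [hh, hg0', hg1]
    · have hm1 : m ≠ 1 := by omega
      simp [hh, PowerSeries.coeff_X, hm1, hgn m hm2 (by omega)]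
  have hgdef : g = h + X := by ring
  have key : PowerSeries.coeff (R := K) n (g ^ k)
      = ∑ j ∈ range (k + 1),
          PowerSeries.coeff (R := K) n (h ^ j * X ^ (k - j)) * (k.choose j : K) := by
    rw [hgdef, add_pow, map_sum]
    refine Finset.sum_congr rfl fun j _ => ?_
    rw [show ((k.choose j : ℕ) : PowerSeries K) = C (R := K) ((k.choose j : ℕ) : K) by
        simp, coeff_mul_C]
  rw [key]
  have hsub : ({0, 1} : Finset ℕ) ⊆ range (k + 1) := by
    intro x hx; simp at hx; rcases hx with rfl | rfl <;> simp [Nat.lt_succ_iff] <;> omega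
  rw [← Finset.sum_subset hsub ?_]
  · rw [Finset.sum_pair (by norm_num : (0:ℕ) ≠ 1)]
    have hF0 : PowerSeries.coeff (R := K) n (h ^ 0 * X ^ (k - 0)) * (k.choose 0 : K)
        = (if n = k then 1 else 0) := by
      rw [pow_zero, one_mul, Nat.sub_zero, Nat.choose_zero_right, Nat.cast_one, mul_one,
        PowerSeries.coeff_X_pow]
    have hF1 : PowerSeries.coeff (R := K) n (h ^ 1 * X ^ (k - 1)) * (k.choose 1 : K)
        = (if ℓ + k ≤ n then (k : K) * PowerSeries.coeff (R := K) (n + 1 - k) g else 0) := by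
      rw [pow_one, coeff_mul_X_pow', if_pos (by omega), Nat.choose_one_right]
      have hm : n - (k - 1) = n + 1 - k := by omega
      rw [hm]
      by_cases hc : ℓ + k ≤ n
      · have h2 : 2 ≤ n + 1 - k := by omega
        have h1 : n + 1 - k ≠ 1 := by omega
        rw [if_pos hc]
        simp [hh, PowerSeries.coeff_X, h1]
        ring
      · rw [if_neg hc, hhc (n + 1 - k) (by omega)]
        ring
    rw [hF0, hF1]
  · intro j hj hj2
    simp only [Finset.mem_range, Finset.mem_insert, Finset.mem_singleton] at hj hj2
    push_neg at hj2
    have hj2' : 2 ≤ j := by omega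
    rw [coeff_mul_X_pow', if_pos (by omega)]
    have hmul : 2 * (ℓ + 1) ≤ j * (ℓ + 1) := Nat.mul_le_mul_right _ hj2'
    rw [ord_pow h (ℓ + 1) hhc j _ (by omega)]
    ring

lemma coeff_comp (ℓ : ℕ) (hℓ : 1 ≤ ℓ) (f g : PowerSeries K)
    (hf : IsTangentToId ℓ f) (hg : IsTangentToId ℓ g) (n : ℕ) (hn : n ≤ 2 * ℓ + 1) :
    PowerSeries.coeff (R := K) n (psComp f g)
      = PowerSeries.coeff (R := K) n f
        + (if ℓ + 1 ≤ n then PowerSeries.coeff (R := K) n g else 0)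
        + (if n = 2 * ℓ + 1 then
            (ℓ + 1 : K) * PowerSeries.coeff (R := K) (ℓ + 1) f * PowerSeries.coeff (R := K) (ℓ + 1) g
          else 0) := by
  have hcomp : PowerSeries.coeff (R := K) n (psComp f g)
      = ∑ k ∈ range (n + 1),
          PowerSeries.coeff (R := K) k f * PowerSeries.coeff (R := K) n (g ^ k) := by
    simp [psComp]
  rw [hcomp]
  have hterm : ∀ k ∈ range (n + 1),
      PowerSeries.coeff (R := K) k f * PowerSeries.coeff (R := K) n (g ^ k)
        = (if k = n then PowerSeries.coeff (R := K) n f else 0)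
          + (if k = 1 then (if ℓ + 1 ≤ n then PowerSeries.coeff (R := K) n g else 0) else 0)
          + (if k = ℓ + 1 then (if n = 2 * ℓ + 1 then
              (ℓ + 1 : K) * PowerSeries.coeff (R := K) (ℓ + 1) f * PowerSeries.coeff (R := K) (ℓ + 1) g
            else 0) else 0) := by
    intro k hk
    rw [Finset.mem_range, Nat.lt_succ_iff] at hk
    rcases Nat.eq_zero_or_pos k with rfl | hk1
    · rcases Nat.eq_zero_or_pos n with rfl | hn1
      · simp [hf.1]
      · have : (0:ℕ) ≠ n := by omega
        simp [hf.1, this, (by omega : ¬ ((0:ℕ) = ℓ + 1))]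
    · rw [coeff_gpow ℓ hℓ g hg k n hk1 hk hn, mul_add]
      conv_rhs => rw [add_assoc]
      congr 1
      · split_ifs with h1 h2 h2
        · subst h1; ring
        · omega
        · omega
        · ring
      · rcases eq_or_ne k 1 with rfl | hk1'
        · rw [if_pos rfl, if_neg (show ¬(1:ℕ) = ℓ + 1 by omega), add_zero, hf.2.1, one_mul]
          simp
        · rw [if_neg hk1']
          rcases Nat.lt_or_ge k (ℓ + 1) with hkl | hkl
          · rw [hf.2.2 k (by omega) (by omega), zero_mul,
              if_neg (show ¬k = ℓ + 1 by omega)]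
            ring
          · rcases eq_or_ne k (ℓ + 1) with rfl | hkl'
            · by_cases hc : ℓ + (ℓ + 1) ≤ n
              · have hn' : n = 2 * ℓ + 1 := by omega
                rw [if_pos hc, if_pos rfl, if_pos hn', hn']
                have he : 2 * ℓ + 1 + 1 - (ℓ + 1) = ℓ + 1 := by omega
                rw [he]
                push_cast
                ring
              · rw [if_neg hc, mul_zero, if_pos rfl,
                  if_neg (show ¬n = 2 * ℓ + 1 by omega)]
                ring
            · rw [if_neg hkl', if_neg (show ¬ℓ + k ≤ n by omega), mul_zero]
              ring
  rw [Finset.sum_congr rfl hterm]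
  rw [Finset.sum_add_distrib, Finset.sum_add_distrib,
    Finset.sum_ite_eq' (range (n + 1)) n, Finset.sum_ite_eq' (range (n + 1)) 1,
    Finset.sum_ite_eq' (range (n + 1)) (ℓ + 1)]
  congr 1
  · congr 1
    · simp
    · simp only [Finset.mem_range]
      split_ifs with h1 h2 h2 <;> first | rfl | omega
  · simp only [Finset.mem_range]
    split_ifs with h1 h2 h2 <;> first | rfl | omega

end Aux

theorem stmt_0 {K : Type*} [CommRing K] (ℓ : ℕ) (hℓ : 1 ≤ ℓ)
    (f g : PowerSeries K) (hf : IsTangentToId ℓ f) (hg : IsTangentToId ℓ g) :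
    IsTangentToId ℓ (psComp f g) ∧
    (∀ n, ℓ + 1 ≤ n → n ≤ 2 * ℓ →
      PowerSeries.coeff (R := K) n (psComp f g)
        = PowerSeries.coeff (R := K) n f + PowerSeries.coeff (R := K) n g) ∧
    PowerSeries.coeff (R := K) (2 * ℓ + 1) (psComp f g)
      = PowerSeries.coeff (R := K) (2 * ℓ + 1) f + PowerSeries.coeff (R := K) (2 * ℓ + 1) g
        + (ℓ + 1 : K) * PowerSeries.coeff (R := K) (ℓ + 1) f * PowerSeries.coeff (R := K) (ℓ + 1) g := by
  have master := coeff_comp ℓ hℓ f g hf hg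
  refine ⟨⟨?_, ?_, ?_⟩, ?_, ?_⟩
  · rw [master 0 (by omega), hf.1, if_neg (by omega), if_neg (by omega)]
    ring
  · rw [master 1 (by omega), hf.2.1, if_neg (by omega), if_neg (by omega)]
    ring
  · intro n h2 hnl
    rw [master n (by omega), hf.2.2 n h2 hnl, if_neg (by omega), if_neg (by omega)]
    ring
  · intro n h1 h2
    rw [master n (by omega), if_pos h1, if_neg (by omega)]
    ring
  · rw [master (2 * ℓ + 1) le_rfl, if_pos (by omega), if_pos rfl]
end

section
/- Let K be an algebraically closed field of characteristic zero and let ℓ ≥ 1. Let f ∈ K[[X]] be a formal power series that is ℓ-tangent to the identity and exactly ℓ-tangent, i.e., its coefficient a_{ℓ+1} of X^{ℓ+1} is nonzero. Then there exist μ ∈ K and a formal power series h ∈ K[[X]] with constant coefficient 0 and nonzero linear coefficient such that h∘f = N∘h, where N := X + X^{ℓ+1} + μ·X^{2ℓ+1}. (In other words, f is formally conjugate to the normal form X + X^{ℓ+1} + μX^{2ℓ+1}.) -/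
open PowerSeries Finset

section Aux

variable {K : Type*} [CommRing K]

lemma coeff_pow_eq_zero {g : PowerSeries K} (hg : constantCoeff (R := K) g = 0)
    {q k : ℕ} (h : q < k) : PowerSeries.coeff (R := K) q (g ^ k) = 0 :=
  (PowerSeries.X_pow_dvd_iff.mp (pow_dvd_pow_of_dvd (PowerSeries.X_dvd_iff.mpr hg) k)) q h

/-- Leading coefficient of a power. -/
lemma coeff_pow_self {g : PowerSeries K} (hg : constantCoeff (R := K) g = 0) :
    ∀ k, PowerSeries.coeff (R := K) k (g ^ k) = (PowerSeries.coeff (R := K) 1 g) ^ k := by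
  intro k
  induction k with
  | zero => simp
  | succ k ih =>
    rw [pow_succ', coeff_mul]
    rw [Finset.sum_eq_single (1, k)]
    · rw [ih, pow_succ']
    · rintro ⟨p, q⟩ hmem hne
      rw [Finset.HasAntidiagonal.mem_antidiagonal] at hmem
      simp only at hmem
      rcases Nat.lt_trichotomy q k with hq | hq | hq
      · rw [coeff_pow_eq_zero hg hq, mul_zero]
      · exfalso; apply hne; subst hq
        have : p = 1 := by omega
        subst this; rfl
      · have hp : p = 0 := by omega
        subst hp
        simp only [coeff_zero_eq_constantCoeff, hg, zero_mul]
    · intro h; exfalso; apply h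
      rw [Finset.HasAntidiagonal.mem_antidiagonal]
      show 1 + k = k + 1
      omega

/-- Coefficients of powers depend only on low coefficients. -/
lemma coeff_pow_congr {g g' : PowerSeries K} (hg : constantCoeff (R := K) g = 0)
    (hg' : constantCoeff (R := K) g' = 0) {j : ℕ}
    (hagree : ∀ i ≤ j, PowerSeries.coeff (R := K) i g = PowerSeries.coeff (R := K) i g') :
    ∀ k n, n < j + k → PowerSeries.coeff (R := K) n (g ^ k) = PowerSeries.coeff (R := K) n (g' ^ k) := by
  intro k
  induction k with
  | zero => intro n _; rfl
  | succ k ih =>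
    intro n hn
    rw [pow_succ', pow_succ', coeff_mul, coeff_mul]
    apply Finset.sum_congr rfl
    rintro ⟨p, q⟩ hmem
    rw [Finset.HasAntidiagonal.mem_antidiagonal] at hmem
    simp only at hmem ⊢
    rcases Nat.eq_zero_or_pos p with hp | hp
    · subst hp
      simp only [coeff_zero_eq_constantCoeff, hg, hg', zero_mul]
    rcases Nat.lt_or_ge q k with hq | hq
    · rw [coeff_pow_eq_zero hg hq, coeff_pow_eq_zero hg' hq, mul_zero, mul_zero]
    · have hple : p ≤ j := by omega
      rw [hagree p hple, ih q (by omega)]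

/-- First-order variation of the top new coefficient of a power. -/
lemma coeff_pow_top {g g' : PowerSeries K} (hg : constantCoeff (R := K) g = 0)
    (hg' : constantCoeff (R := K) g' = 0) {j : ℕ} (hj : 1 ≤ j)
    (hagree : ∀ i ≤ j, PowerSeries.coeff (R := K) i g = PowerSeries.coeff (R := K) i g') :
    ∀ k, PowerSeries.coeff (R := K) (j + k + 1) (g ^ (k + 1))
        = PowerSeries.coeff (R := K) (j + k + 1) (g' ^ (k + 1))
      + ((k : K) + 1) * (PowerSeries.coeff (R := K) 1 g) ^ k
          * (PowerSeries.coeff (R := K) (j+1) g - PowerSeries.coeff (R := K) (j+1) g') := by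
  intro k
  induction k with
  | zero => simp
  | succ k ih =>
    set c1 := PowerSeries.coeff (R := K) 1 g with hc1
    set Δ := PowerSeries.coeff (R := K) (j+1) g - PowerSeries.coeff (R := K) (j+1) g' with hΔ
    have key : ∀ x ∈ antidiagonal (j + (k+1) + 1),
        PowerSeries.coeff (R := K) x.1 g * PowerSeries.coeff (R := K) x.2 (g ^ (k+1))
          - PowerSeries.coeff (R := K) x.1 g' * PowerSeries.coeff (R := K) x.2 (g' ^ (k+1))
        = (if x = (1, j + k + 1) then c1 * (((k : K) + 1) * c1 ^ k * Δ) else 0)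
          + (if x = (j + 1, k + 1) then c1 ^ (k+1) * Δ else 0) := by
      rintro ⟨p, q⟩ hmem
      rw [Finset.HasAntidiagonal.mem_antidiagonal] at hmem
      simp only at hmem ⊢
      by_cases h1 : (p, q) = (1, j + k + 1)
      · obtain ⟨hp, hq⟩ := Prod.mk.injEq .. ▸ h1
        rw [if_pos h1, if_neg (by rw [h1]; intro hc; injection hc with a b; omega)]
        subst hp; subst hq
        rw [ih, ← hagree 1 hj]
        ring
      by_cases h2 : (p, q) = (j + 1, k + 1)
      · rw [if_pos h2, if_neg h1]
        obtain ⟨hp, hq⟩ := Prod.mk.injEq .. ▸ h2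
        subst hp; subst hq
        rw [coeff_pow_self hg, coeff_pow_self hg', ← hagree 1 hj]
        ring
      rw [if_neg h1, if_neg h2, add_zero]
      rcases Nat.eq_zero_or_pos p with hp | hp
      · subst hp
        simp only [coeff_zero_eq_constantCoeff, hg, hg', zero_mul, sub_zero]
      rcases Nat.lt_or_ge q (k+1) with hq | hq
      · rw [coeff_pow_eq_zero hg hq, coeff_pow_eq_zero hg' hq, mul_zero, mul_zero, sub_zero]
      · have hqlt : q < j + (k + 1) := by
          rcases Nat.lt_or_ge q (j + k + 1) with h | h
          · omega
          · exfalso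
            have : q = j + k + 1 := by omega
            apply h1; subst this
            have : p = 1 := by omega
            subst this; rfl
        have hple : p ≤ j := by
          have : p ≠ j + 1 := by
            intro hc; apply h2; subst hc
            have : q = k+1 := by omega
            subst this; rfl
          omega
        rw [hagree p hple, coeff_pow_congr hg hg' hagree (k+1) q hqlt, sub_self]
    have hsum : ∑ x ∈ antidiagonal (j + (k+1) + 1),
          (PowerSeries.coeff (R := K) x.1 g * PowerSeries.coeff (R := K) x.2 (g ^ (k+1))
            - PowerSeries.coeff (R := K) x.1 g' * PowerSeries.coeff (R := K) x.2 (g' ^ (k+1)))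
        = c1 * (((k : K) + 1) * c1 ^ k * Δ) + c1 ^ (k+1) * Δ := by
      rw [Finset.sum_congr rfl key, Finset.sum_add_distrib,
        Finset.sum_ite_eq' (antidiagonal (j + (k+1) + 1)) ((1 : ℕ), j + k + 1),
        Finset.sum_ite_eq' (antidiagonal (j + (k+1) + 1)) ((j + 1 : ℕ), k + 1)]
      rw [if_pos (by rw [Finset.HasAntidiagonal.mem_antidiagonal]; omega),
        if_pos (by rw [Finset.HasAntidiagonal.mem_antidiagonal]; omega)]
    rw [Finset.sum_sub_distrib] at hsum
    rw [show k + 1 + 1 = (k+1) + 1 from rfl, pow_succ' g, pow_succ' g', coeff_mul, coeff_mul]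
    have heq : (((k : K) + 1) + 1) * c1 ^ (k+1) * Δ
        = c1 * (((k : K) + 1) * c1 ^ k * Δ) + c1 ^ (k+1) * Δ := by ring
    push_cast
    rw [heq, ← hsum]
    ring

lemma sum_coeff_X_pow_mul (g : PowerSeries K) (hg : constantCoeff (R := K) g = 0) (n j : ℕ) :
    ∑ k ∈ Finset.range (n+1),
        PowerSeries.coeff (R := K) k (PowerSeries.X ^ j : PowerSeries K) * PowerSeries.coeff (R := K) n (g^k)
      = PowerSeries.coeff (R := K) n (g^j) := by
  have hpt : ∀ k ∈ Finset.range (n+1),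
      PowerSeries.coeff (R := K) k (PowerSeries.X ^ j : PowerSeries K) * PowerSeries.coeff (R := K) n (g^k)
      = if k = j then PowerSeries.coeff (R := K) n (g^j) else 0 := by
    intro k _
    rw [PowerSeries.coeff_X_pow]
    by_cases hkj : k = j
    · subst hkj; rw [if_pos rfl, if_pos rfl, one_mul]
    · rw [if_neg hkj, if_neg hkj, zero_mul]
  rw [Finset.sum_congr rfl hpt, Finset.sum_ite_eq' (Finset.range (n+1)) j]
  by_cases hj : j ∈ Finset.range (n+1)
  · rw [if_pos hj]
  · rw [if_neg hj]
    rw [Finset.mem_range] at hj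
    rw [coeff_pow_eq_zero hg (by omega)]

end Aux

section Def

variable {K : Type*} [Field K]

noncomputable def cf (ℓ : ℕ) (f : PowerSeries K) (c1 : K) (m : ℕ) : K :=
  if m = 0 then 0
  else if m = 1 then c1
  else if m = ℓ + 1 then 0
  else
    let T : PowerSeries K := PowerSeries.mk (fun i => if h : i < m then cf ℓ f c1 i else 0)
    let T1 : PowerSeries K := PowerSeries.mk
      (fun i => if h : i < m then (if i < ℓ + 1 then cf ℓ f c1 i else 0) else 0)
    let μ' : K := if m ≤ ℓ + 1 then 0 else
      ((∑ k ∈ Finset.range (ℓ + 1),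
          PowerSeries.coeff (R := K) k T1 * PowerSeries.coeff (R := K) (2*ℓ+1) (f^k))
         - PowerSeries.coeff (R := K) (2*ℓ+1) (T1^(ℓ+1))) / c1^(2*ℓ+1)
    (-((∑ k ∈ Finset.range m, PowerSeries.coeff (R := K) k T * PowerSeries.coeff (R := K) (m+ℓ) (f^k))
        - (PowerSeries.coeff (R := K) (m+ℓ) (T^(ℓ+1))
            + μ' * PowerSeries.coeff (R := K) (m+ℓ) (T^(2*ℓ+1)))))
      / (PowerSeries.coeff (R := K) (ℓ+1) f * ((m : K) - ℓ - 1))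
  termination_by m
  decreasing_by all_goals exact h

noncomputable def Tser (ℓ : ℕ) (f : PowerSeries K) (c1 : K) (m : ℕ) : PowerSeries K :=
  PowerSeries.mk (fun i => if h : i < m then cf ℓ f c1 i else 0)

noncomputable def muv (ℓ : ℕ) (f : PowerSeries K) (c1 : K) : K :=
  ((∑ k ∈ Finset.range (ℓ + 1),
      PowerSeries.coeff (R := K) k (Tser ℓ f c1 (ℓ+1)) * PowerSeries.coeff (R := K) (2*ℓ+1) (f^k))
     - PowerSeries.coeff (R := K) (2*ℓ+1) ((Tser ℓ f c1 (ℓ+1))^(ℓ+1))) / c1^(2*ℓ+1)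

lemma cf_zero (ℓ : ℕ) (f : PowerSeries K) (c1 : K) : cf ℓ f c1 0 = 0 := by rw [cf]; simp

lemma cf_one (ℓ : ℕ) (f : PowerSeries K) (c1 : K) : cf ℓ f c1 1 = c1 := by
  rw [cf]; simp

lemma cf_top (ℓ : ℕ) (f : PowerSeries K) (c1 : K) (hℓ : 1 ≤ ℓ) : cf ℓ f c1 (ℓ+1) = 0 := by
  rw [cf]
  rw [if_neg (by omega), if_neg (by omega), if_pos rfl]

lemma cf_eq (ℓ : ℕ) (f : PowerSeries K) (c1 : K) (m : ℕ) (h2 : 2 ≤ m) (hne : m ≠ ℓ + 1) :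
    cf ℓ f c1 m =
      (-((∑ k ∈ Finset.range m,
            PowerSeries.coeff (R := K) k (Tser ℓ f c1 m) * PowerSeries.coeff (R := K) (m+ℓ) (f^k))
        - (PowerSeries.coeff (R := K) (m+ℓ) ((Tser ℓ f c1 m)^(ℓ+1))
           + (if m ≤ ℓ + 1 then 0 else muv ℓ f c1)
              * PowerSeries.coeff (R := K) (m+ℓ) ((Tser ℓ f c1 m)^(2*ℓ+1)))))
      / (PowerSeries.coeff (R := K) (ℓ+1) f * ((m : K) - ℓ - 1)) := by
  conv_lhs => rw [cf]
  rw [if_neg (by omega), if_neg (by omega), if_neg hne]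
  have hT1 : PowerSeries.mk
      (fun i => if h : i < m then (if i < ℓ + 1 then cf ℓ f c1 i else 0) else 0)
      = Tser ℓ f c1 (ℓ+1) ∨ m ≤ ℓ + 1 := by
    by_cases hm : m ≤ ℓ + 1
    · exact Or.inr hm
    · left
      ext n
      rw [Tser]
      simp only [coeff_mk]
      split_ifs <;> first | rfl | omega
  rcases hT1 with hT1 | hm
  · rw [hT1]
    rfl
  · rw [if_pos hm]
    simp only [if_pos hm]
    rfl

end Def



theorem stmt_2 {K : Type*} [Field K] [IsAlgClosed K] [CharZero K] (ℓ : ℕ) (hℓ : 1 ≤ ℓ)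
    (f : PowerSeries K) (hf : IsTangentToId ℓ f)
    (hexact : PowerSeries.coeff (R := K) (ℓ + 1) f ≠ 0) :
    ∃ (μ : K) (h : PowerSeries K),
      PowerSeries.coeff (R := K) 0 h = 0 ∧ PowerSeries.coeff (R := K) 1 h ≠ 0 ∧
      psComp h f = psComp
        (PowerSeries.X + PowerSeries.X ^ (ℓ + 1)
          + PowerSeries.C (R := K) μ * PowerSeries.X ^ (2 * ℓ + 1)) h := by
  obtain ⟨hf0, hf1, hfmid⟩ := hf
  obtain ⟨c1, hc1⟩ := IsAlgClosed.exists_pow_nat_eq (PowerSeries.coeff (R := K) (ℓ+1) f)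
    (show 0 < ℓ by omega)
  have hc1ne : c1 ≠ 0 := by
    intro hc; apply hexact; rw [← hc1, hc, zero_pow (show ℓ ≠ 0 by omega)]
  set H : PowerSeries K := PowerSeries.mk (cf ℓ f c1) with hH
  set μ := muv ℓ f c1 with hμ
  have hHcoeff : ∀ i, PowerSeries.coeff (R := K) i H = cf ℓ f c1 i := fun i => coeff_mk i _
  refine ⟨μ, H, ?_, ?_, ?_⟩
  · rw [hHcoeff, cf_zero]
  · rw [hHcoeff, cf_one]; exact hc1ne
  have hH0 : constantCoeff (R := K) H = 0 := by
    rw [← coeff_zero_eq_constantCoeff, hHcoeff, cf_zero]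
  have hf0' : constantCoeff (R := K) f = 0 := by
    rw [← coeff_zero_eq_constantCoeff]; exact hf0
  have hX0 : constantCoeff (R := K) (PowerSeries.X : PowerSeries K) = 0 := constantCoeff_X
  have hfX : ∀ i ≤ ℓ, PowerSeries.coeff (R := K) i f = PowerSeries.coeff (R := K) i (PowerSeries.X) := by
    intro i hi
    rw [PowerSeries.coeff_X]
    match i with
    | 0 => rw [if_neg (by omega)]; exact hf0
    | 1 => rw [if_pos rfl]; exact hf1
    | (i+2) => rw [if_neg (by omega)]; exact hfmid (i+2) (by omega) hi
  have hflow : ∀ k n, n < ℓ + k →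
      PowerSeries.coeff (R := K) n (f^k) = if n = k then 1 else 0 := by
    intro k n hn
    rw [coeff_pow_congr hf0' hX0 hfX k n hn, PowerSeries.coeff_X_pow]
  have hftop : ∀ m, 1 ≤ m →
      PowerSeries.coeff (R := K) (m+ℓ) (f^m) = (m : K) * PowerSeries.coeff (R := K) (ℓ+1) f := by
    intro m hm
    obtain ⟨k, rfl⟩ : ∃ k, m = k + 1 := ⟨m - 1, by omega⟩
    have htop := coeff_pow_top hf0' hX0 hℓ hfX k
    rw [show k+1+ℓ = ℓ+k+1 by omega, htop, PowerSeries.coeff_X_pow, if_neg (by omega),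
      hf1, one_pow, PowerSeries.coeff_X, if_neg (by omega)]
    push_cast; ring
  have hT0 : ∀ m, constantCoeff (R := K) (Tser ℓ f c1 m) = 0 := by
    intro m
    rw [← coeff_zero_eq_constantCoeff, Tser, coeff_mk]
    split_ifs
    · exact cf_zero ℓ f c1
    · rfl
  have hTco : ∀ m i, PowerSeries.coeff (R := K) i (Tser ℓ f c1 m)
      = if i < m then cf ℓ f c1 i else 0 := by
    intro m i
    rw [Tser, coeff_mk]
    split_ifs <;> rfl
  have hagr : ∀ j, ∀ i ≤ j,
      PowerSeries.coeff (R := K) i H = PowerSeries.coeff (R := K) i (Tser ℓ f c1 (j+1)) := by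
    intro j i hi
    rw [hHcoeff, hTco, if_pos (by omega)]
  have hNred : ∀ n, PowerSeries.coeff (R := K) n (psComp
      (PowerSeries.X + PowerSeries.X^(ℓ+1) + PowerSeries.C (R := K) μ * PowerSeries.X^(2*ℓ+1)) H)
      = cf ℓ f c1 n + PowerSeries.coeff (R := K) n (H^(ℓ+1))
        + μ * PowerSeries.coeff (R := K) n (H^(2*ℓ+1)) := by
    intro n
    rw [psComp, coeff_mk]
    have hsplit : ∀ k ∈ Finset.range (n+1),
        PowerSeries.coeff (R := K) k (PowerSeries.X + PowerSeries.X^(ℓ+1)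
          + PowerSeries.C (R := K) μ * PowerSeries.X^(2*ℓ+1)) * PowerSeries.coeff (R := K) n (H^k)
        = PowerSeries.coeff (R := K) k ((PowerSeries.X : PowerSeries K)^1)
              * PowerSeries.coeff (R := K) n (H^k)
          + PowerSeries.coeff (R := K) k ((PowerSeries.X : PowerSeries K)^(ℓ+1))
              * PowerSeries.coeff (R := K) n (H^k)
          + μ * (PowerSeries.coeff (R := K) k ((PowerSeries.X : PowerSeries K)^(2*ℓ+1))
              * PowerSeries.coeff (R := K) n (H^k)) := by
      intro k _
      rw [map_add, map_add, PowerSeries.coeff_C_mul, pow_one]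
      ring
    rw [Finset.sum_congr rfl hsplit, Finset.sum_add_distrib, Finset.sum_add_distrib,
      ← Finset.mul_sum, sum_coeff_X_pow_mul H hH0 n 1, sum_coeff_X_pow_mul H hH0 n (ℓ+1),
      sum_coeff_X_pow_mul H hH0 n (2*ℓ+1), pow_one, hHcoeff]
  ext n
  rw [hNred n, psComp, coeff_mk,
    Finset.sum_congr rfl (fun k (_ : k ∈ Finset.range (n+1)) => by rw [hHcoeff k])]
  rcases lt_trichotomy n (ℓ+1) with hn | hn | hn
  · -- n ≤ ℓ
    rcases Nat.eq_zero_or_pos n with rfl | h0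
    · rw [Finset.sum_range_one, pow_zero, PowerSeries.coeff_one, if_pos rfl, cf_zero,
        coeff_zero_eq_constantCoeff]
      rw [show constantCoeff (R := K) (H^(ℓ+1)) = 0 from by
          rw [← coeff_zero_eq_constantCoeff]; exact coeff_pow_eq_zero hH0 (by omega),
        show constantCoeff (R := K) (H^(2*ℓ+1)) = 0 from by
          rw [← coeff_zero_eq_constantCoeff]; exact coeff_pow_eq_zero hH0 (by omega)]
      ring
    · rw [coeff_pow_eq_zero hH0 (show n < ℓ+1 from hn),
        coeff_pow_eq_zero hH0 (show n < 2*ℓ+1 by omega),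
        Finset.sum_eq_single_of_mem n (Finset.self_mem_range_succ n) (fun k hk hkne => by
          match k with
          | 0 => rw [pow_zero, PowerSeries.coeff_one, if_neg (by omega), mul_zero]
          | (k+1) =>
            rw [hflow (k+1) n (by omega), if_neg (fun hh => hkne hh.symm), mul_zero]),
        coeff_pow_self hf0', hf1, one_pow, mul_one]
      ring
  · -- n = ℓ + 1
    subst hn
    have hpt : ∀ k ∈ Finset.range (ℓ+1+1), cf ℓ f c1 k * PowerSeries.coeff (R := K) (ℓ+1) (f^k)
        = (if k = 1 then c1 * PowerSeries.coeff (R := K) (ℓ+1) f else 0)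
          + (if k = ℓ+1 then cf ℓ f c1 (ℓ+1) else 0) := by
      intro k hk
      rw [Finset.mem_range] at hk
      match k with
      | 0 => rw [pow_zero, PowerSeries.coeff_one, if_neg (by omega), mul_zero,
          if_neg (by omega), if_neg (by omega), add_zero]
      | 1 => rw [if_pos rfl, if_neg (by omega), add_zero, pow_one, cf_one]
      | (k+2) =>
        by_cases hke : k + 2 = ℓ+1
        · rw [if_neg (by omega), if_pos hke, zero_add, hke, coeff_pow_self hf0', hf1,
            one_pow, mul_one]
        · rw [if_neg (by omega), if_neg hke, hflow (k+2) (ℓ+1) (by omega),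
            if_neg (fun hh => hke hh.symm), mul_zero, add_zero]
    rw [Finset.sum_congr rfl hpt, Finset.sum_add_distrib,
      Finset.sum_ite_eq' (Finset.range (ℓ+1+1)) 1, Finset.sum_ite_eq' (Finset.range (ℓ+1+1)) (ℓ+1),
      if_pos (Finset.mem_range.mpr (by omega)), if_pos (Finset.mem_range.mpr (by omega)),
      coeff_pow_self hH0, hHcoeff, cf_one,
      coeff_pow_eq_zero hH0 (show ℓ+1 < 2*ℓ+1 by omega), ← hc1]
    ring
  · -- n ≥ ℓ + 2
    obtain ⟨m, rfl⟩ : ∃ m, n = m + ℓ := ⟨n - ℓ, by omega⟩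
    obtain ⟨j, rfl⟩ : ∃ j, m = j + 1 := ⟨m - 1, by omega⟩
    have hj1 : 1 ≤ j := by omega
    have hag := hagr j
    have hA1 : PowerSeries.coeff (R := K) (j+1+ℓ) (H^(ℓ+1))
        = PowerSeries.coeff (R := K) (j+1+ℓ) ((Tser ℓ f c1 (j+1))^(ℓ+1))
          + ((ℓ:K)+1) * c1^ℓ * cf ℓ f c1 (j+1) := by
      have htop := coeff_pow_top hH0 (hT0 (j+1)) hj1 hag ℓ
      rw [show j+1+ℓ = j+ℓ+1 by omega, htop, hHcoeff, cf_one, hHcoeff, hTco,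
        if_neg (by omega), sub_zero]
    have hA2 : PowerSeries.coeff (R := K) (j+1+ℓ) (H^(2*ℓ+1))
        = PowerSeries.coeff (R := K) (j+1+ℓ) ((Tser ℓ f c1 (j+1))^(2*ℓ+1)) :=
      coeff_pow_congr hH0 (hT0 (j+1)) hag (2*ℓ+1) (j+1+ℓ) (by omega)
    have hpt : ∀ k ∈ Finset.range (j+1+ℓ+1), cf ℓ f c1 k * PowerSeries.coeff (R := K) (j+1+ℓ) (f^k)
        = (if k < j+1 then cf ℓ f c1 k * PowerSeries.coeff (R := K) (j+1+ℓ) (f^k) else 0)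
          + ((if k = j+1 then cf ℓ f c1 (j+1) * (((j:K)+1) * PowerSeries.coeff (R := K) (ℓ+1) f) else 0)
            + (if k = j+1+ℓ then cf ℓ f c1 (j+1+ℓ) else 0)) := by
      intro k hk
      rw [Finset.mem_range] at hk
      by_cases hk1 : k < j+1
      · rw [if_pos hk1, if_neg (by omega), if_neg (by omega), add_zero, add_zero]
      by_cases hk2 : k = j+1
      · subst hk2
        rw [if_neg (by omega), if_pos rfl, if_neg (by omega), hftop (j+1) (by omega)]
        push_cast; ring
      by_cases hk3 : k = j+1+ℓ
      · subst hk3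
        rw [if_neg (by omega), if_neg hk2, if_pos rfl, coeff_pow_self hf0', hf1,
          one_pow, mul_one]
        ring
      · rw [if_neg (by omega), if_neg hk2, if_neg hk3,
          hflow k (j+1+ℓ) (by omega), if_neg (by omega), mul_zero]
        ring
    have hsub : ∑ k ∈ Finset.range (j+1+ℓ+1),
          (if k < j+1 then cf ℓ f c1 k * PowerSeries.coeff (R := K) (j+1+ℓ) (f^k) else 0)
        = ∑ k ∈ Finset.range (j+1), cf ℓ f c1 k * PowerSeries.coeff (R := K) (j+1+ℓ) (f^k) := by
      rw [← Finset.sum_subset (Finset.range_subset_range.mpr (show j+1 ≤ j+1+ℓ+1 by omega))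
        (fun x _ hnx => if_neg (fun hlt => hnx (Finset.mem_range.mpr hlt)))]
      exact Finset.sum_congr rfl fun k hk => if_pos (Finset.mem_range.mp hk)
    have hST : ∑ k ∈ Finset.range (j+1),
          PowerSeries.coeff (R := K) k (Tser ℓ f c1 (j+1)) * PowerSeries.coeff (R := K) (j+1+ℓ) (f^k)
        = ∑ k ∈ Finset.range (j+1), cf ℓ f c1 k * PowerSeries.coeff (R := K) (j+1+ℓ) (f^k) :=
      Finset.sum_congr rfl fun k hk => by rw [hTco, if_pos (Finset.mem_range.mp hk)]
    rw [Finset.sum_congr rfl hpt, Finset.sum_add_distrib, Finset.sum_add_distrib, hsub,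
      Finset.sum_ite_eq' (Finset.range (j+1+ℓ+1)) (j+1),
      Finset.sum_ite_eq' (Finset.range (j+1+ℓ+1)) (j+1+ℓ),
      if_pos (Finset.mem_range.mpr (by omega)), if_pos (Finset.mem_range.mpr (by omega)),
      hA1, hA2]
    by_cases hcase : j + 1 = ℓ + 1
    · -- resonant order: this is where μ is chosen
      have hj' : j = ℓ := by omega
      rw [hj'] at hST ⊢
      rw [cf_top ℓ f c1 hℓ]
      have h2l : ℓ+1+ℓ = 2*ℓ+1 := by omega
      have hTpow : PowerSeries.coeff (R := K) (ℓ+1+ℓ) ((Tser ℓ f c1 (ℓ+1))^(2*ℓ+1)) = c1^(2*ℓ+1) := by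
        rw [h2l, coeff_pow_self (hT0 (ℓ+1)), hTco, if_pos (by omega), cf_one]
      have hμc : μ * c1^(2*ℓ+1)
          = (∑ k ∈ Finset.range (ℓ+1),
              PowerSeries.coeff (R := K) k (Tser ℓ f c1 (ℓ+1)) * PowerSeries.coeff (R := K) (2*ℓ+1) (f^k))
            - PowerSeries.coeff (R := K) (2*ℓ+1) ((Tser ℓ f c1 (ℓ+1))^(ℓ+1)) := by
        rw [hμ, muv, div_mul_cancel₀ _ (pow_ne_zero _ hc1ne)]
      rw [hTpow]
      rw [h2l] at hST ⊢
      rw [hST] at hμc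
      linear_combination -hμc
    · have hm2 : 2 ≤ j + 1 := by omega
      have hslope : PowerSeries.coeff (R := K) (ℓ+1) f * (((j:K)+1) - ℓ - 1) ≠ 0 := by
        refine mul_ne_zero hexact (fun hcontra => hcase ?_)
        have hcast : ((j+1 : ℕ) : K) = ((ℓ+1 : ℕ) : K) := by
          push_cast; linear_combination hcontra
        exact_mod_cast hcast
      have hcf := cf_eq ℓ f c1 (j+1) hm2 hcase
      push_cast at hcf
      have hkey : cf ℓ f c1 (j+1) * (PowerSeries.coeff (R := K) (ℓ+1) f * (((j:K)+1) - ℓ - 1))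
          = -((∑ k ∈ Finset.range (j+1), cf ℓ f c1 k * PowerSeries.coeff (R := K) (j+1+ℓ) (f^k))
            - (PowerSeries.coeff (R := K) (j+1+ℓ) ((Tser ℓ f c1 (j+1))^(ℓ+1))
              + (if j ≤ ℓ then 0 else μ)
                  * PowerSeries.coeff (R := K) (j+1+ℓ) ((Tser ℓ f c1 (j+1))^(2*ℓ+1)))) := by
        rw [hcf, ← hST, hμ, div_mul_cancel₀ _ hslope]
      rw [hc1] at hA1 ⊢
      by_cases hlow : j ≤ ℓ
      · have hz : PowerSeries.coeff (R := K) (j+1+ℓ) ((Tser ℓ f c1 (j+1))^(2*ℓ+1)) = 0 :=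
          coeff_pow_eq_zero (hT0 _) (by omega)
        rw [if_pos hlow] at hkey
        rw [hz] at hkey ⊢
        linear_combination hkey
      · rw [if_neg hlow] at hkey
        linear_combination hkey
end

section
/- Let ε > 0 and let f, g : [0,ε) → ℝ be of class C³ with f(0) = g(0) = 0, f'(0) = g'(0) = 1, and f''(0) ≠ 0, g''(0) ≠ 0 (i.e., f and g are parabolic germs exactly 1-tangent to the identity). Suppose there exist δ > 0 and a map h : [0,ε) → ℝ of class C² with h(0) = 0 and h'(0) = 1 (a parabolic conjugacy) such that h(f(x)) = g(h(x)) for all x ∈ [0,δ). Then the Schwarzian derivatives of f and g at the origin coincide: f'''(0) − (3/2)·f''(0)² = g'''(0) − (3/2)·g''(0)². (The value of the Schwarzian derivative at the origin of a germ of C³ parabolic diffeomorphism is invariant under parabolic C² conjugacy.) -/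
set_option maxHeartbeats 1000000

open Set Filter Asymptotics Metric Topology

private lemma peano_rem (ε : ℝ) (hε : 0 < ε) :
    ∀ (n : ℕ) (F : ℝ → ℝ), ContDiffOn ℝ n F (Set.Ico 0 ε) →
      (fun x => F x - ∑ k ∈ Finset.range (n + 1),
          iteratedDerivWithin k F (Set.Ico 0 ε) 0 / (Nat.factorial k) * x ^ k)
        =o[𝓝[Set.Ico 0 ε] 0] (fun x => x ^ n) := by
  have h0 : (0 : ℝ) ∈ Set.Ico 0 ε := ⟨le_refl _, hε⟩
  have hs : UniqueDiffOn ℝ (Set.Ico (0:ℝ) ε) := uniqueDiffOn_Ico 0 ε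
  intro n
  induction n with
  | zero =>
    intro F hF
    have hc : ContinuousWithinAt F (Set.Ico 0 ε) 0 := hF.continuousOn _ h0
    have ht : Filter.Tendsto (fun x => F x - F 0) (𝓝[Set.Ico 0 ε] 0) (𝓝 0) := by
      simpa using (hc.tendsto).sub (tendsto_const_nhds (x := F 0))
    have heq : (fun x : ℝ => F x - ∑ k ∈ Finset.range (0 + 1),
        iteratedDerivWithin k F (Set.Ico 0 ε) 0 / (Nat.factorial k) * x ^ k)
        = fun x => F x - F 0 := by
      funext x
      simp [iteratedDerivWithin_zero]
    rw [heq, show (fun x : ℝ => x ^ 0) = fun _ : ℝ => (1:ℝ) by funext x; simp]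
    exact (Asymptotics.isLittleO_one_iff ℝ).2 ht
  | succ n IH =>
    intro F hF
    set s := Set.Ico (0:ℝ) ε with hsdef
    have hG : ContDiffOn ℝ n (derivWithin F s) s := by
      apply hF.derivWithin hs
      exact_mod_cast le_refl _
    set G := derivWithin F s with hGdef
    have hIH := IH G hG
    set RG := fun x => G x - ∑ k ∈ Finset.range (n + 1),
        iteratedDerivWithin k G s 0 / (Nat.factorial k) * x ^ k with hRGdef
    set RF := fun x => F x - ∑ k ∈ Finset.range (n + 2),
        iteratedDerivWithin k F s 0 / (Nat.factorial k) * x ^ k with hRFdef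
    have hRF0 : RF 0 = 0 := by
      have : ∑ k ∈ Finset.range (n + 2),
          iteratedDerivWithin k F s 0 / (Nat.factorial k) * (0:ℝ) ^ k
          = iteratedDerivWithin 0 F s 0 / (Nat.factorial 0) * (0:ℝ) ^ 0 := by
        apply Finset.sum_eq_single_of_mem
        · simp
        · intro k _ hk
          simp [zero_pow hk]
      simp [hRFdef, this, iteratedDerivWithin_zero]
    have hderiv : ∀ y ∈ s, HasDerivWithinAt RF (RG y) s y := by
      intro y hy
      have hFd : HasDerivWithinAt F (G y) s y := by
        have : DifferentiableWithinAt ℝ F s y := by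
          apply (hF.differentiableOn ?_) y hy
          simp
        exact this.hasDerivWithinAt
      have hp : HasDerivAt (fun x => ∑ k ∈ Finset.range (n + 2),
          iteratedDerivWithin k F s 0 / (Nat.factorial k) * x ^ k)
          (∑ k ∈ Finset.range (n + 2),
            iteratedDerivWithin k F s 0 / (Nat.factorial k) * ((k : ℝ) * y ^ (k - 1))) y := by
        apply HasDerivAt.fun_sum
        intro k _
        exact (hasDerivAt_pow k y).const_mul _
      have hsum : (∑ k ∈ Finset.range (n + 2),
            iteratedDerivWithin k F s 0 / (Nat.factorial k) * ((k : ℝ) * y ^ (k - 1)))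
          = ∑ k ∈ Finset.range (n + 1),
            iteratedDerivWithin k G s 0 / (Nat.factorial k) * y ^ k := by
        rw [Finset.sum_range_succ' _ (n + 1)]
        simp only [Nat.cast_zero, zero_mul, mul_zero, add_zero]
        apply Finset.sum_congr rfl
        intro k _
        have hco : iteratedDerivWithin (k + 1) F s 0 = iteratedDerivWithin k G s 0 :=
          congrFun iteratedDerivWithin_succ' 0
        rw [← hco]
        have hfac : ((k + 1).factorial : ℝ) = (k + 1) * (k.factorial : ℝ) := by
          rw [Nat.factorial_succ]; push_cast; ring
        have hk1 : ((k:ℝ) + 1) ≠ 0 := by positivity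
        have hkf : ((k.factorial : ℝ)) ≠ 0 := by positivity
        rw [hfac, Nat.add_sub_cancel]
        push_cast
        field_simp
      have := (hFd.sub ((hp.hasDerivWithinAt).congr_deriv hsum))
      exact this
    rw [Asymptotics.isLittleO_iff]
    intro c hc
    have hev : ∀ᶠ y in 𝓝[s] 0, ‖RG y‖ ≤ c * ‖y ^ n‖ := hIH.def hc
    rw [eventually_iff, mem_nhdsWithin_iff] at hev ⊢
    obtain ⟨r, hr, hball⟩ := hev
    refine ⟨r, hr, ?_⟩
    intro x hx
    obtain ⟨hxb, hxs⟩ := hx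
    have hx0 : 0 ≤ x := hxs.1
    have hxr : x < r := by
      have := mem_ball_iff_norm.1 hxb
      rwa [sub_zero, Real.norm_eq_abs, abs_of_nonneg hx0] at this
    have hsub : Set.Icc 0 x ⊆ s := fun y hy => ⟨hy.1, lt_of_le_of_lt hy.2 hxs.2⟩
    have hmvt := Convex.norm_image_sub_le_of_norm_hasDerivWithin_le
      (f := RF) (f' := RG) (C := c * x ^ n) (s := Set.Icc 0 x)
      (fun y hy => (hderiv y (hsub hy)).mono hsub)
      (fun y hy => by
        have hy0 : 0 ≤ y := hy.1
        have hyr : y ∈ Metric.ball (0:ℝ) r ∩ s := by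
          constructor
          · rw [mem_ball_iff_norm, sub_zero, Real.norm_eq_abs, abs_of_nonneg hy0]
            exact lt_of_le_of_lt hy.2 hxr
          · exact hsub hy
        have hb := hball hyr
        simp only [Set.mem_setOf_eq] at hb
        calc ‖RG y‖ ≤ c * ‖y ^ n‖ := hb
          _ = c * y ^ n := by rw [Real.norm_eq_abs, abs_of_nonneg (pow_nonneg hy0 n)]
          _ ≤ c * x ^ n := by
              apply mul_le_mul_of_nonneg_left (pow_le_pow_left₀ hy0 hy.2 n) hc.le)
      (convex_Icc 0 x) (Set.left_mem_Icc.2 hx0) (Set.right_mem_Icc.2 hx0)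
    simp only [Set.mem_setOf_eq]
    calc ‖RF x‖ = ‖RF x - RF 0‖ := by rw [hRF0, sub_zero]
      _ ≤ c * x ^ n * ‖x - 0‖ := hmvt
      _ = c * ‖x ^ (n+1)‖ := by
          rw [sub_zero, Real.norm_eq_abs, Real.norm_eq_abs, abs_of_nonneg hx0,
            abs_of_nonneg (pow_nonneg hx0 _), pow_succ]
          ring

private lemma pow_isBigO_pow {ε : ℝ} (hε : 0 < ε) {k m : ℕ} (hkm : k ≤ m) :
    (fun x : ℝ => x ^ m) =O[𝓝[Set.Ico 0 ε] 0] (fun x : ℝ => x ^ k) := by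
  apply Asymptotics.IsBigO.of_bound 1
  have h1 : ∀ᶠ x in 𝓝[Set.Ico 0 ε] (0:ℝ), |x| ≤ 1 := by
    have : Set.Icc (-1:ℝ) 1 ∈ 𝓝 (0:ℝ) := Icc_mem_nhds (by norm_num) (by norm_num)
    filter_upwards [nhdsWithin_le_nhds this] with x hx
    exact abs_le.2 ⟨hx.1, hx.2⟩
  filter_upwards [h1] with x hx
  rw [Real.norm_eq_abs, Real.norm_eq_abs, abs_pow, abs_pow, one_mul]
  exact pow_le_pow_of_le_one (abs_nonneg x) hx hkm

private lemma pow_isLittleO_pow {ε : ℝ} (hε : 0 < ε) {k m : ℕ} (hkm : k < m) :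
    (fun x : ℝ => x ^ m) =o[𝓝[Set.Ico 0 ε] 0] (fun x : ℝ => x ^ k) :=
  (Asymptotics.isLittleO_pow_pow hkm).mono nhdsWithin_le_nhds

private lemma const_zero_of_isLittleO {ε : ℝ} (hε : 0 < ε) {c : ℝ} {k : ℕ}
    (h : (fun x => c * x ^ k) =o[𝓝[Set.Ico 0 ε] 0] (fun x : ℝ => x ^ k)) : c = 0 := by
  by_contra hc
  have hpos : 0 < |c| / 2 := by positivity
  have h2 : (fun x => c * x ^ k) =o[𝓝[Set.Ioo 0 ε] 0] (fun x : ℝ => x ^ k) :=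
    h.mono (nhdsWithin_mono 0 Set.Ioo_subset_Ico_self)
  haveI : (𝓝[Set.Ioo (0:ℝ) ε] 0).NeBot := by
    apply mem_closure_iff_nhdsWithin_neBot.1
    rw [closure_Ioo hε.ne]
    exact ⟨le_refl _, hε.le⟩
  obtain ⟨x, hx1, hx2⟩ := ((h2.def hpos).and eventually_mem_nhdsWithin).exists
  have hxpos : 0 < x := hx2.1
  have hxk : 0 < x ^ k := pow_pos hxpos k
  rw [Real.norm_eq_abs, Real.norm_eq_abs, abs_mul, abs_pow, abs_of_pos hxpos] at hx1
  nlinarith [abs_pos.2 hc]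

/-- The value at the origin of the Schwarzian derivative of a `C³` parabolic germ is
invariant under parabolic `C²` conjugacy. Derivatives at `0` are one-sided
(derivatives within `[0,ε)`). -/
theorem stmt_6 (ε : ℝ) (hε : 0 < ε) (f g h : ℝ → ℝ)
    (hf : ContDiffOn ℝ 3 f (Set.Ico 0 ε)) (hg : ContDiffOn ℝ 3 g (Set.Ico 0 ε))
    (hf0 : f 0 = 0) (hg0 : g 0 = 0)
    (hf1 : iteratedDerivWithin 1 f (Set.Ico 0 ε) 0 = 1)
    (hg1 : iteratedDerivWithin 1 g (Set.Ico 0 ε) 0 = 1)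
    (hf2 : iteratedDerivWithin 2 f (Set.Ico 0 ε) 0 ≠ 0)
    (hg2 : iteratedDerivWithin 2 g (Set.Ico 0 ε) 0 ≠ 0)
    (δ : ℝ) (hδ : 0 < δ)
    (hh : ContDiffOn ℝ 2 h (Set.Ico 0 ε))
    (hh0 : h 0 = 0) (hh1 : iteratedDerivWithin 1 h (Set.Ico 0 ε) 0 = 1)
    (hconj : ∀ x ∈ Set.Ico (0 : ℝ) δ, h (f x) = g (h x)) :
    iteratedDerivWithin 3 f (Set.Ico 0 ε) 0
        - (3 / 2) * (iteratedDerivWithin 2 f (Set.Ico 0 ε) 0) ^ 2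
      = iteratedDerivWithin 3 g (Set.Ico 0 ε) 0
        - (3 / 2) * (iteratedDerivWithin 2 g (Set.Ico 0 ε) 0) ^ 2 := by
  have h0 : (0 : ℝ) ∈ Set.Ico 0 ε := ⟨le_refl _, hε⟩
  have hsu : UniqueDiffOn ℝ (Set.Ico (0:ℝ) ε) := uniqueDiffOn_Ico 0 ε
  set s := Set.Ico (0:ℝ) ε with hsdef
  set l := 𝓝[s] (0:ℝ) with hldef
  set a2 := iteratedDerivWithin 2 f s 0 with ha2
  set a3 := iteratedDerivWithin 3 f s 0 with ha3
  set b2 := iteratedDerivWithin 2 g s 0 with hb2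
  set b3 := iteratedDerivWithin 3 g s 0 with hb3
  set p2 := iteratedDerivWithin 2 h s 0 with hp2
  set u : ℝ → ℝ := fun x => f x - x - a2/2 * x^2 - a3/6 * x^3 with hudef
  set v : ℝ → ℝ := fun x => h x - x - p2/2 * x^2 with hvdef
  set w : ℝ → ℝ := fun y => g y - y - b2/2 * y^2 - b3/6 * y^3 with hwdef
  -- Peano expansions
  have hU : u =o[l] (fun x => x^3) := by
    have hpe := peano_rem ε hε 3 f (by exact_mod_cast hf)
    apply hpe.congr (fun x => ?_) (fun x => rfl)
    rw [Finset.sum_range_succ, Finset.sum_range_succ, Finset.sum_range_succ,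
      Finset.sum_range_one, iteratedDerivWithin_zero, hf0, hf1]
    simp only [hudef, ← ha2, ← ha3, Nat.factorial]
    push_cast
    ring
  have hW : w =o[l] (fun x => x^3) := by
    have hpe := peano_rem ε hε 3 g (by exact_mod_cast hg)
    apply hpe.congr (fun x => ?_) (fun x => rfl)
    rw [Finset.sum_range_succ, Finset.sum_range_succ, Finset.sum_range_succ,
      Finset.sum_range_one, iteratedDerivWithin_zero, hg0, hg1]
    simp only [hwdef, ← hb2, ← hb3, Nat.factorial]
    push_cast
    ring
  have hV : v =o[l] (fun x => x^2) := by
    have hpe := peano_rem ε hε 2 h (by exact_mod_cast hh)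
    apply hpe.congr (fun x => ?_) (fun x => rfl)
    rw [Finset.sum_range_succ, Finset.sum_range_succ,
      Finset.sum_range_one, iteratedDerivWithin_zero, hh0, hh1]
    simp only [hvdef, ← hp2, Nat.factorial]
    push_cast
    ring
  have hG1 : derivWithin h s 0 = 1 := by
    rw [← iteratedDerivWithin_one]
    exact hh1
  have hG2 : iteratedDerivWithin 1 (derivWithin h s) s 0 = p2 := by
    rw [hp2, hsdef]
    exact (congrFun (iteratedDerivWithin_succ' (n := 1) (f := h) (s := Set.Ico 0 ε)) 0).symm
  have hV' : (fun y => derivWithin h s y - 1 - p2 * y) =o[l] (fun x => x^1) := by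
    have hGc : ContDiffOn ℝ 1 (derivWithin h s) s := by
      apply hh.derivWithin hsu
      exact_mod_cast le_refl _
    have hpe := peano_rem ε hε 1 (derivWithin h s) (by exact_mod_cast hGc)
    apply hpe.congr (fun x => ?_) (fun x => rfl)
    rw [Finset.sum_range_succ, Finset.sum_range_one, iteratedDerivWithin_zero]
    rw [show iteratedDerivWithin 1 (derivWithin h s) s 0 = p2 from hG2, hG1]
    simp only [Nat.factorial]
    push_cast
    ring
  -- basic facts about the filter
  have hmem : ∀ᶠ x in l, x ∈ s := eventually_mem_nhdsWithin
  have hx0 : ∀ᶠ x in l, (0:ℝ) ≤ x := by filter_upwards [hmem] with x hx using hx.1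
  have hidt : Filter.Tendsto (fun x : ℝ => x) l (𝓝 0) :=
    Filter.tendsto_id.mono_left nhdsWithin_le_nhds
  have hsmall : ∀ c : ℝ, 0 < c → ∀ᶠ x in l, x < c := by
    intro c hc
    exact hidt (Iio_mem_nhds hc)
  have hx1O : (fun x : ℝ => x) =O[l] (fun _ => (1:ℝ)) := hidt.isBigO_one ℝ
  -- big-O facts
  have hUO2 : u =O[l] (fun x => x^2) := hU.isBigO.trans (pow_isBigO_pow hε (by norm_num))
  have hVO2 : v =O[l] (fun x => x^2) := hV.isBigO
  have hO21 : (fun x : ℝ => x^2) =O[l] (fun x : ℝ => x) :=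
    (pow_isBigO_pow hε (show 1 ≤ 2 by norm_num)).congr (fun x => rfl) (fun x => pow_one x)
  have hHO : h =O[l] (fun x : ℝ => x) := by
    have h1 : (fun x : ℝ => x + p2/2 * x^2 + v x) =O[l] (fun x : ℝ => x) := by
      refine (Asymptotics.isBigO_refl _ _ |>.add ?_).add (hVO2.trans hO21)
      exact hO21.const_mul_left (p2/2)
    apply h1.congr_left (fun x => ?_)
    simp only [hvdef]; ring
  -- eventual bounds on |f x - x| and |h x - x|
  set M : ℝ := |a2/2| + |a3/6| + 1 with hMdef
  have hM1 : 1 ≤ M := by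
    rw [hMdef]
    have := abs_nonneg (a2/2); have := abs_nonneg (a3/6); linarith
  have hM0 : 0 < M := lt_of_lt_of_le one_pos hM1
  have hfx : ∀ᶠ x in l, |f x - x| ≤ M * x^2 := by
    filter_upwards [hU.def one_pos, hx0, hsmall 1 one_pos] with x h1 h2 h3
    have hux : |u x| ≤ x^3 := by
      rw [Real.norm_eq_abs, Real.norm_eq_abs, one_mul, abs_pow, abs_of_nonneg h2] at h1
      exact h1
    have hfu : f x - x = a2/2 * x^2 + a3/6 * x^3 + u x := by simp only [hudef]; ring
    rw [hfu]
    have hx3 : x^3 ≤ x^2 := by nlinarith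
    calc |a2/2 * x^2 + a3/6 * x^3 + u x| ≤ |a2/2| * x^2 + |a3/6| * x^3 + |u x| := by
          rw [show |a2/2| * x^2 = |a2/2 * x^2| by rw [abs_mul, abs_pow, abs_of_nonneg h2],
            show |a3/6| * x^3 = |a3/6 * x^3| by rw [abs_mul, abs_pow, abs_of_nonneg h2]]
          exact (abs_add_three _ _ _)
      _ ≤ M * x^2 := by
          rw [hMdef]
          nlinarith [abs_nonneg (a3/6), abs_nonneg (a2/2), hx3, hux,
            mul_le_mul_of_nonneg_left hx3 (abs_nonneg (a3/6))]
  set N : ℝ := |p2/2| + 1 with hNdef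
  have hN0 : (0:ℝ) < N := by
    rw [hNdef]; positivity
  have hhx : ∀ᶠ x in l, |h x - x| ≤ N * x^2 := by
    filter_upwards [hV.def one_pos, hx0] with x h1 h2
    have hvx : |v x| ≤ x^2 := by
      rw [Real.norm_eq_abs, Real.norm_eq_abs, one_mul, abs_pow, abs_of_nonneg h2] at h1
      exact h1
    have hhu : h x - x = p2/2 * x^2 + v x := by simp only [hvdef]; ring
    rw [hhu]
    calc |p2/2 * x^2 + v x| ≤ |p2/2| * x^2 + |v x| := by
          rw [show |p2/2| * x^2 = |p2/2 * x^2| by rw [abs_mul, abs_pow, abs_of_nonneg h2]]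
          exact abs_add_le _ _
      _ ≤ N * x^2 := by
          rw [hNdef]
          nlinarith [abs_nonneg (p2/2)]
  -- h maps into s and tends to 0 within s
  have hht : Filter.Tendsto h l (𝓝 0) := by
    have := (hh.continuousOn 0 h0).tendsto
    rwa [hh0] at this
  have hhmem : ∀ᶠ x in l, h x ∈ s := by
    filter_upwards [hhx, hx0, hsmall (1/N) (by positivity), hht (Iio_mem_nhds hε)]
      with x h1 h2 h3 h4
    constructor
    · have : N * x < 1 := by
        rw [← lt_div_iff₀' hN0]
        exact h3
      nlinarith [abs_le.1 h1]
    · exact h4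
  have hhtl : Filter.Tendsto h l l := by
    rw [hldef, tendsto_nhdsWithin_iff]
    exact ⟨hht, hhmem⟩
  -- w (h x) = o(x^3)
  have hWh : (fun x => w (h x)) =o[l] (fun x => x^3) := by
    have h1 : (fun x => w (h x)) =o[l] (fun x => (h x)^3) := by
      have := hW.comp_tendsto hhtl
      exact this
    exact h1.trans_isBigO (hHO.pow 3)
  -- derivative of v within s
  have hvderiv : ∀ y ∈ s, HasDerivWithinAt v (derivWithin h s y - 1 - p2 * y) s y := by
    intro y hy
    have hhd : HasDerivWithinAt h (derivWithin h s y) s y := by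
      have : DifferentiableWithinAt ℝ h s y := by
        apply (hh.differentiableOn ?_) y hy
        norm_num
      exact this.hasDerivWithinAt
    have hpd : HasDerivAt (fun z : ℝ => z + p2/2 * z^2) (1 + p2/2 * (2 * y^(2-1))) y := by
      have h1 : HasDerivAt (fun z : ℝ => z) 1 y := hasDerivAt_id' y
      have h2 : HasDerivAt (fun z : ℝ => z^2) ((2:ℕ) * y^(2-1)) y := hasDerivAt_pow 2 y
      have := h1.add (h2.const_mul (p2/2))
      exact this.congr_deriv (by norm_num)
    have hsub := hhd.sub hpd.hasDerivWithinAt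
    have hd : derivWithin h s y - (1 + p2/2 * (2 * y^(2-1))) = derivWithin h s y - 1 - p2 * y := by
      norm_num
      ring
    rw [hd] at hsub
    apply hsub.congr (fun z _ => by simp only [hvdef, Pi.sub_apply]; ring) (by simp only [hvdef, Pi.sub_apply]; ring)
  -- key estimate : v (f x) - v x = o(x^3)
  have hVfv : (fun x => v (f x) - v x) =o[l] (fun x => x^3) := by
    rw [Asymptotics.isLittleO_iff]
    intro c hc
    have hc' : 0 < c / (2*M) := by positivity
    have hq := hV'.def hc'
    rw [Filter.eventually_iff, hldef, mem_nhdsWithin_iff] at hq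
    obtain ⟨r, hr, hball⟩ := hq
    filter_upwards [hmem, hfx, hx0, hsmall (1/M) (by positivity),
      hsmall (min r ε / 2) (by positivity)] with x hxs hfxb hx0' hxM hxre
    have hMx : M * x ≤ 1 := by
      have : M * x < M * (1/M) := by
        apply mul_lt_mul_of_pos_left hxM hM0
      rw [mul_one_div_cancel hM0.ne'] at this
      linarith
    have hfxu : f x ≤ 2*x := by nlinarith [abs_le.1 hfxb]
    have hfxl : 0 ≤ f x := by nlinarith [abs_le.1 hfxb]
    have h2x : 2*x < min r ε := by
      have h1 : min r ε / 2 ≤ min r ε := by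
        have : (0:ℝ) < min r ε := lt_min hr hε
        linarith
      have : x < min r ε / 2 := hxre
      linarith
    have hts : Set.Icc 0 (2*x) ⊆ s := by
      intro y hy
      exact ⟨hy.1, lt_of_le_of_lt hy.2 (lt_of_lt_of_le h2x (min_le_right _ _))⟩
    have htb : ∀ y ∈ Set.Icc 0 (2*x), y ∈ Metric.ball (0:ℝ) r ∩ s := by
      intro y hy
      refine ⟨?_, hts hy⟩
      rw [mem_ball_iff_norm, sub_zero, Real.norm_eq_abs, abs_of_nonneg hy.1]
      exact lt_of_le_of_lt hy.2 (lt_of_lt_of_le h2x (min_le_left _ _))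
    have hmvt := Convex.norm_image_sub_le_of_norm_hasDerivWithin_le
      (f := v) (f' := fun y => derivWithin h s y - 1 - p2 * y)
      (C := c/(2*M) * (2*x)) (s := Set.Icc 0 (2*x))
      (fun y hy => (hvderiv y (hts hy)).mono hts)
      (fun y hy => by
        have hb := hball (htb y hy)
        simp only [Set.mem_setOf_eq] at hb
        calc ‖derivWithin h s y - 1 - p2 * y‖ ≤ c/(2*M) * ‖y^1‖ := hb
          _ = c/(2*M) * y := by
              rw [pow_one, Real.norm_eq_abs, abs_of_nonneg hy.1]
          _ ≤ c/(2*M) * (2*x) := by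
              apply mul_le_mul_of_nonneg_left hy.2 hc'.le)
      (convex_Icc _ _)
      (Set.mem_Icc.2 ⟨hx0', by linarith⟩)
      (Set.mem_Icc.2 ⟨hfxl, hfxu⟩)
    calc ‖v (f x) - v x‖ ≤ c/(2*M) * (2*x) * ‖f x - x‖ := hmvt
      _ ≤ c/(2*M) * (2*x) * (M * x^2) := by
          apply mul_le_mul_of_nonneg_left _ (by positivity)
          rw [Real.norm_eq_abs]
          exact hfxb
      _ = c * x^3 := by field_simp
      _ ≤ c * ‖x^3‖ := by
          rw [Real.norm_eq_abs, abs_of_nonneg (by positivity)]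
  -- the polynomial correction term
  set T : ℝ → ℝ := fun x => u x + 2*(p2/2)*(a3/6)*x^4 + 2*(p2/2)*x*u x
      + (p2/2)*((a2/2)*x^2+(a3/6)*x^3+u x)^2 - 2*(b2/2)*x*(v x)
      - (b2/2)*((p2/2)*x^2 + v x)^2
      - (b3/6)*((p2/2)*x^2 + v x)*((h x)^2 + x*(h x) + x^2) with hTdef
  have hT : T =o[l] (fun x => x^3) := by
    have t1 : (fun x : ℝ => 2*(p2/2)*(a3/6)*x^4) =o[l] (fun x => x^3) :=
      (pow_isLittleO_pow hε (by norm_num)).const_mul_left _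
    have t2 : (fun x : ℝ => 2*(p2/2)*x*u x) =o[l] (fun x => x^3) := by
      have := hx1O.mul_isLittleO hU
      have h2 : (fun x : ℝ => x * u x) =o[l] (fun x => x^3) :=
        this.congr (fun x => rfl) (fun x => one_mul _)
      exact (h2.const_mul_left (2*(p2/2))).congr (fun x => by ring) (fun x => rfl)
    have hIO : (fun x : ℝ => (a2/2)*x^2+(a3/6)*x^3+u x) =O[l] (fun x => x^2) := by
      refine (((Asymptotics.isBigO_refl (fun x : ℝ => x^2) l).const_mul_left _).add ?_).add hUO2
      exact ((pow_isBigO_pow hε (show 2 ≤ 3 by norm_num)).const_mul_left _)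
    have t3 : (fun x : ℝ => (p2/2)*((a2/2)*x^2+(a3/6)*x^3+u x)^2) =o[l] (fun x => x^3) := by
      have hsq : (fun x : ℝ => ((a2/2)*x^2+(a3/6)*x^3+u x)^2) =O[l] (fun x => x^4) := by
        have := hIO.mul hIO
        exact this.congr (fun x => by ring) (fun x => by ring)
      exact ((hsq.trans_isLittleO (pow_isLittleO_pow hε (by norm_num))).const_mul_left _)
    have t4 : (fun x : ℝ => 2*(b2/2)*x*(v x)) =o[l] (fun x => x^3) := by
      have := (Asymptotics.isBigO_refl (fun x : ℝ => x) l).mul_isLittleO hV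
      have h2 : (fun x : ℝ => x * v x) =o[l] (fun x => x^3) :=
        this.congr (fun x => rfl) (fun x => by ring)
      exact (h2.const_mul_left (2*(b2/2))).congr (fun x => by ring) (fun x => rfl)
    have hPvO : (fun x : ℝ => (p2/2)*x^2 + v x) =O[l] (fun x => x^2) :=
      ((Asymptotics.isBigO_refl (fun x : ℝ => x^2) l).const_mul_left _).add hVO2
    have t5 : (fun x : ℝ => (b2/2)*((p2/2)*x^2 + v x)^2) =o[l] (fun x => x^3) := by
      have hsq : (fun x : ℝ => ((p2/2)*x^2 + v x)^2) =O[l] (fun x => x^4) := by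
        have := hPvO.mul hPvO
        exact this.congr (fun x => by ring) (fun x => by ring)
      exact ((hsq.trans_isLittleO (pow_isLittleO_pow hε (by norm_num))).const_mul_left _)
    have t6 : (fun x : ℝ => (b3/6)*((p2/2)*x^2 + v x)*((h x)^2 + x*(h x) + x^2))
        =o[l] (fun x => x^3) := by
      have hq : (fun x : ℝ => (h x)^2 + x*(h x) + x^2) =O[l] (fun x => x^2) := by
        refine (((hHO.mul hHO).congr (fun x => by ring) (fun x => by ring)).add ?_).add
          (Asymptotics.isBigO_refl _ _)
        exact ((Asymptotics.isBigO_refl (fun x : ℝ => x) l).mul hHO).congr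
          (fun x => rfl) (fun x => by ring)
      have hprod : (fun x : ℝ => ((p2/2)*x^2 + v x)*((h x)^2 + x*(h x) + x^2))
          =O[l] (fun x => x^4) := by
        have := hPvO.mul hq
        exact this.congr (fun x => rfl) (fun x => by ring)
      have := hprod.trans_isLittleO (pow_isLittleO_pow hε (show 3 < 4 by norm_num))
      exact (this.const_mul_left (b3/6)).congr (fun x => by ring) (fun x => rfl)
    have := ((((hU.add t1).add t2).add t3).sub t4).sub t5 |>.sub t6
    exact this.congr (fun x => by rw [hTdef]) (fun x => rfl)
  -- the combined remainder
  set K1 : ℝ := a2/2 - b2/2 with hK1def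
  set K2 : ℝ := a3/6 + 2*(a2/2)*(p2/2) - 2*(b2/2)*(p2/2) - b3/6 with hK2def
  have hS : (fun x => (v (f x) - v x) - w (h x) + T x) =o[l] (fun x => x^3) :=
    (hVfv.sub hWh).add hT
  have hSid : ∀ x, (v (f x) - v x) - w (h x) + T x
      = h (f x) - g (h x) - (K1 * x^2 + K2 * x^3) := by
    intro x
    rw [hTdef, hK1def, hK2def]
    simp only [hvdef, hwdef, hudef]
    ring
  have hconjEv : ∀ᶠ x in l, h (f x) - g (h x) = 0 := by
    filter_upwards [hx0, hsmall δ hδ] with x h1 h2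
    rw [hconj x ⟨h1, h2⟩, sub_self]
  have hWo : (fun x => K1 * x^2 + K2 * x^3) =o[l] (fun x => x^3) := by
    have heq : (fun x => K1 * x^2 + K2 * x^3)
        =ᶠ[l] (fun x => -((v (f x) - v x) - w (h x) + T x)) := by
      filter_upwards [hconjEv] with x hx
      rw [hSid x, hx]
      ring
    exact (hS.neg_left).congr' heq.symm (Filter.EventuallyEq.refl _ _)
  -- extract the coefficients
  have hK1z : K1 = 0 := by
    apply const_zero_of_isLittleO hε (k := 2)
    have hWo2 : (fun x => K1 * x^2 + K2 * x^3) =o[l] (fun x => x^2) :=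
      hWo.trans_isBigO (pow_isBigO_pow hε (by norm_num))
    have hK2o : (fun x : ℝ => K2 * x^3) =o[l] (fun x => x^2) :=
      (pow_isLittleO_pow hε (by norm_num)).const_mul_left _
    exact (hWo2.sub hK2o).congr (fun x => by ring) (fun x => rfl)
  have hK2z : K2 = 0 := by
    apply const_zero_of_isLittleO hε (k := 3)
    exact hWo.congr (fun x => by rw [hK1z]; ring) (fun x => rfl)
  -- conclude
  have ha2b2 : a2 = b2 := by
    rw [hK1def] at hK1z
    linarith
  have ha3b3 : a3 = b3 := by
    rw [hK2def, ha2b2] at hK2z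
    linarith
  rw [ha2b2, ha3b3]
end

section
/- (Reduction lemma.) Let ℓ ≥ 1 and ε > 0, and let f : [0,ε) → ℝ be of class C^{2ℓ+1} with f(0) = 0, exactly ℓ-tangent to the identity (f'(0) = 1, f^{(j)}(0) = 0 for 2 ≤ j ≤ ℓ, f^{(ℓ+1)}(0) ≠ 0), and suppose f^{(ℓ+1)}(0) > 0 (the expanding case). Then there exist a polynomial map h : ℝ → ℝ with h(0) = 0 and h'(0) > 0 and a real number μ such that h(f(x)) = h(x) + (h(x))^{ℓ+1} + μ·(h(x))^{2ℓ+1} + o(x^{2ℓ+1}) as x → 0⁺. (Equivalently, f is conjugate by a germ of polynomial diffeomorphism to a germ of the reduced form x ↦ x + x^{ℓ+1} + μx^{2ℓ+1} + o(x^{2ℓ+1}); in the contracting case f^{(ℓ+1)}(0) < 0 the same holds with the sign of the term (h(x))^{ℓ+1} reversed.) -/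
open Polynomial Set Filter Asymptotics


lemma binom_aux {R : Type*} [CommRing R] (x e : R) :
    ∀ n : ℕ, ∃ w : R, (x + e) ^ (n + 1) = x ^ (n + 1) + (n + 1 : ℕ) * x ^ n * e + e ^ 2 * w ∧
      ∀ d : R, d ∣ x → d ∣ e → d ^ (n - 1) ∣ w := by
  intro n
  induction n with
  | zero => exact ⟨0, by push_cast; ring, fun d _ _ => dvd_zero _⟩
  | succ n ih =>
    obtain ⟨w, hw, hd⟩ := ih
    refine ⟨x * w + (n + 1 : ℕ) * x ^ n + e * w, ?_, ?_⟩
    · have : (x + e) ^ (n + 1 + 1) = (x + e) * (x + e) ^ (n + 1) := by ring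
      rw [this, hw]; push_cast; ring
    · intro d hx he
      rcases Nat.eq_zero_or_pos n with hn | hn
      · subst hn; simp
      · have h1 : n + 1 - 1 = n := rfl
        rw [h1]
        have hn' : n = (n - 1) + 1 := (Nat.succ_pred_eq_of_pos hn).symm
        refine dvd_add (dvd_add ?_ ?_) ?_
        · rw [hn', pow_succ, mul_comm (d ^ (n-1)) d]
          exact mul_dvd_mul hx (hd d hx he)
        · exact Dvd.dvd.mul_left (pow_dvd_pow_of_dvd hx n) _
        · rw [hn', pow_succ, mul_comm (d ^ (n-1)) d]
          exact mul_dvd_mul he (hd d hx he)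

/-- `p^j - (b^j) X^j` is divisible by `X^(j+1)` when `p = bX + O(X²)`. -/
lemma pow_sub_lead {b : ℝ} {p : Polynomial ℝ} (h0 : p.coeff 0 = 0) (h1 : p.coeff 1 = b) (j : ℕ) :
    X ^ (j + 1) ∣ p ^ j - C (b ^ j) * X ^ j := by
  obtain ⟨v, hv⟩ : X ∣ p := X_dvd_iff.2 h0
  have hv0 : v.coeff 0 = b := by
    have := congrArg (fun q => Polynomial.coeff q 1) hv
    simpa [coeff_X_mul] using this.symm.trans h1
  have : p ^ j - C (b ^ j) * X ^ j = X ^ j * (v ^ j - C (b ^ j)) := by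
    rw [hv]; ring
  rw [this, pow_succ]
  refine mul_dvd_mul_left _ (X_dvd_iff.2 ?_)
  have : (v ^ j).coeff 0 = b ^ j := by
    rw [coeff_zero_eq_eval_zero, eval_pow, ← coeff_zero_eq_eval_zero, hv0]
  rw [coeff_sub, this, coeff_C]; simp


lemma alg_main (ℓ : ℕ) (hℓ : 1 ≤ ℓ) (a b : ℝ) (ha : 0 < a) (hb : 0 < b) (hba : b ^ ℓ = a)
    (T : Polynomial ℝ) (hT : X ^ (ℓ + 2) ∣ T - X - C a * X ^ (ℓ + 1)) :
    ∃ (p : Polynomial ℝ) (μ : ℝ), p.coeff 0 = 0 ∧ p.coeff 1 = b ∧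
      X ^ (2 * ℓ + 2) ∣ p.comp T - (p + p ^ (ℓ + 1) + C μ * p ^ (2 * ℓ + 1)) := by
  have claim : ∀ t : ℕ, t + 1 ≤ ℓ → ∃ p : Polynomial ℝ, p.coeff 0 = 0 ∧ p.coeff 1 = b ∧
      X ^ (ℓ + 2 + t) ∣ p.comp T - p - p ^ (ℓ + 1) := by
    intro t
    induction t with
    | zero =>
      intro _
      refine ⟨C b * X, by simp, by simp, ?_⟩
      have h2 : (C b * X) ^ (ℓ + 1) = C (a * b) * X ^ (ℓ + 1) := by
        rw [mul_pow, ← C_pow, pow_succ, hba]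
      have key : (C b * X).comp T - C b * X - (C b * X) ^ (ℓ + 1)
          = C b * (T - X - C a * X ^ (ℓ + 1)) := by
        rw [mul_comp, C_comp, X_comp, h2, C_mul]; ring
      have h3 := hT.mul_left (C b)
      rw [← key] at h3
      simpa using h3
    | succ t ih =>
      intro h
      obtain ⟨p, hp0, hp1, hdvd⟩ := ih (by omega)
      obtain ⟨r, hr⟩ := hdvd
      set m1 := ℓ + 2 + t with hm1
      set k := t + 2 with hk
      set d := r.coeff 0 with hd
      have hden : a * ((ℓ : ℝ) + 1 - k) ≠ 0 := by
        have : (k : ℝ) ≤ (ℓ : ℝ) := by exact_mod_cast (by omega : k ≤ ℓ)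
        have : (0:ℝ) < (ℓ : ℝ) + 1 - k := by linarith
        positivity
      set c := d / (a * ((ℓ : ℝ) + 1 - k)) with hc
      -- A1
      have A1 : X ^ (m1+1) ∣ (p.comp T - p - p ^ (ℓ+1)) - C d * X ^ m1 := by
        rw [hr]
        have e : X ^ m1 * r - C d * X ^ m1 = X ^ m1 * (r - C d) := by ring
        rw [e, pow_succ]
        exact mul_dvd_mul_left _ (X_dvd_iff.2 (by simp [hd]))
      -- A2
      obtain ⟨s, hs⟩ := hT
      have hTeq : T = X + (C a * X ^ (ℓ+1) + X ^ (ℓ+2) * s) := by linear_combination hs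
      obtain ⟨w, hw, -⟩ := binom_aux (X : ℝ[X]) (C a * X ^ (ℓ+1) + X ^ (ℓ+2) * s) (t+1)
      have A2 : X ^ (m1+1) ∣ T ^ k - X ^ k - C ((k:ℝ) * a) * X ^ m1 := by
        have e1 : T ^ k - X ^ k - C ((k:ℝ)*a) * X ^ m1
            = ((t+2:ℕ) : ℝ[X]) * X ^ (t+1) * (X ^ (ℓ+2) * s)
              + (C a * X ^ (ℓ+1) + X ^ (ℓ+2) * s) ^ 2 * w := by
          rw [hTeq, show k = t+1+1 from rfl, hw, hm1]
          push_cast [C_mul]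
          simp only [map_add, map_one, map_natCast]
          push_cast
          ring
        rw [e1]
        apply dvd_add
        · have h2 : (X:ℝ[X]) ^ (m1+1) ∣ X ^ (t+1) * X ^ (ℓ+2) := by
            rw [← pow_add]; apply pow_dvd_pow; omega
          calc (X:ℝ[X]) ^ (m1+1) ∣ X ^ (t+1) * X ^ (ℓ+2) := h2
            _ ∣ ((t+2:ℕ) : ℝ[X]) * X ^ (t+1) * (X ^ (ℓ+2) * s) :=
              ⟨((t+2:ℕ) : ℝ[X]) * s, by ring⟩
        · have hE : (X:ℝ[X]) ^ (ℓ+1) ∣ C a * X ^ (ℓ+1) + X ^ (ℓ+2) * s :=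
            dvd_add (dvd_mul_left _ _) ⟨X * s, by ring⟩
          have hE2 : (X:ℝ[X]) ^ (2*ℓ+2) ∣ (C a * X ^ (ℓ+1) + X ^ (ℓ+2) * s) ^ 2 := by
            rw [show 2*ℓ+2 = (ℓ+1)*2 from by ring, pow_mul]
            exact pow_dvd_pow_of_dvd hE 2
          exact ((pow_dvd_pow (X:ℝ[X]) (by omega : m1+1 ≤ 2*ℓ+2)).trans hE2).mul_right w
      -- A3
      obtain ⟨w2, hw2, hd2⟩ := binom_aux p (C c * X ^ k) ℓ
      have A3 : X ^ (m1+1) ∣ (p + C c * X ^ k) ^ (ℓ+1) - p ^ (ℓ+1)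
          - C (((ℓ:ℝ)+1) * a * c) * X ^ m1 := by
        have e3 : (p + C c * X ^ k) ^ (ℓ+1) - p ^ (ℓ+1) - C (((ℓ:ℝ)+1)*a*c) * X ^ m1
            = ((ℓ+1:ℕ) : ℝ[X]) * (C c * X ^ k) * (p ^ ℓ - C (b ^ ℓ) * X ^ ℓ)
              + (C c * X ^ k) ^ 2 * w2 := by
          rw [hw2, hba, hm1, hk]
          push_cast [C_mul]
          simp only [map_add, map_one, map_natCast]
          push_cast
          ring
        rw [e3]
        apply dvd_add
        · have hlead := pow_sub_lead hp0 hp1 ℓ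
          rw [show m1 + 1 = k + (ℓ+1) from by omega, pow_add]
          exact mul_dvd_mul ((dvd_mul_left _ _).mul_left _) hlead
        · have hw2d : (X:ℝ[X]) ^ (ℓ-1) ∣ w2 :=
            hd2 X (X_dvd_iff.2 hp0) ((dvd_pow_self X (by omega : k ≠ 0)).mul_left (C c))
          have h2 : (X:ℝ[X]) ^ (2*k + (ℓ-1)) ∣ (C c * X ^ k) ^ 2 * w2 := by
            rw [pow_add]
            exact mul_dvd_mul (by rw [mul_pow, ← pow_mul, mul_comm k 2]; exact dvd_mul_left _ _) hw2d
          exact (pow_dvd_pow (X:ℝ[X]) (by omega : m1+1 ≤ 2*k + (ℓ-1))).trans h2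
      -- combine
      refine ⟨p + C c * X ^ k, ?_, ?_, ?_⟩
      · rw [coeff_add, hp0, coeff_C_mul, coeff_X_pow, if_neg (by omega : ¬ (0 = k))]
        ring
      · rw [coeff_add, hp1, coeff_C_mul, coeff_X_pow, if_neg (by omega : ¬ (1 = k))]
        ring
      · have hsc : d + c * ((k:ℝ) * a) - ((ℓ:ℝ)+1) * a * c = 0 := by
          rw [hc]; linear_combination -(div_mul_cancel₀ d hden)
        have key : (p + C c * X ^ k).comp T - (p + C c * X ^ k) - (p + C c * X ^ k) ^ (ℓ+1)
            = ((p.comp T - p - p ^ (ℓ+1)) - C d * X ^ m1)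
              + C c * (T ^ k - X ^ k - C ((k:ℝ)*a) * X ^ m1)
              - ((p + C c * X ^ k) ^ (ℓ+1) - p ^ (ℓ+1) - C (((ℓ:ℝ)+1)*a*c) * X ^ m1)
              + C (d + c*((k:ℝ)*a) - ((ℓ:ℝ)+1)*a*c) * X ^ m1 := by
          rw [add_comp, mul_comp, C_comp, X_pow_comp]
          simp only [C_add, C_sub, C_mul]
          ring
        rw [show ℓ + 2 + (t+1) = m1 + 1 from by omega, key, hsc]
        simp only [map_zero, zero_mul, add_zero]
        exact dvd_sub (dvd_add A1 (A2.mul_left _)) A3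
  obtain ⟨p, hp0, hp1, hdvd⟩ := claim (ℓ-1) (by omega)
  rw [show ℓ + 2 + (ℓ-1) = 2*ℓ+1 from by omega] at hdvd
  obtain ⟨r, hr⟩ := hdvd
  have hb' : b ^ (2*ℓ+1) ≠ 0 := pow_ne_zero _ hb.ne'
  refine ⟨p, r.coeff 0 / b ^ (2*ℓ+1), hp0, hp1, ?_⟩
  set μ := r.coeff 0 / b ^ (2*ℓ+1) with hμ
  have hsc : r.coeff 0 - μ * b ^ (2*ℓ+1) = 0 := by rw [hμ]; field_simp; ring
  have key : p.comp T - (p + p ^ (ℓ+1) + C μ * p ^ (2*ℓ+1))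
      = ((p.comp T - p - p ^ (ℓ+1)) - C (r.coeff 0) * X ^ (2*ℓ+1))
        - C μ * (p ^ (2*ℓ+1) - C (b ^ (2*ℓ+1)) * X ^ (2*ℓ+1))
        + C (r.coeff 0 - μ * b ^ (2*ℓ+1)) * X ^ (2*ℓ+1) := by
    simp only [C_sub, C_mul]; ring
  rw [key, hsc]
  simp only [map_zero, zero_mul, add_zero]
  refine dvd_sub ?_ ?_
  · rw [hr]
    have e : X ^ (2*ℓ+1) * r - C (r.coeff 0) * X ^ (2*ℓ+1) = X ^ (2*ℓ+1) * (r - C (r.coeff 0)) := by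
      ring
    rw [e, show 2*ℓ+2 = (2*ℓ+1)+1 from rfl, pow_succ]
    exact mul_dvd_mul_left _ (X_dvd_iff.2 (by simp))
  · exact ((pow_sub_lead hp0 hp1 (2*ℓ+1)).mul_left _)


lemma iteratedDerivWithin_congr_set' {f : ℝ → ℝ} {s t : Set ℝ} {x : ℝ} (h : s =ᶠ[nhds x] t)
    (n : ℕ) : iteratedDerivWithin n f s x = iteratedDerivWithin n f t x := by
  simp only [iteratedDerivWithin_eq_iteratedFDerivWithin, iteratedFDerivWithin_congr_set h]

/-- Peano form of Taylor's theorem, one-sided at `0`. -/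
lemma taylor_peano (n : ℕ) (ε : ℝ) (hε : 0 < ε) (f : ℝ → ℝ)
    (hf : ContDiffOn ℝ (n + 1 : ℕ) f (Set.Ico 0 ε)) :
    (fun x => f x - ∑ k ∈ Finset.range (n + 2),
        iteratedDerivWithin k f (Set.Ico 0 ε) 0 / (k.factorial : ℝ) * x ^ k)
      =o[nhdsWithin 0 (Set.Ioi 0)] fun x => x ^ (n + 1) := by
  set s : Set ℝ := Set.Ico 0 ε with hs
  have hu : UniqueDiffOn ℝ s := uniqueDiffOn_Ico 0 ε
  set g := iteratedDerivWithin (n + 1) f s with hg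
  have gc : ContinuousOn g s :=
    hf.continuousOn_iteratedDerivWithin (by exact_mod_cast le_refl (n+1)) hu
  have h0s : (0:ℝ) ∈ s := by simp [hs, hε]
  rw [isLittleO_iff]
  intro η hη
  obtain ⟨δ, hδ0, hδ⟩ := Metric.continuousWithinAt_iff.1 (gc 0 h0s) η hη
  have hmem : Ioo (0:ℝ) (min δ ε) ∈ nhdsWithin 0 (Set.Ioi 0) :=
    Ioo_mem_nhdsGT (lt_min hδ0 hε)
  filter_upwards [hmem] with x hx
  obtain ⟨hx0, hxm⟩ := hx
  have hxδ : x < δ := lt_of_lt_of_le hxm (min_le_left _ _)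
  have hxε : x < ε := lt_of_lt_of_le hxm (min_le_right _ _)
  have hIccs : Set.Icc (0:ℝ) x ⊆ s := fun y hy => ⟨hy.1, lt_of_le_of_lt hy.2 hxε⟩
  have hfIcc : ContDiffOn ℝ (n + 1 : ℕ) f (Set.Icc 0 x) := hf.mono hIccs
  have hdiff : DifferentiableOn ℝ (iteratedDerivWithin n f (Set.Icc 0 x)) (Set.Ioo 0 x) :=
    (hfIcc.differentiableOn_iteratedDerivWithin (by exact_mod_cast Nat.lt_succ_self n)
      (uniqueDiffOn_Icc hx0)).mono Set.Ioo_subset_Icc_self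
  obtain ⟨ξ, hξ, hrem⟩ := taylor_mean_remainder_lagrange hx0.ne
    (by rw [uIcc_of_le hx0.le]; exact hfIcc.of_le (by exact_mod_cast Nat.le_succ n))
    (by rw [uIcc_of_le hx0.le, uIoo_of_le hx0.le]; exact hdiff)
  rw [uIoo_of_le hx0.le] at hξ
  rw [uIcc_of_le hx0.le] at hrem
  -- sets agree near 0 and near ξ
  have hset0 : Set.Icc (0:ℝ) x =ᶠ[nhds 0] s := by
    rw [Filter.eventuallyEq_set]
    filter_upwards [Iio_mem_nhds hx0] with y hy
    constructor
    · intro hy'; exact hIccs hy'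
    · intro hy'; exact ⟨hy'.1, le_of_lt hy⟩
  have hsetξ : Set.Icc (0:ℝ) x =ᶠ[nhds ξ] s := by
    rw [Filter.eventuallyEq_set]
    filter_upwards [Ioo_mem_nhds hξ.1 hξ.2] with y hy
    simp only [iff_true_intro (hIccs (Set.Ioo_subset_Icc_self hy))]
    simp [Set.mem_Icc, le_of_lt hy.1, le_of_lt hy.2,
      iff_true_intro (hIccs (Set.Ioo_subset_Icc_self hy)).1]
  have hder0 : ∀ k, iteratedDerivWithin k f (Set.Icc 0 x) 0 = iteratedDerivWithin k f s 0 :=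
    fun k => iteratedDerivWithin_congr_set' hset0 k
  have hderξ : iteratedDerivWithin (n+1) f (Set.Icc 0 x) ξ = g ξ :=
    iteratedDerivWithin_congr_set' hsetξ (n+1)
  rw [taylor_within_apply, hderξ] at hrem
  simp only [sub_zero, smul_eq_mul] at hrem
  have hsum : ∑ k ∈ Finset.range (n+1),
      iteratedDerivWithin k f s 0 / (k.factorial : ℝ) * x ^ k
      = ∑ k ∈ Finset.range (n+1),
        ((k.factorial:ℝ)⁻¹ * x ^ k) * iteratedDerivWithin k f (Set.Icc 0 x) 0 := by
    refine Finset.sum_congr rfl fun k _ => ?_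
    rw [hder0 k, div_eq_mul_inv]; ring
  have hg0 : iteratedDerivWithin (n+1) f s 0 = g 0 := rfl
  have key : f x - ∑ k ∈ Finset.range (n+2),
      iteratedDerivWithin k f s 0 / (k.factorial : ℝ) * x ^ k
      = (g ξ - g 0) * x ^ (n+1) / ((n+1).factorial : ℝ) := by
    rw [Finset.sum_range_succ, hsum, hg0]
    linear_combination hrem
  rw [key]
  have hξs : ξ ∈ s := hIccs ⟨le_of_lt hξ.1, le_of_lt hξ.2⟩
  have hgξ : |g ξ - g 0| < η := by
    have := hδ hξs (by rw [Real.dist_eq]; rw [sub_zero, abs_of_pos hξ.1]; linarith [hξ.2])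
    rwa [Real.dist_eq] at this
  have hxp : (0:ℝ) < x ^ (n+1) := pow_pos hx0 _
  have hF : (1:ℝ) ≤ ((n+1).factorial : ℝ) := by exact_mod_cast (n+1).factorial_pos
  have hFpos : (0:ℝ) < ((n+1).factorial : ℝ) := by linarith
  rw [Real.norm_eq_abs, Real.norm_eq_abs, abs_of_pos hxp, abs_div, abs_mul,
    abs_of_pos hxp, abs_of_pos hFpos]
  calc |g ξ - g 0| * x ^ (n+1) / ((n+1).factorial : ℝ)
      ≤ η * x ^ (n+1) / ((n+1).factorial : ℝ) := by
        gcongr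
    _ ≤ η * x ^ (n+1) := by
        rw [div_le_iff₀ hFpos]
        nlinarith [mul_pos hη hxp]


lemma eval_sub_factor (p : Polynomial ℝ) :
    ∃ Q : ℝ → ℝ → ℝ, Continuous (Function.uncurry Q) ∧
      ∀ A B : ℝ, p.eval A - p.eval B = (A - B) * Q A B := by
  refine ⟨fun A B => ∑ j ∈ Finset.range (p.natDegree + 1), p.coeff j *
    ∑ i ∈ Finset.range j, A ^ i * B ^ (j - 1 - i), ?_, ?_⟩
  · show Continuous fun y : ℝ × ℝ => ∑ j ∈ Finset.range (p.natDegree + 1), p.coeff j *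
      ∑ i ∈ Finset.range j, y.1 ^ i * y.2 ^ (j - 1 - i)
    refine continuous_finset_sum _ fun j _ => Continuous.mul continuous_const ?_
    exact continuous_finset_sum _ fun i _ =>
      ((continuous_fst.pow i).mul (continuous_snd.pow _))
  · intro A B
    rw [eval_eq_sum_range, eval_eq_sum_range, ← Finset.sum_sub_distrib, Finset.mul_sum]
    refine Finset.sum_congr rfl fun j _ => ?_
    have h := geom_sum₂_mul A B j
    calc p.coeff j * A ^ j - p.coeff j * B ^ j = p.coeff j * (A ^ j - B ^ j) := by ring
      _ = (A - B) * (p.coeff j * ∑ i ∈ Finset.range j, A ^ i * B ^ (j - 1 - i)) := by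
          rw [← h]; ring

/-- Reduction lemma: an expanding `C^{2ℓ+1}` germ exactly `ℓ`-tangent to the identity is
conjugate by a polynomial germ of diffeomorphism to a germ of the reduced form
`x ↦ x + x^{ℓ+1} + μx^{2ℓ+1} + o(x^{2ℓ+1})`. Derivatives at `0` are one-sided. -/
theorem stmt_7 (ℓ : ℕ) (hℓ : 1 ≤ ℓ) (ε : ℝ) (hε : 0 < ε) (f : ℝ → ℝ)
    (hf : ContDiffOn ℝ (2 * ℓ + 1 : ℕ) f (Set.Ico 0 ε)) (hf0 : f 0 = 0)
    (hf1 : iteratedDerivWithin 1 f (Set.Ico 0 ε) 0 = 1)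
    (hfj : ∀ j, 2 ≤ j → j ≤ ℓ → iteratedDerivWithin j f (Set.Ico 0 ε) 0 = 0)
    (hfl : 0 < iteratedDerivWithin (ℓ + 1) f (Set.Ico 0 ε) 0) :
    ∃ (p : Polynomial ℝ) (μ : ℝ),
      p.eval 0 = 0 ∧ 0 < p.derivative.eval 0 ∧
      Asymptotics.IsLittleO (nhdsWithin 0 (Set.Ioi 0))
        (fun x : ℝ => p.eval (f x)
          - (p.eval x + (p.eval x) ^ (ℓ + 1) + μ * (p.eval x) ^ (2 * ℓ + 1)))
        (fun x : ℝ => x ^ (2 * ℓ + 1)) := by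
  set s : Set ℝ := Set.Ico 0 ε with hs
  set n : ℕ := 2 * ℓ + 1 with hn
  set A : ℕ → ℝ := fun k => iteratedDerivWithin k f s 0 / (k.factorial : ℝ) with hA
  set T : Polynomial ℝ := ∑ k ∈ Finset.range (n + 1), C (A k) * X ^ k with hT
  have hTcoeff : ∀ j, j ≤ n → T.coeff j = A j := by
    intro j hj
    rw [hT, finset_sum_coeff]
    simp_rw [coeff_C_mul, coeff_X_pow]
    rw [Finset.sum_eq_single j (fun b _ hb => by rw [if_neg (fun h => hb h.symm), mul_zero])
      (fun h => absurd (Finset.mem_range.2 (by omega)) h)]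
    simp
  have hA0 : A 0 = 0 := by
    rw [hA]
    simp only [iteratedDerivWithin_zero, hf0, Nat.factorial_zero]
    norm_num
  have hA1 : A 1 = 1 := by
    rw [hA]; simp only [hf1]; norm_num
  set a : ℝ := A (ℓ + 1) with ha'
  have ha : 0 < a := by
    rw [ha', hA]
    exact div_pos hfl (by exact_mod_cast (ℓ+1).factorial_pos)
  set b : ℝ := a ^ ((ℓ : ℝ)⁻¹) with hbdef
  have hb : 0 < b := Real.rpow_pos_of_pos ha _
  have hba : b ^ ℓ = a := by
    rw [hbdef, ← Real.rpow_natCast (a ^ ((ℓ:ℝ)⁻¹)) ℓ, ← Real.rpow_mul ha.le]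
    rw [inv_mul_cancel₀ (Nat.cast_pos.2 hℓ).ne' , Real.rpow_one]
  have hTdvd : X ^ (ℓ + 2) ∣ T - X - C a * X ^ (ℓ + 1) := by
    rw [X_pow_dvd_iff]
    intro dd hdd
    have hddn : dd ≤ n := by omega
    rw [coeff_sub, coeff_sub, hTcoeff dd hddn, coeff_X, coeff_C_mul, coeff_X_pow]
    rcases Nat.eq_zero_or_pos dd with h0 | h0
    · subst h0; simp [hA0]
    rcases Nat.eq_or_lt_of_le h0 with h1 | h1
    · rw [← h1, hA1, if_pos rfl, if_neg (by omega : ¬ (1 = ℓ + 1))]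
      ring
    by_cases hdl : dd = ℓ + 1
    · subst hdl
      rw [if_neg (by omega), if_pos rfl, ← ha']
      ring
    · rw [if_neg (by omega), if_neg (fun h => hdl h)]
      simp [hA, hfj dd (by omega) (by omega)]
  obtain ⟨p, μ, hp0, hp1, hdvd⟩ := alg_main ℓ hℓ a b ha hb hba T hTdvd
  refine ⟨p, μ, by rw [← coeff_zero_eq_eval_zero]; exact hp0, ?_, ?_⟩
  · rw [← coeff_zero_eq_eval_zero, coeff_derivative, hp1]
    norm_num [hb]
  · -- analytic part
    have hTay := taylor_peano (2 * ℓ) ε hε f hf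
    have hTeval : ∀ x : ℝ, T.eval x = ∑ k ∈ Finset.range (n + 1), A k * x ^ k := by
      intro x; rw [hT]; simp [eval_finset_sum]
    have hE : (fun x => f x - T.eval x) =o[nhdsWithin 0 (Set.Ioi 0)] fun x => x ^ n := by
      have : (2 * ℓ) + 1 = n := by omega
      rw [← this]
      refine hTay.congr_left fun x => ?_
      rw [hTeval x]
    have hxn : Filter.Tendsto (fun x : ℝ => x ^ n) (nhdsWithin 0 (Set.Ioi 0)) (nhds 0) := by
      have := ((continuous_pow n).tendsto (0:ℝ)).mono_left
        (nhdsWithin_le_nhds (s := Set.Ioi (0:ℝ)))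
      simpa [zero_pow (by omega : n ≠ 0)] using this
    have hT0 : Filter.Tendsto (fun x : ℝ => T.eval x) (nhdsWithin 0 (Set.Ioi 0)) (nhds 0) := by
      have := ((T.continuous).tendsto (0:ℝ)).mono_left
        (nhdsWithin_le_nhds (s := Set.Ioi (0:ℝ)))
      have hT00 : T.eval 0 = 0 := by
        rw [← coeff_zero_eq_eval_zero, hTcoeff 0 (by omega), hA0]
      simpa [hT00] using this
    have hf0' : Filter.Tendsto f (nhdsWithin 0 (Set.Ioi 0)) (nhds 0) := by
      have h1 := (hE.isBigO.trans_tendsto hxn).add hT0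
      have : (fun x => f x - T.eval x + T.eval x) = f := by funext x; ring
      rwa [this, add_zero] at h1
    obtain ⟨Q, hQc, hQeq⟩ := eval_sub_factor p
    have hQb : Filter.Tendsto (fun x => Q (f x) (T.eval x)) (nhdsWithin 0 (Set.Ioi 0))
        (nhds (Q 0 0)) := by
      exact (hQc.tendsto (0, 0)).comp (hf0'.prodMk_nhds hT0)
    have hQO : (fun x => Q (f x) (T.eval x)) =O[nhdsWithin 0 (Set.Ioi 0)] fun _ => (1:ℝ) :=
      hQb.isBigO_one ℝ
    have h1 : (fun x => p.eval (f x) - p.eval (T.eval x)) =o[nhdsWithin 0 (Set.Ioi 0)]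
        fun x => x ^ n := by
      have h := hE.mul_isBigO hQO
      have e : (fun x => p.eval (f x) - p.eval (T.eval x))
          = fun x => (f x - T.eval x) * Q (f x) (T.eval x) := funext fun x => hQeq _ _
      rw [e]
      simpa using h
    obtain ⟨S, hSdvd⟩ := hdvd
    have h2 : (fun x => p.eval (T.eval x)
        - (p.eval x + (p.eval x) ^ (ℓ + 1) + μ * (p.eval x) ^ (2 * ℓ + 1)))
        =o[nhdsWithin 0 (Set.Ioi 0)] fun x => x ^ n := by
      have e : ∀ x : ℝ, p.eval (T.eval x)
          - (p.eval x + (p.eval x) ^ (ℓ + 1) + μ * (p.eval x) ^ (2 * ℓ + 1))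
          = x ^ (2 * ℓ + 2) * S.eval x := by
        intro x
        have h := congrArg (eval x) hSdvd
        simpa [eval_comp] using h
      simp only [e]
      have ht : Filter.Tendsto (fun x : ℝ => x * S.eval x) (nhdsWithin 0 (Set.Ioi 0))
          (nhds 0) := by
        have hc : Continuous fun x : ℝ => x * S.eval x := continuous_id.mul S.continuous
        have := (hc.tendsto 0).mono_left (nhdsWithin_le_nhds (s := Set.Ioi (0:ℝ)))
        simpa using this
      have ho : (fun x : ℝ => x * S.eval x) =o[nhdsWithin 0 (Set.Ioi 0)] fun _ => (1:ℝ) :=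
        (Asymptotics.isLittleO_one_iff ℝ).2 ht
      have h := (Asymptotics.isBigO_refl (fun x : ℝ => x ^ n)
        (nhdsWithin 0 (Set.Ioi 0))).mul_isLittleO ho
      refine h.congr (fun x => ?_) (fun x => ?_)
      · show x ^ n * (x * S.eval x) = x ^ (2 * ℓ + 2) * S.eval x
        rw [hn]; ring
      · show x ^ n * 1 = x ^ n
        rw [mul_one]
    have hsum := h1.add h2
    refine hsum.congr (fun x => by ring) (fun x => rfl)
end

section
/- (Necessity in Proposition on C¹ conjugacy of flat vector fields.) Let ε > 0, let X, Y : (0,ε) → ℝ be continuous, and let r ≥ 1, s ≥ 1 be real numbers and α, β nonzero real numbers of the same sign such that X(x)/x^r → α and Y(x)/x^s → β as x → 0⁺. Suppose h : [0,ε) → ℝ is of class C¹ with h(0) = 0, h'(0) ≠ 0, h((0,ε)) ⊆ (0,ε), and X(x)·h'(x) = Y(h(x)) for all x ∈ (0,ε) (h conjugates the vector field X to the vector field Y). Then r = s. Moreover, if r = s = 1, then additionally α = β. -/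
open Filter Set Topology

private lemma rpow_lim_pos_zero : ∀ b : ℝ, 0 < b →
    Filter.Tendsto (fun x : ℝ => x ^ b) (𝓝[>] (0:ℝ)) (𝓝 0) := by
  intro b hb
  have h1 := (Real.continuousAt_rpow_const 0 b (Or.inr hb.le)).tendsto
  rw [Real.zero_rpow hb.ne'] at h1
  exact h1.mono_left nhdsWithin_le_nhds

private lemma rpow_lim_zero {a L : ℝ} (hL : L ≠ 0)
    (h : Filter.Tendsto (fun x : ℝ => x ^ a) (𝓝[>] (0:ℝ)) (𝓝 L)) : a = 0 := by
  by_contra ha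
  rcases lt_or_gt_of_ne ha with hneg | hpos
  · have h2 : Filter.Tendsto (fun x : ℝ => x ^ (-a)) (𝓝[>] (0:ℝ)) (𝓝 L⁻¹) := by
      refine (h.inv₀ hL).congr' ?_
      filter_upwards [self_mem_nhdsWithin] with x hx
      rw [Real.rpow_neg (le_of_lt hx)]
    have := tendsto_nhds_unique h2 (rpow_lim_pos_zero _ (by linarith))
    exact hL (inv_eq_zero.mp this)
  · exact hL (tendsto_nhds_unique h (rpow_lim_pos_zero _ hpos))

/-- Necessity in the proposition on `C¹` conjugacy of flat vector fields: if `X ∼ αx^r` and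
`Y ∼ βx^s` at `0⁺` (with `α, β` nonzero of the same sign, `r, s ≥ 1`) are conjugated by a
germ of `C¹` diffeomorphism, then `r = s`; and if moreover `r = s = 1`, then `α = β`. -/
theorem stmt_12 (ε : ℝ) (hε : 0 < ε) (X Y : ℝ → ℝ)
    (hX : ContinuousOn X (Set.Ioo 0 ε)) (hY : ContinuousOn Y (Set.Ioo 0 ε))
    (r s : ℝ) (hr : 1 ≤ r) (hs : 1 ≤ s) (α β : ℝ) (hαβ : 0 < α * β)
    (hXa : Filter.Tendsto (fun x : ℝ => X x / x ^ r) (nhdsWithin 0 (Set.Ioi 0)) (nhds α))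
    (hYa : Filter.Tendsto (fun x : ℝ => Y x / x ^ s) (nhdsWithin 0 (Set.Ioi 0)) (nhds β))
    (h : ℝ → ℝ) (hh : ContDiffOn ℝ 1 h (Set.Ico 0 ε)) (hh0 : h 0 = 0)
    (hh' : derivWithin h (Set.Ico 0 ε) 0 ≠ 0)
    (hmaps : Set.MapsTo h (Set.Ioo 0 ε) (Set.Ioo 0 ε))
    (hconj : ∀ x ∈ Set.Ioo (0 : ℝ) ε, X x * derivWithin h (Set.Ico 0 ε) x = Y (h x)) :
    r = s ∧ (r = 1 ∧ s = 1 → α = β) := by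
  set c := derivWithin h (Set.Ico 0 ε) 0 with hcdef
  have h0mem : (0:ℝ) ∈ Set.Ico 0 ε := ⟨le_refl _, hε⟩
  have hud : UniqueDiffOn ℝ (Set.Ico 0 ε) := uniqueDiffOn_Ico 0 ε
  have hIoo : 𝓝[Set.Ioo (0:ℝ) ε] 0 = 𝓝[>] (0:ℝ) := nhdsWithin_Ioo_eq_nhdsGT hε
  have hIooMem : Set.Ioo (0:ℝ) ε ∈ 𝓝[>] (0:ℝ) := Ioo_mem_nhdsGT_of_mem ⟨le_rfl, hε⟩
  -- α β nonzero
  have hα : α ≠ 0 := by rintro rfl; simp at hαβ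
  have hβ : β ≠ 0 := by rintro rfl; simp at hαβ
  -- slope limit
  have hdiff : DifferentiableWithinAt ℝ h (Set.Ico 0 ε) 0 :=
    (hh.differentiableOn one_ne_zero) 0 h0mem
  have hder : HasDerivWithinAt h c (Set.Ico 0 ε) 0 := hdiff.hasDerivWithinAt
  have hslope : Filter.Tendsto (fun x => h x / x) (𝓝[>] (0:ℝ)) (𝓝 c) := by
    have h1 := hasDerivWithinAt_iff_tendsto_slope.mp hder
    have hset : Set.Ico (0:ℝ) ε \ {0} = Set.Ioo 0 ε := by
      ext x
      simp only [Set.mem_diff, Set.mem_Ico, Set.mem_singleton_iff, Set.mem_Ioo]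
      constructor
      · rintro ⟨⟨h1, h2⟩, h3⟩; exact ⟨lt_of_le_of_ne h1 (Ne.symm h3), h2⟩
      · rintro ⟨h1, h2⟩; exact ⟨⟨le_of_lt h1, h2⟩, ne_of_gt h1⟩
    rw [hset, hIoo] at h1
    refine h1.congr' ?_
    filter_upwards [self_mem_nhdsWithin] with x hx
    simp [slope, hh0, div_eq_inv_mul]
  have hcpos : 0 < c := by
    have hge : 0 ≤ c := by
      refine ge_of_tendsto hslope ?_
      filter_upwards [hIooMem] with x hx
      exact le_of_lt (div_pos (hmaps hx).1 hx.1)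
    exact lt_of_le_of_ne hge (Ne.symm hh')
  -- h tends to 0 within Ioi 0
  have hh0tend : Filter.Tendsto h (𝓝[>] (0:ℝ)) (𝓝[>] (0:ℝ)) := by
    have hid : Filter.Tendsto (fun x : ℝ => x) (𝓝[>] (0:ℝ)) (𝓝 0) :=
      (continuous_id.tendsto 0).mono_left nhdsWithin_le_nhds
    have h1 : Filter.Tendsto h (𝓝[>] (0:ℝ)) (𝓝 0) := by
      have h2 := hslope.mul hid
      rw [mul_zero] at h2
      refine h2.congr' ?_
      filter_upwards [self_mem_nhdsWithin] with x hx
      rw [div_mul_cancel₀ _ (ne_of_gt hx)]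
    refine tendsto_nhdsWithin_of_tendsto_nhds_of_eventually_within _ h1 ?_
    filter_upwards [hIooMem] with x hx
    exact (hmaps hx).1
  -- derivWithin is continuous at 0
  have hgc : Filter.Tendsto (fun x => derivWithin h (Set.Ico 0 ε) x) (𝓝[>] (0:ℝ)) (𝓝 c) := by
    have h1 : ContinuousWithinAt (derivWithin h (Set.Ico 0 ε)) (Set.Ico 0 ε) 0 :=
      (hh.continuousOn_derivWithin hud le_rfl) 0 h0mem
    refine h1.tendsto.mono_left ?_
    rw [← hIoo]
    exact nhdsWithin_mono 0 Set.Ioo_subset_Ico_self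
  -- limits of the pieces
  have hYt : Filter.Tendsto (fun x => Y (h x) / (h x) ^ s) (𝓝[>] (0:ℝ)) (𝓝 β) :=
    hYa.comp hh0tend
  have hratios : Filter.Tendsto (fun x => (h x / x) ^ s) (𝓝[>] (0:ℝ)) (𝓝 (c ^ s)) :=
    ((Real.continuousAt_rpow_const c s (Or.inl hcpos.ne')).tendsto).comp hslope
  have hcs : (0:ℝ) < c ^ s := Real.rpow_pos_of_pos hcpos s
  have hden_ne : β * c ^ s ≠ 0 := mul_ne_zero hβ hcs.ne'
  have hLne : α * c / (β * c ^ s) ≠ 0 :=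
    div_ne_zero (mul_ne_zero hα hcpos.ne') hden_ne
  have hF : Filter.Tendsto
      (fun x => (X x / x ^ r * derivWithin h (Set.Ico 0 ε) x) /
        (Y (h x) / (h x) ^ s * (h x / x) ^ s)) (𝓝[>] (0:ℝ)) (𝓝 (α * c / (β * c ^ s))) :=
    (hXa.mul hgc).div (hYt.mul hratios) hden_ne
  have heq : (fun x : ℝ => x ^ (s - r)) =ᶠ[𝓝[>] (0:ℝ)]
      (fun x => (X x / x ^ r * derivWithin h (Set.Ico 0 ε) x) /
        (Y (h x) / (h x) ^ s * (h x / x) ^ s)) := by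
    filter_upwards [hIooMem, hYt.eventually_ne hβ] with x hx hYx
    have hx0 : 0 < x := hx.1
    have hhx : 0 < h x := (hmaps hx).1
    have hYhx : Y (h x) ≠ 0 := by
      intro h0; apply hYx; rw [h0]; simp
    have hxr : (0:ℝ) < x ^ r := Real.rpow_pos_of_pos hx0 r
    have hxs : (0:ℝ) < x ^ s := Real.rpow_pos_of_pos hx0 s
    have hhxs : (0:ℝ) < (h x) ^ s := Real.rpow_pos_of_pos hhx s
    have hconj' := hconj x hx
    rw [Real.rpow_sub hx0, Real.div_rpow hhx.le hx0.le]
    field_simp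
    linear_combination (-1) * hconj'
  have hF' : Filter.Tendsto (fun x : ℝ => x ^ (s - r)) (𝓝[>] (0:ℝ))
      (𝓝 (α * c / (β * c ^ s))) := hF.congr' heq.symm
  have hsr : s - r = 0 := rpow_lim_zero hLne hF'
  have hrs : r = s := by linarith
  refine ⟨hrs, ?_⟩
  rintro ⟨hr1, hs1⟩
  have hconst : Filter.Tendsto (fun x : ℝ => x ^ (s - r)) (𝓝[>] (0:ℝ)) (𝓝 1) := by
    simp only [hsr, Real.rpow_zero]
    exact tendsto_const_nhds
  have hL1 : α * c / (β * c ^ s) = 1 := tendsto_nhds_unique hF' hconst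
  rw [hs1, Real.rpow_one] at hL1
  rw [div_eq_one_iff_eq (by rw [hs1, Real.rpow_one] at hden_ne; exact hden_ne)] at hL1
  have := mul_right_cancel₀ hcpos.ne' hL1
  exact this
end

section
/- (Sufficiency in Proposition on C¹ conjugacy of flat vector fields.) Let ε > 0, let r > 1 be a real number, and let α, β be nonzero real numbers of the same sign. Let X, Y : [0,ε) → ℝ be continuous with X(x)/x^r → α and Y(x)/x^r → β as x → 0⁺. Then there exist δ > 0 and a strictly increasing map h : [0,δ) → ℝ of class C¹ (including at 0, with one-sided derivative) with h(0) = 0, h'(0) > 0, h((0,δ)) ⊆ (0,ε), and X(x)·h'(x) = Y(h(x)) for all x ∈ [0,δ). (Two continuous vector fields, both contracting or both expanding, that are equivalent to nonzero multiples of x^r at 0 with r > 1, are conjugate by a germ of C¹ diffeomorphism.) -/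
open Set Filter MeasureTheory intervalIntegral Real
open scoped Topology

lemma rpow_tendsto_zero {p : ℝ} (hp : 0 < p) :
    Tendsto (fun x : ℝ => x ^ p) (𝓝[>] 0) (𝓝 0) := by
  have := (Real.continuousAt_rpow_const 0 p (Or.inr hp.le)).tendsto
  rw [Real.zero_rpow hp.ne'] at this
  exact this.mono_left nhdsWithin_le_nhds

lemma inv_rpow_tendsto_atTop {p : ℝ} (hp : 0 < p) :
    Tendsto (fun x : ℝ => x ^ (-p)) (𝓝[>] 0) atTop := by
  have h1 : Tendsto (fun x : ℝ => (x⁻¹) ^ p) (𝓝[>] 0) atTop :=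
    (tendsto_rpow_atTop hp).comp tendsto_inv_nhdsGT_zero
  refine h1.congr' ?_
  filter_upwards [self_mem_nhdsWithin] with x hx
  rw [Real.inv_rpow (le_of_lt hx), ← Real.rpow_neg (le_of_lt hx)]

lemma asymp_key {r a α : ℝ} (hr : 1 < r) (ha : 0 < a) (hα : 0 < α) {f : ℝ → ℝ}
    (hfc : ContinuousOn f (Ioc 0 a))
    (hfpos : ∀ t ∈ Ioc 0 a, 0 < f t)
    (hf : Tendsto (fun x => f x / x ^ r) (𝓝[>] 0) (𝓝 α)) :
    Tendsto (fun x => x ^ (r-1) * ∫ t in x..a, (f t)⁻¹) (𝓝[>] 0)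
      (𝓝 (α⁻¹ / (r-1))) := by
  have hr1 : (0:ℝ) < r - 1 := by linarith
  have hIcc : ∀ {x y : ℝ}, 0 < x → y ≤ a → Icc x y ⊆ Ioc 0 a := by
    intro x y hx hy t ht; exact ⟨lt_of_lt_of_le hx ht.1, le_trans ht.2 hy⟩
  have hint : ∀ {x y : ℝ}, 0 < x → x ≤ y → y ≤ a →
      IntervalIntegrable (fun t => (f t)⁻¹) volume x y := by
    intro x y hx hxy hy
    apply ContinuousOn.intervalIntegrable
    rw [uIcc_of_le hxy]
    refine ContinuousOn.inv₀ (hfc.mono (hIcc hx hy)) ?_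
    intro t ht; exact (hfpos t (hIcc hx hy ht)).ne'
  have hintr : ∀ {x y : ℝ}, 0 < x → x ≤ y →
      IntervalIntegrable (fun t => t ^ (-r)) volume x y := by
    intro x y hx hxy
    apply ContinuousOn.intervalIntegrable
    rw [uIcc_of_le hxy]
    intro t ht
    exact (Real.continuousAt_rpow_const t (-r)
      (Or.inl (ne_of_gt (lt_of_lt_of_le hx ht.1)))).continuousWithinAt
  rw [Metric.tendsto_nhdsWithin_nhds] at hf
  rw [Metric.tendsto_nhds]
  intro ε hε
  -- choose η from continuity of s ↦ s⁻¹/(r-1) at α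
  have hcont : ContinuousAt (fun s : ℝ => s⁻¹ / (r-1)) α :=
    (continuousAt_inv₀ hα.ne').div_const _
  rw [Metric.continuousAt_iff] at hcont
  obtain ⟨η, hη, hηs⟩ := hcont (ε/2) (by linarith)
  set m := max (α - η/2) (α/2) with hm_def
  set M := α + η/2 with hM_def
  have hm0 : 0 < m := lt_of_lt_of_le (by linarith) (le_max_right _ _)
  have hmα : m < α := by
    apply max_lt <;> linarith
  have hMα : α < M := by simp [hM_def]; linarith
  have hmd : dist m α < η := by
    rw [Real.dist_eq, abs_lt]
    constructor
    · have : α - η/2 ≤ m := le_max_left _ _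
      linarith
    · linarith
  have hMd : dist M α < η := by
    rw [Real.dist_eq, abs_lt]; constructor <;> simp [hM_def] <;> linarith
  have hmb := hηs hmd
  have hMb := hηs hMd
  rw [Real.dist_eq, abs_lt] at hmb hMb
  -- find b with bounds on (0, b]
  obtain ⟨u, hu, hub⟩ := hf (min (α - m) (M - α)) (by
    apply lt_min <;> linarith)
  obtain ⟨b0, hb0, hb0u⟩ : ∃ b0 > 0, b0 ≤ a ∧ b0 < u := by
    refine ⟨min a (u/2), lt_min ha (by linarith), min_le_left _ _,
      lt_of_le_of_lt (min_le_right _ _) (by linarith)⟩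
  obtain ⟨hb0a, hb0u⟩ := hb0u
  have hbound : ∀ t ∈ Ioc 0 b0, m * t ^ r ≤ f t ∧ f t ≤ M * t ^ r := by
    intro t ht
    have htr : (0:ℝ) < t ^ r := Real.rpow_pos_of_pos ht.1 _
    have hdist : dist t 0 < u := by
      rw [Real.dist_eq, sub_zero, abs_of_pos ht.1]
      exact lt_of_le_of_lt ht.2 hb0u
    have := hub ht.1 hdist
    rw [Real.dist_eq, abs_lt] at this
    obtain ⟨h1, h2⟩ := this
    rw [neg_lt, lt_min_iff] at h1
    rw [lt_min_iff] at h2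
    constructor
    · rw [← le_div_iff₀ htr]
      have := h1.1
      linarith
    · rw [← div_le_iff₀ htr]
      have := h2.2
      linarith
  -- the constant C
  set C := ∫ t in b0..a, (f t)⁻¹ with hC_def
  have hC0 : 0 ≤ C := intervalIntegral.integral_nonneg hb0a
    (fun t ht => inv_nonneg.2 (hfpos t (hIcc hb0 le_rfl ht)).le)
  have hCev : ∀ᶠ x in 𝓝[>] 0, C * x ^ (r-1) < ε/2 := by
    have h2 : Tendsto (fun x : ℝ => C * x ^ (r-1)) (𝓝[>] 0) (𝓝 (C * 0)) :=
      (rpow_tendsto_zero hr1).const_mul C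
    rw [mul_zero] at h2
    exact h2.eventually_lt_const (by linarith)
  have hMev : ∀ᶠ x in 𝓝[>] 0, M⁻¹ * (x ^ (r-1) * b0 ^ (1-r)) / (r-1) < ε/2 := by
    have h2 : Tendsto (fun x : ℝ => M⁻¹ * (x ^ (r-1) * b0 ^ (1-r)) / (r-1)) (𝓝[>] 0)
        (𝓝 (M⁻¹ * (0 * b0 ^ (1-r)) / (r-1))) :=
      (((rpow_tendsto_zero hr1).mul_const _).const_mul _).div_const _
    rw [zero_mul, mul_zero, zero_div] at h2
    exact h2.eventually_lt_const (by linarith)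
  filter_upwards [Ioo_mem_nhdsGT_of_mem (⟨le_refl 0, hb0⟩ : (0:ℝ) ∈ Ico 0 b0),
    hCev, hMev] with x hx hxC hxM
  obtain ⟨hx0, hxb⟩ := hx
  have hxr : (0:ℝ) < x ^ (r-1) := Real.rpow_pos_of_pos hx0 _
  -- split the integral
  have hsplit : (∫ t in x..a, (f t)⁻¹) = (∫ t in x..b0, (f t)⁻¹) + C :=
    (integral_add_adjacent_intervals (hint hx0 hxb.le hb0a) (hint hb0 hb0a le_rfl)).symm
  -- value of the power integral
  have hJ : (∫ t in x..b0, t ^ (-r)) = (b0 ^ (1-r) - x ^ (1-r)) / (1-r) := by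
    rw [integral_rpow (Or.inr ⟨by intro hcon; linarith, by
      rw [uIcc_of_le hxb.le]
      intro hcon
      exact absurd hcon.1 (not_le.2 hx0)⟩)]
    rw [show -r + 1 = 1 - r by ring]
  -- pointwise bounds on the integrand
  have hup : (∫ t in x..b0, (f t)⁻¹) ≤ m⁻¹ * ∫ t in x..b0, t ^ (-r) := by
    rw [← intervalIntegral.integral_const_mul]
    apply intervalIntegral.integral_mono_on hxb.le (hint hx0 hxb.le hb0a)
      ((hintr hx0 hxb.le).const_mul _)
    intro t ht
    have ht' : t ∈ Ioc 0 b0 := ⟨lt_of_lt_of_le hx0 ht.1, ht.2⟩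
    have hb := (hbound t ht').1
    have htr : (0:ℝ) < t ^ r := Real.rpow_pos_of_pos ht'.1 _
    have hmt : 0 < m * t ^ r := mul_pos hm0 htr
    calc (f t)⁻¹ ≤ (m * t ^ r)⁻¹ := by
          apply inv_anti₀ hmt hb
      _ = m⁻¹ * t ^ (-r) := by rw [mul_inv, Real.rpow_neg ht'.1.le]
  have hlo : M⁻¹ * (∫ t in x..b0, t ^ (-r)) ≤ ∫ t in x..b0, (f t)⁻¹ := by
    rw [← intervalIntegral.integral_const_mul]
    apply intervalIntegral.integral_mono_on hxb.le ((hintr hx0 hxb.le).const_mul _)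
      (hint hx0 hxb.le hb0a)
    intro t ht
    have ht' : t ∈ Ioc 0 b0 := ⟨lt_of_lt_of_le hx0 ht.1, ht.2⟩
    have hb := (hbound t ht').2
    have htr : (0:ℝ) < t ^ r := Real.rpow_pos_of_pos ht'.1 _
    have hft : 0 < f t := hfpos t (hIcc hx0 hb0a ht)
    calc M⁻¹ * t ^ (-r) = (M * t ^ r)⁻¹ := by rw [mul_inv, Real.rpow_neg ht'.1.le]
      _ ≤ (f t)⁻¹ := inv_anti₀ hft hb
  -- the algebraic identity
  have hx1 : x ^ (r-1) * x ^ (1-r) = 1 := by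
    rw [← Real.rpow_add hx0]
    norm_num
  set s := x ^ (r-1) * b0 ^ (1-r) with hs_def
  have hs0 : 0 ≤ s := mul_nonneg hxr.le (Real.rpow_nonneg hb0.le _)
  have hs1 : s ≤ 1 := by
    have h1 : x ^ (r-1) ≤ b0 ^ (r-1) := Real.rpow_le_rpow hx0.le hxb.le hr1.le
    have h2 : b0 ^ (r-1) * b0 ^ (1-r) = 1 := by
      rw [← Real.rpow_add hb0]; norm_num
    calc s ≤ b0 ^ (r-1) * b0 ^ (1-r) :=
          mul_le_mul_of_nonneg_right h1 (Real.rpow_nonneg hb0.le _)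
      _ = 1 := h2
  have hxJ : x ^ (r-1) * ((b0 ^ (1-r) - x ^ (1-r)) / (1-r)) = (1 - s) / (r-1) := by
    have h7 : x ^ (r-1) * ((b0 ^ (1-r) - x ^ (1-r)) / (1-r))
        = (x ^ (r-1) * b0 ^ (1-r) - x ^ (r-1) * x ^ (1-r)) / (1-r) := by ring
    rw [h7, hx1,
      show x ^ (r-1) * b0 ^ (1-r) - 1 = -(1 - s) by rw [hs_def]; ring,
      show (1:ℝ) - r = -(r-1) by ring, neg_div_neg_eq]
  -- combine
  have key_up : x ^ (r-1) * ∫ t in x..a, (f t)⁻¹ ≤ m⁻¹ * ((1-s)/(r-1)) + C * x ^ (r-1) := by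
    rw [hsplit, mul_add]
    have : x ^ (r-1) * ∫ t in x..b0, (f t)⁻¹ ≤ x ^ (r-1) * (m⁻¹ * ∫ t in x..b0, t ^ (-r)) :=
      mul_le_mul_of_nonneg_left hup hxr.le
    rw [hJ] at this
    calc x ^ (r-1) * (∫ t in x..b0, (f t)⁻¹) + x ^ (r-1) * C
        ≤ x ^ (r-1) * (m⁻¹ * ((b0 ^ (1-r) - x ^ (1-r)) / (1-r))) + x ^ (r-1) * C := by
          linarith
      _ = m⁻¹ * ((1-s)/(r-1)) + C * x ^ (r-1) := by
          rw [show x ^ (r-1) * (m⁻¹ * ((b0 ^ (1-r) - x ^ (1-r)) / (1-r)))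
            = m⁻¹ * (x ^ (r-1) * ((b0 ^ (1-r) - x ^ (1-r)) / (1-r))) by ring, hxJ]
          ring
  have key_lo : M⁻¹ * ((1-s)/(r-1)) ≤ x ^ (r-1) * ∫ t in x..a, (f t)⁻¹ := by
    rw [hsplit, mul_add]
    have h3 : x ^ (r-1) * (M⁻¹ * ∫ t in x..b0, t ^ (-r)) ≤ x ^ (r-1) * ∫ t in x..b0, (f t)⁻¹ :=
      mul_le_mul_of_nonneg_left hlo hxr.le
    rw [hJ] at h3
    have h4 : x ^ (r-1) * (M⁻¹ * ((b0 ^ (1-r) - x ^ (1-r)) / (1-r))) = M⁻¹ * ((1-s)/(r-1)) := by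
      rw [show x ^ (r-1) * (M⁻¹ * ((b0 ^ (1-r) - x ^ (1-r)) / (1-r)))
        = M⁻¹ * (x ^ (r-1) * ((b0 ^ (1-r) - x ^ (1-r)) / (1-r))) by ring, hxJ]
    have h5 : 0 ≤ x ^ (r-1) * C := mul_nonneg hxr.le hC0
    linarith
  -- final bounds
  have hminv : 0 < m⁻¹ := inv_pos.2 hm0
  have hMinv : 0 < M⁻¹ := inv_pos.2 (by linarith)
  have hup2 : m⁻¹ * ((1-s)/(r-1)) ≤ m⁻¹ / (r-1) := by
    calc m⁻¹ * ((1-s)/(r-1)) ≤ m⁻¹ * (1/(r-1)) := by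
          apply mul_le_mul_of_nonneg_left _ hminv.le
          gcongr
          linarith
      _ = m⁻¹/(r-1) := by ring
  have hlo2 : M⁻¹ / (r-1) - M⁻¹ * (s/(r-1)) ≤ M⁻¹ * ((1-s)/(r-1)) := by
    rw [show (1-s)/(r-1) = 1/(r-1) - s/(r-1) by ring]
    rw [mul_sub]
    apply le_of_eq
    ring
  rw [Real.dist_eq, abs_lt]
  have hxM' : M⁻¹ * (s / (r-1)) < ε/2 := by
    rw [hs_def]
    calc M⁻¹ * (x ^ (r-1) * b0 ^ (1-r) / (r-1)) = M⁻¹ * (x ^ (r-1) * b0 ^ (1-r)) / (r-1) := by ring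
      _ < ε/2 := hxM
  constructor
  · -- lower
    have := le_trans (le_trans (by linarith : M⁻¹/(r-1) - M⁻¹ * (s/(r-1)) ≤ M⁻¹/(r-1) - M⁻¹*(s/(r-1))) hlo2) key_lo
    linarith [hMb.1]
  · -- upper
    have hCx : C * x ^ (r-1) < ε/2 := hxC
    linarith [key_up, hup2, hmb.2]

section prim
variable {ε a r α : ℝ} {f : ℝ → ℝ}

lemma int_inv (hpos : ∀ t ∈ Ioc 0 a, 0 < f t) (hcont : ContinuousOn f (Ico 0 ε))
    (haε : a < ε) {x y : ℝ} (hx : 0 < x) (hxy : x ≤ y) (hy : y ≤ a) :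
    IntervalIntegrable (fun t => (f t)⁻¹) volume x y := by
  apply ContinuousOn.intervalIntegrable
  rw [uIcc_of_le hxy]
  have hsub : Icc x y ⊆ Ioc 0 a := fun t ht => ⟨lt_of_lt_of_le hx ht.1, le_trans ht.2 hy⟩
  have hsub2 : Ioc 0 a ⊆ Ico 0 ε := fun t ht => ⟨ht.1.le, lt_of_le_of_lt ht.2 haε⟩
  refine ContinuousOn.inv₀ ((hcont.mono hsub2).mono hsub) ?_
  intro t ht; exact (hpos t (hsub ht)).ne'

lemma prim_nonneg (hpos : ∀ t ∈ Ioc 0 a, 0 < f t) {x : ℝ} (hx : x ∈ Ioc 0 a) :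
    0 ≤ ∫ t in x..a, (f t)⁻¹ := by
  apply intervalIntegral.integral_nonneg hx.2
  intro t ht
  exact (inv_nonneg.2 (hpos t ⟨lt_of_lt_of_le hx.1 ht.1, ht.2⟩).le)

lemma prim_strictAnti (hpos : ∀ t ∈ Ioc 0 a, 0 < f t) (hcont : ContinuousOn f (Ico 0 ε))
    (haε : a < ε) :
    StrictAntiOn (fun x => ∫ t in x..a, (f t)⁻¹) (Ioc 0 a) := by
  intro x hx y hy hxy
  have hsplit : (∫ t in x..a, (f t)⁻¹) = (∫ t in x..y, (f t)⁻¹) + ∫ t in y..a, (f t)⁻¹ :=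
    (integral_add_adjacent_intervals (int_inv hpos hcont haε hx.1 hxy.le hy.2)
      (int_inv hpos hcont haε hy.1 hy.2 le_rfl)).symm
  have hpos2 : 0 < ∫ t in x..y, (f t)⁻¹ := by
    apply intervalIntegral.intervalIntegral_pos_of_pos_on
      (int_inv hpos hcont haε hx.1 hxy.le hy.2)
    · intro t ht
      exact inv_pos.2 (hpos t ⟨lt_trans hx.1 ht.1, le_trans ht.2.le hy.2⟩)
    · exact hxy
  simp only at hsplit ⊢
  linarith

lemma prim_hasDerivAt (hpos : ∀ t ∈ Ioc 0 a, 0 < f t) (hcont : ContinuousOn f (Ico 0 ε))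
    (haε : a < ε) {x : ℝ} (hx : x ∈ Ioo 0 a) :
    HasDerivAt (fun x => ∫ t in x..a, (f t)⁻¹) (-(f x)⁻¹) x := by
  have hxε : x < ε := lt_trans hx.2 haε
  have hnhds : Ico 0 ε ∈ 𝓝 x :=
    mem_of_superset (isOpen_Ioo.mem_nhds ⟨hx.1, hxε⟩) Ioo_subset_Ico_self
  have hca : ContinuousAt (fun t => (f t)⁻¹) x :=
    (hcont.continuousAt hnhds).inv₀ (hpos x ⟨hx.1, hx.2.le⟩).ne'
  have hio : ContinuousOn (fun t => (f t)⁻¹) (Ioo 0 a) := by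
    have hsub2 : Ioo 0 a ⊆ Ico 0 ε := fun t ht => ⟨ht.1.le, lt_trans ht.2 haε⟩
    refine ContinuousOn.inv₀ (hcont.mono hsub2) ?_
    intro t ht; exact (hpos t ⟨ht.1, ht.2.le⟩).ne'
  exact intervalIntegral.integral_hasDerivAt_left
    (int_inv hpos hcont haε hx.1 hx.2.le le_rfl)
    (hio.stronglyMeasurableAtFilter isOpen_Ioo x hx) hca

lemma prim_tendsto_atTop (hr : 1 < r) (hα : 0 < α) (ha : 0 < a)
    (hasymp : Tendsto (fun x => x ^ (r-1) * ∫ t in x..a, (f t)⁻¹) (𝓝[>] 0)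
      (𝓝 (α⁻¹ / (r-1)))) :
    Tendsto (fun x => ∫ t in x..a, (f t)⁻¹) (𝓝[>] 0) atTop := by
  have hA : 0 < α⁻¹ / (r-1) := div_pos (inv_pos.2 hα) (by linarith)
  have h1 : Tendsto (fun x : ℝ => x ^ (-(r-1))) (𝓝[>] 0) atTop := by
    have h2 : Tendsto (fun x : ℝ => (x⁻¹) ^ (r-1)) (𝓝[>] 0) atTop :=
      (tendsto_rpow_atTop (by linarith)).comp tendsto_inv_nhdsGT_zero
    refine h2.congr' ?_
    filter_upwards [self_mem_nhdsWithin] with x hx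
    rw [Real.inv_rpow (le_of_lt hx), ← Real.rpow_neg (le_of_lt hx)]
  have h3 := hasymp.pos_mul_atTop hA h1
  refine h3.congr' ?_
  filter_upwards [self_mem_nhdsWithin] with x hx
  have : x ^ (r-1) * x ^ (-(r-1)) = 1 := by
    rw [← Real.rpow_add hx]; norm_num
  calc x ^ (r-1) * (∫ t in x..a, (f t)⁻¹) * x ^ (-(r-1))
      = (x ^ (r-1) * x ^ (-(r-1))) * ∫ t in x..a, (f t)⁻¹ := by ring
    _ = ∫ t in x..a, (f t)⁻¹ := by rw [this, one_mul]

lemma prim_surj (hpos : ∀ t ∈ Ioc 0 a, 0 < f t) (hcont : ContinuousOn f (Ico 0 ε))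
    (ha : 0 < a) (haε : a < ε)
    (htop : Tendsto (fun x => ∫ t in x..a, (f t)⁻¹) (𝓝[>] 0) atTop)
    {u : ℝ} (hu : 0 ≤ u) : ∃ y ∈ Ioc 0 a, (∫ t in y..a, (f t)⁻¹) = u := by
  -- find y0 with large value
  have hev : ∀ᶠ x in 𝓝[>] (0:ℝ), ((∫ t in x..a, (f t)⁻¹) ≥ u ∧ x ∈ Ioo 0 a) := by
    refine (htop.eventually_ge_atTop u).and ?_
    exact Ioo_mem_nhdsGT_of_mem ⟨le_refl 0, ha⟩
  obtain ⟨y0, hy0u, hy0⟩ := hev.exists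
  have hcontIcc : ContinuousOn (fun t => (f t)⁻¹) (Icc y0 a) := by
    have hsub : Icc y0 a ⊆ Ioc 0 a := fun t ht => ⟨lt_of_lt_of_le hy0.1 ht.1, ht.2⟩
    have hsub2 : Ioc 0 a ⊆ Ico 0 ε := fun t ht => ⟨ht.1.le, lt_of_le_of_lt ht.2 haε⟩
    refine ContinuousOn.inv₀ ((hcont.mono hsub2).mono hsub) ?_
    intro t ht; exact (hpos t (hsub ht)).ne'
  have hInt : IntegrableOn (fun t => (f t)⁻¹) (uIcc y0 a) volume := by
    rw [uIcc_of_le hy0.2.le]; exact hcontIcc.integrableOn_Icc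
  have hPcont := intervalIntegral.continuousOn_primitive_interval_left hInt
  rw [uIcc_of_le hy0.2.le] at hPcont
  have hPa : (∫ t in a..a, (f t)⁻¹) = 0 := intervalIntegral.integral_same
  have hsub := intermediate_value_Icc' hy0.2.le hPcont
  have hmem : u ∈ Icc ((∫ t in a..a, (f t)⁻¹)) ((∫ t in y0..a, (f t)⁻¹)) := by
    rw [hPa]; exact ⟨hu, hy0u⟩
  obtain ⟨y, hy, hyu⟩ := hsub hmem
  exact ⟨y, ⟨lt_of_lt_of_le hy0.1 hy.1, hy.2⟩, hyu⟩

end prim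

lemma aux_pos (ε : ℝ) (hε : 0 < ε) (r : ℝ) (hr : 1 < r) (α β : ℝ) (hα : 0 < α) (hβ : 0 < β)
    (X Y : ℝ → ℝ)
    (hX : ContinuousOn X (Set.Ico 0 ε)) (hY : ContinuousOn Y (Set.Ico 0 ε))
    (hXa : Filter.Tendsto (fun x : ℝ => X x / x ^ r) (nhdsWithin 0 (Set.Ioi 0)) (nhds α))
    (hYa : Filter.Tendsto (fun x : ℝ => Y x / x ^ r) (nhdsWithin 0 (Set.Ioi 0)) (nhds β)) :
    ∃ (δ : ℝ), 0 < δ ∧ ∃ h : ℝ → ℝ,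
      StrictMonoOn h (Set.Ico 0 δ) ∧
      ContDiffOn ℝ 1 h (Set.Ico 0 δ) ∧
      h 0 = 0 ∧ 0 < derivWithin h (Set.Ico 0 δ) 0 ∧
      Set.MapsTo h (Set.Ioo 0 δ) (Set.Ioo 0 ε) ∧
      ∀ x ∈ Set.Ico (0 : ℝ) δ, X x * derivWithin h (Set.Ico 0 δ) x = Y (h x) := by
  have hr1 : (0:ℝ) < r - 1 := by linarith
  -- positivity neighborhood
  have hposev : ∀ᶠ t in 𝓝[>] (0:ℝ), 0 < X t ∧ 0 < Y t := by
    have e1 := hXa.eventually (eventually_gt_nhds (show (0:ℝ) < α by linarith))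
    have e2 := hYa.eventually (eventually_gt_nhds (show (0:ℝ) < β by linarith))
    filter_upwards [e1, e2, self_mem_nhdsWithin] with t h1 h2 ht
    have htr : (0:ℝ) < t ^ r := Real.rpow_pos_of_pos ht _
    constructor
    · have := mul_pos h1 htr; rwa [div_mul_cancel₀] at this; exact htr.ne'
    · have := mul_pos h2 htr; rwa [div_mul_cancel₀] at this; exact htr.ne'
  obtain ⟨u, hu, huP⟩ := mem_nhdsGT_iff_exists_Ioc_subset.1 hposev
  set a := min u (ε/2) with ha_def
  have ha : 0 < a := lt_min hu (by linarith)
  have haε : a < ε := lt_of_le_of_lt (min_le_right _ _) (by linarith)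
  have hXpos : ∀ t ∈ Set.Ioc 0 a, 0 < X t := by
    intro t ht
    exact (huP ⟨ht.1, le_trans ht.2 (min_le_left _ _)⟩).1
  have hYpos : ∀ t ∈ Set.Ioc 0 a, 0 < Y t := by
    intro t ht
    exact (huP ⟨ht.1, le_trans ht.2 (min_le_left _ _)⟩).2
  have hsub2 : Set.Ioc 0 a ⊆ Set.Ico 0 ε := fun t ht => ⟨ht.1.le, lt_of_le_of_lt ht.2 haε⟩
  set F := fun x : ℝ => ∫ t in x..a, (X t)⁻¹ with hF_def
  set G := fun y : ℝ => ∫ t in y..a, (Y t)⁻¹ with hG_def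
  have KX : Tendsto (fun x => x ^ (r-1) * F x) (𝓝[>] 0) (𝓝 (α⁻¹ / (r-1))) :=
    asymp_key hr ha hα (hX.mono hsub2) hXpos hXa
  have KY : Tendsto (fun y => y ^ (r-1) * G y) (𝓝[>] 0) (𝓝 (β⁻¹ / (r-1))) :=
    asymp_key hr ha hβ (hY.mono hsub2) hYpos hYa
  have Ftop : Tendsto F (𝓝[>] 0) atTop := prim_tendsto_atTop hr hα ha KX
  have Gtop : Tendsto G (𝓝[>] 0) atTop := prim_tendsto_atTop hr hβ ha KY
  have hGanti : StrictAntiOn G (Set.Ioc 0 a) := prim_strictAnti hYpos hY haε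
  have hFanti : StrictAntiOn F (Set.Ioc 0 a) := prim_strictAnti hXpos hX haε
  have hGa : G a = 0 := intervalIntegral.integral_same
  have hFa : F a = 0 := intervalIntegral.integral_same
  have hGsurj : ∀ u : ℝ, 0 ≤ u → ∃ y ∈ Set.Ioc 0 a, G y = u :=
    fun u hu => prim_surj hYpos hY ha haε Gtop hu
  -- the inverse of G
  have hex : ∀ u : ℝ, ∃ y : ℝ, 0 ≤ u → y ∈ Set.Ioc 0 a ∧ G y = u := by
    intro u
    by_cases hu : 0 ≤ u
    · obtain ⟨y, hy, hyu⟩ := hGsurj u hu; exact ⟨y, fun _ => ⟨hy, hyu⟩⟩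
    · exact ⟨a, fun hc => absurd hc hu⟩
  choose ginv hginv using hex
  have ginv_mem : ∀ {u : ℝ}, 0 ≤ u → ginv u ∈ Set.Ioc 0 a := fun hu => (hginv _ hu).1
  have G_ginv : ∀ {u : ℝ}, 0 ≤ u → G (ginv u) = u := fun hu => (hginv _ hu).2
  have G_nonneg : ∀ y ∈ Set.Ioc 0 a, 0 ≤ G y := fun y hy => prim_nonneg hYpos hy
  have ginv_G : ∀ y ∈ Set.Ioc 0 a, ginv (G y) = y := by
    intro y hy
    have h0 := G_nonneg y hy
    exact hGanti.injOn (ginv_mem h0) hy (G_ginv h0)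
  have ginv_anti : ∀ {u v : ℝ}, 0 ≤ u → u < v → ginv v < ginv u := by
    intro u v hu huv
    have hv : 0 ≤ v := le_of_lt (lt_of_le_of_lt hu huv)
    rcases lt_trichotomy (ginv v) (ginv u) with hlt|heq|hgt
    · exact hlt
    · exfalso
      have := congrArg G heq
      rw [G_ginv hv, G_ginv hu] at this
      linarith
    · exfalso
      have := hGanti (ginv_mem hu) (ginv_mem hv) hgt
      rw [G_ginv hu, G_ginv hv] at this
      linarith
  have hGpos : ∀ y ∈ Set.Ioo 0 a, 0 < G y := by
    intro y hy
    have := hGanti ⟨hy.1, hy.2.le⟩ ⟨ha, le_rfl⟩ hy.2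
    rwa [hGa] at this
  have ginv_lt_a : ∀ {u : ℝ}, 0 < u → ginv u < a := by
    intro u hu
    rcases lt_or_eq_of_le (ginv_mem hu.le).2 with hlt|heqa
    · exact hlt
    · exfalso
      have := G_ginv hu.le
      rw [heqa, hGa] at this
      linarith
  -- continuity of ginv at positive points
  have ginv_cont : ∀ {u : ℝ}, 0 < u → ContinuousAt ginv u := by
    intro u hu
    have hk : StrictMonoOn (fun v => ginv (-v)) (Set.Iio (0:ℝ)) := by
      intro v1 h1 v2 h2 h12
      simp only [Set.mem_Iio] at h1 h2
      exact ginv_anti (by linarith) (by linarith)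
    have himg : (fun v => ginv (-v)) '' (Set.Iio 0) ∈ 𝓝 ((fun v => ginv (-v)) (-u)) := by
      have hsup : Set.Ioo 0 a ⊆ (fun v => ginv (-v)) '' (Set.Iio 0) := by
        intro y hy
        refine ⟨-(G y), ?_, ?_⟩
        · simp only [Set.mem_Iio, neg_lt, neg_zero]
          exact hGpos y hy
        · simp only [neg_neg]
          exact ginv_G y ⟨hy.1, hy.2.le⟩
      refine mem_of_superset (isOpen_Ioo.mem_nhds ?_) hsup
      simp only [neg_neg]
      exact ⟨(ginv_mem hu.le).1, ginv_lt_a hu⟩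
    have hkc : ContinuousAt (fun v => ginv (-v)) (-u) :=
      hk.continuousAt_of_image_mem_nhds (Iio_mem_nhds (by linarith)) himg
    have hfin : ContinuousAt ((fun v => ginv (-v)) ∘ (fun w : ℝ => -w)) u := by
      apply hkc.comp
      exact (continuous_neg.continuousAt)
    have hgeq : ((fun v => ginv (-v)) ∘ fun w : ℝ => -w) = ginv := by
      funext w; simp
    rwa [hgeq] at hfin
  -- define h and c
  set c : ℝ := (α/β) ^ (r-1)⁻¹ with hc_def
  have hcpos : 0 < c := Real.rpow_pos_of_pos (div_pos hα hβ) _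
  set h : ℝ → ℝ := fun x => if 0 < x then ginv (F x) else 0 with hh_def
  have h0 : h 0 = 0 := by simp [hh_def]
  have hF_nonneg : ∀ x ∈ Set.Ioc 0 a, 0 ≤ F x := fun x hx => prim_nonneg hXpos hx
  have hFpos : ∀ x ∈ Set.Ioo 0 a, 0 < F x := by
    intro x hx
    have := hFanti ⟨hx.1, hx.2.le⟩ ⟨ha, le_rfl⟩ hx.2
    rwa [hFa] at this
  have hval : ∀ x ∈ Set.Ioc 0 a, h x = ginv (F x) := fun x hx => if_pos hx.1
  have hmem : ∀ x ∈ Set.Ioo 0 a, h x ∈ Set.Ioo 0 a := by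
    intro x hx
    rw [hval x ⟨hx.1, hx.2.le⟩]
    exact ⟨(ginv_mem (hF_nonneg x ⟨hx.1, hx.2.le⟩)).1, ginv_lt_a (hFpos x hx)⟩
  have hGh : ∀ x ∈ Set.Ioc 0 a, G (h x) = F x := by
    intro x hx; rw [hval x hx]; exact G_ginv (hF_nonneg x hx)
  -- strict monotonicity
  have hmono : StrictMonoOn h (Set.Ico 0 a) := by
    intro x hx y hy hxy
    have hyI : y ∈ Set.Ioc 0 a := ⟨lt_of_le_of_lt hx.1 hxy, hy.2.le⟩
    rcases eq_or_lt_of_le hx.1 with h0x|h0x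
    · rw [← h0x, h0]
      rw [hval y hyI]
      exact (ginv_mem (hF_nonneg y hyI)).1
    · have hxI : x ∈ Set.Ioc 0 a := ⟨h0x, hx.2.le⟩
      rw [hval x hxI, hval y hyI]
      exact ginv_anti (hF_nonneg y hyI) (hFanti hxI hyI hxy)
  -- derivative at interior points
  have hd : ∀ x ∈ Set.Ioo 0 a, HasDerivAt h (Y (h x) / X x) x := by
    intro x hx
    have hhx := hmem x hx
    have hFx := hFpos x hx
    have hFd : HasDerivAt F (-(X x)⁻¹) x := prim_hasDerivAt hXpos hX haε hx
    have hGd : HasDerivAt G (-(Y (h x))⁻¹) (h x) := prim_hasDerivAt hYpos hY haε hhx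
    have hYh : 0 < Y (h x) := hYpos _ ⟨hhx.1, hhx.2.le⟩
    have hXx : 0 < X x := hXpos _ ⟨hx.1, hx.2.le⟩
    have hgFx : ginv (F x) = h x := (hval x ⟨hx.1, hx.2.le⟩).symm
    have hGd' : HasDerivAt G (-(Y (h x))⁻¹) (ginv (F x)) := by rw [hgFx]; exact hGd
    have hginvd : HasDerivAt ginv (-(Y (h x))⁻¹)⁻¹ (F x) := by
      apply HasDerivAt.of_local_left_inverse (ginv_cont hFx) hGd'
      · rw [neg_ne_zero]
        exact inv_ne_zero hYh.ne'
      · filter_upwards [isOpen_Ioi.mem_nhds hFx] with w hw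
        exact G_ginv (le_of_lt hw)
    have hcomp : HasDerivAt (ginv ∘ F) ((-(Y (h x))⁻¹)⁻¹ * -(X x)⁻¹) x := hginvd.comp x hFd
    have heq : h =ᶠ[𝓝 x] (ginv ∘ F) := by
      filter_upwards [isOpen_Ioi.mem_nhds hx.1] with y hy
      simp only [hh_def, Function.comp]
      rw [if_pos (Set.mem_Ioi.mp hy)]
    have hfin := hcomp.congr_of_eventuallyEq heq
    refine hfin.congr_deriv ?_
    rw [inv_neg, inv_inv, div_eq_mul_inv]
    ring
  -- h tends to 0 within Ioi 0
  have htend0 : Tendsto h (𝓝[>] 0) (𝓝[>] 0) := by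
    rw [tendsto_nhdsWithin_iff]
    constructor
    · rw [Metric.tendsto_nhds]
      intro η hη
      set w := min η a with hw_def
      have hw : 0 < w := lt_min hη ha
      have hwa : w ≤ a := min_le_right _ _
      have hGw : 0 ≤ G w := G_nonneg w ⟨hw, hwa⟩
      filter_upwards [Ioo_mem_nhdsGT_of_mem (⟨le_refl (0:ℝ), ha⟩ : (0:ℝ) ∈ Set.Ico 0 a),
        Ftop.eventually_gt_atTop (G w)] with x hx hFbig
      have hhx := hmem x hx
      have hlt : h x < w := by
        by_contra hcon
        push_neg at hcon
        have hhxI : h x ∈ Set.Ioc 0 a := ⟨hhx.1, hhx.2.le⟩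
        have : G (h x) ≤ G w := by
          rcases eq_or_lt_of_le hcon with heq|hlt2
          · rw [heq]
          · exact le_of_lt (hGanti ⟨hw, hwa⟩ hhxI hlt2)
        rw [hGh x ⟨hx.1, hx.2.le⟩] at this
        linarith
      rw [Real.dist_eq, sub_zero, abs_of_pos hhx.1]
      exact lt_of_lt_of_le hlt (min_le_left _ _)
    · filter_upwards [Ioo_mem_nhdsGT_of_mem (⟨le_refl (0:ℝ), ha⟩ : (0:ℝ) ∈ Set.Ico 0 a)]
        with x hx
      exact (hmem x hx).1
  -- slope limit
  have KYh : Tendsto (fun x => (h x) ^ (r-1) * F x) (𝓝[>] 0) (𝓝 (β⁻¹ / (r-1))) := by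
    have := KY.comp htend0
    refine this.congr' ?_
    filter_upwards [Ioo_mem_nhdsGT_of_mem (⟨le_refl (0:ℝ), ha⟩ : (0:ℝ) ∈ Set.Ico 0 a)]
      with x hx
    simp only [Function.comp]
    rw [hGh x ⟨hx.1, hx.2.le⟩]
  have hAne : α⁻¹ / (r-1) ≠ 0 := (div_pos (inv_pos.2 hα) hr1).ne'
  have Hratio : Tendsto (fun x => (h x / x) ^ (r-1)) (𝓝[>] 0) (𝓝 (α/β)) := by
    have hdiv := KYh.div KX hAne
    have hlim : (β⁻¹ / (r-1)) / (α⁻¹ / (r-1)) = α/β := by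
      field_simp
    rw [hlim] at hdiv
    refine hdiv.congr' ?_
    filter_upwards [Ioo_mem_nhdsGT_of_mem (⟨le_refl (0:ℝ), ha⟩ : (0:ℝ) ∈ Set.Ico 0 a)]
      with x hx
    have hhx := hmem x hx
    have hFx := (hFpos x hx).ne'
    have hxr : (0:ℝ) < x ^ (r-1) := Real.rpow_pos_of_pos hx.1 _
    rw [Real.div_rpow hhx.1.le hx.1.le]
    simp only [Pi.div_apply]
    field_simp
  have Hslope : Tendsto (fun x => h x / x) (𝓝[>] 0) (𝓝 c) := by
    have hcont2 : ContinuousAt (fun s : ℝ => s ^ (r-1)⁻¹) (α/β) :=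
      Real.continuousAt_rpow_const _ _ (Or.inl (div_pos hα hβ).ne')
    have := hcont2.tendsto.comp Hratio
    rw [hc_def]
    refine this.congr' ?_
    filter_upwards [Ioo_mem_nhdsGT_of_mem (⟨le_refl (0:ℝ), ha⟩ : (0:ℝ) ∈ Set.Ico 0 a)]
      with x hx
    have hhx := hmem x hx
    have hq : 0 < h x / x := div_pos hhx.1 hx.1
    simp only [Function.comp]
    rw [← Real.rpow_mul hq.le, mul_inv_cancel₀ hr1.ne', Real.rpow_one]
  -- limit of the derivative
  have Hderiv : Tendsto (fun x => Y (h x) / X x) (𝓝[>] 0) (𝓝 c) := by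
    have t1 : Tendsto (fun x => Y (h x) / (h x) ^ r) (𝓝[>] 0) (𝓝 β) := hYa.comp htend0
    have t2 : Tendsto (fun x => (h x / x) ^ r) (𝓝[>] 0) (𝓝 (c ^ r)) :=
      (Real.continuousAt_rpow_const c r (Or.inl hcpos.ne')).tendsto.comp Hslope
    have t3 : Tendsto (fun x => (X x / x ^ r)⁻¹) (𝓝[>] 0) (𝓝 α⁻¹) := hXa.inv₀ hα.ne'
    have tall := (t1.mul t2).mul t3
    have hab : (0:ℝ) < α/β := div_pos hα hβ
    have h2 : c ^ (r-1) = α/β := by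
      rw [hc_def, ← Real.rpow_mul hab.le, inv_mul_cancel₀ hr1.ne', Real.rpow_one]
    have h1 : c ^ r = c * (α/β) := by
      have h3 : c ^ ((1:ℝ) + (r-1)) = c ^ (1:ℝ) * c ^ (r-1) := Real.rpow_add hcpos 1 (r-1)
      rw [show (1:ℝ) + (r-1) = r by ring, Real.rpow_one] at h3
      rw [h3, h2]
    have hcr : β * c ^ r * α⁻¹ = c := by
      rw [h1]
      field_simp
    rw [hcr] at tall
    refine tall.congr' ?_
    filter_upwards [Ioo_mem_nhdsGT_of_mem (⟨le_refl (0:ℝ), ha⟩ : (0:ℝ) ∈ Set.Ico 0 a)]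
      with x hx
    have hhx := hmem x hx
    have hXx := hXpos x ⟨hx.1, hx.2.le⟩
    have hhr : (0:ℝ) < (h x) ^ r := Real.rpow_pos_of_pos hhx.1 _
    have hxr : (0:ℝ) < x ^ r := Real.rpow_pos_of_pos hx.1 _
    rw [Real.div_rpow hhx.1.le hx.1.le]
    field_simp
  -- derivWithin setup
  have hUD : UniqueDiffOn ℝ (Set.Ico 0 a) := uniqueDiffOn_Ico 0 a
  have h0mem : (0:ℝ) ∈ Set.Ico 0 a := ⟨le_refl 0, ha⟩
  have hDW0 : HasDerivWithinAt h c (Set.Ico 0 a) 0 := by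
    rw [hasDerivWithinAt_iff_tendsto_slope]
    have hset : Set.Ico (0:ℝ) a \ {0} = Set.Ioo 0 a := by
      ext t
      simp only [Set.mem_diff, Set.mem_Ico, Set.mem_Ioo, Set.mem_singleton_iff]
      constructor
      · rintro ⟨⟨ht0, hta⟩, htne⟩
        exact ⟨lt_of_le_of_ne ht0 (Ne.symm htne), hta⟩
      · rintro ⟨ht0, hta⟩
        exact ⟨⟨ht0.le, hta⟩, ht0.ne'⟩
    rw [hset]
    have hm : Tendsto (fun x => h x / x) (𝓝[Set.Ioo 0 a] 0) (𝓝 c) :=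
      Hslope.mono_left (nhdsWithin_mono 0 Set.Ioo_subset_Ioi_self)
    refine hm.congr' ?_
    filter_upwards [self_mem_nhdsWithin] with x hx
    rw [slope_def_field, h0, sub_zero, sub_zero]
  have hd0 : derivWithin h (Set.Ico 0 a) 0 = c := hDW0.derivWithin (hUD 0 h0mem)
  have hdx : ∀ x ∈ Set.Ioo 0 a, derivWithin h (Set.Ico 0 a) x = Y (h x) / X x := by
    intro x hx
    exact ((hd x hx).hasDerivWithinAt).derivWithin (hUD x ⟨hx.1.le, hx.2⟩)
  have hdiff : DifferentiableOn ℝ h (Set.Ico 0 a) := by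
    intro x hx
    rcases eq_or_lt_of_le hx.1 with h0x|h0x
    · rw [← h0x]
      exact hDW0.differentiableWithinAt
    · exact ((hd x ⟨h0x, hx.2⟩).differentiableAt).differentiableWithinAt
  -- continuity of the derivative
  set φ : ℝ → ℝ := fun x => if 0 < x then Y (h x) / X x else c with hφ_def
  have hφeq : Set.EqOn (derivWithin h (Set.Ico 0 a)) φ (Set.Ico 0 a) := by
    intro x hx
    rcases eq_or_lt_of_le hx.1 with h0x|h0x
    · rw [← h0x, hd0, hφ_def]
      simp
    · rw [hdx x ⟨h0x, hx.2⟩, hφ_def]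
      simp [h0x]
  have hφcont : ContinuousOn φ (Set.Ico 0 a) := by
    intro x hx
    rcases eq_or_lt_of_le hx.1 with h0x|h0x
    · rw [← h0x]
      have hφ0 : φ 0 = c := by simp [hφ_def]
      have hsplitset : Set.Ico (0:ℝ) a = {0} ∪ Set.Ioo 0 a := by
        ext t
        simp only [Set.mem_Ico, Set.mem_union, Set.mem_singleton_iff, Set.mem_Ioo]
        constructor
        · rintro ⟨ht0, hta⟩
          rcases eq_or_lt_of_le ht0 with hq|hq
          · exact Or.inl hq.symm
          · exact Or.inr ⟨hq, hta⟩
        · rintro (rfl|⟨ht0, hta⟩)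
          · exact ⟨le_refl 0, ha⟩
          · exact ⟨ht0.le, hta⟩
      unfold ContinuousWithinAt
      rw [hφ0, hsplitset, nhdsWithin_union, tendsto_sup]
      constructor
      · rw [nhdsWithin_singleton]
        have := tendsto_pure_nhds φ 0
        rwa [hφ0] at this
      · refine (Hderiv.mono_left (nhdsWithin_mono 0 Set.Ioo_subset_Ioi_self)).congr' ?_
        filter_upwards [self_mem_nhdsWithin] with t ht
        rw [hφ_def]
        simp [ht.1]
    · have hxI : x ∈ Set.Ioo 0 a := ⟨h0x, hx.2⟩
      have hhx := hmem x hxI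
      have hcx : ContinuousAt φ x := by
        have hhc : ContinuousAt h x := (hd x hxI).differentiableAt.continuousAt
        have hYc : ContinuousAt Y (h x) :=
          hY.continuousAt (mem_of_superset
            (isOpen_Ioo.mem_nhds ⟨hhx.1, lt_trans hhx.2 haε⟩) Set.Ioo_subset_Ico_self)
        have hXc : ContinuousAt X x :=
          hX.continuousAt (mem_of_superset
            (isOpen_Ioo.mem_nhds ⟨h0x, lt_trans hx.2 haε⟩) Set.Ioo_subset_Ico_self)
        have hca : ContinuousAt (fun t => Y (h t) / X t) x :=
          (hYc.comp hhc).div hXc (hXpos x ⟨h0x, hx.2.le⟩).ne'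
        apply hca.congr
        filter_upwards [isOpen_Ioi.mem_nhds (Set.mem_Ioi.mpr h0x)] with t ht
        rw [hφ_def]
        simp [Set.mem_Ioi.mp ht]
      exact hcx.continuousWithinAt
  have hderivcont : ContinuousOn (derivWithin h (Set.Ico 0 a)) (Set.Ico 0 a) :=
    hφcont.congr hφeq
  have hCD : ContDiffOn ℝ 1 h (Set.Ico 0 a) := by
    have hiff := (contDiffOn_succ_iff_derivWithin (n := 0) hUD).mpr
      ⟨hdiff, by simp, by rw [contDiffOn_zero]; exact hderivcont⟩
    simpa using hiff
  -- X 0 = 0 and Y 0 = 0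
  have hIooNeBot : (𝓝[Set.Ioo (0:ℝ) ε] (0:ℝ)).NeBot := by
    apply mem_closure_iff_nhdsWithin_neBot.mp
    rw [closure_Ioo hε.ne]
    exact ⟨le_refl 0, hε.le⟩
  have hlim0 : ∀ (Z : ℝ → ℝ) (γ : ℝ), ContinuousOn Z (Set.Ico 0 ε) →
      Tendsto (fun x : ℝ => Z x / x ^ r) (𝓝[>] 0) (𝓝 γ) → Z 0 = 0 := by
    intro Z γ hZ hZa
    have l1 : Tendsto Z (𝓝[Set.Ioo 0 ε] 0) (𝓝 (Z 0)) :=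
      (hZ 0 ⟨le_refl 0, hε⟩).mono_left (nhdsWithin_mono 0 Set.Ioo_subset_Ico_self)
    have l3 : Tendsto (fun x : ℝ => (Z x / x ^ r) * x ^ r) (𝓝[>] 0) (𝓝 (γ * 0)) :=
      hZa.mul (rpow_tendsto_zero (lt_trans zero_lt_one hr))
    rw [mul_zero] at l3
    have l4 : Tendsto Z (𝓝[>] (0:ℝ)) (𝓝 0) := by
      refine l3.congr' ?_
      filter_upwards [self_mem_nhdsWithin] with x hx
      have : (x:ℝ) ^ r ≠ 0 := (Real.rpow_pos_of_pos hx _).ne'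
      field_simp
    have l5 : Tendsto Z (𝓝[Set.Ioo 0 ε] 0) (𝓝 0) :=
      l4.mono_left (nhdsWithin_mono 0 Set.Ioo_subset_Ioi_self)
    exact tendsto_nhds_unique l1 l5
  have hX0 : X 0 = 0 := hlim0 X α hX hXa
  have hY0 : Y 0 = 0 := hlim0 Y β hY hYa
  -- conclusion
  refine ⟨a, ha, h, hmono, hCD, h0, ?_, ?_, ?_⟩
  · rw [hd0]
    exact hcpos
  · intro x hx
    exact Set.Ioo_subset_Ioo (le_refl 0) haε.le (hmem x hx)
  · intro x hx
    rcases eq_or_lt_of_le hx.1 with h0x|h0x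
    · rw [← h0x, hd0, hX0, h0, hY0, zero_mul]
    · rw [hdx x ⟨h0x, hx.2⟩]
      rw [mul_div_cancel₀ _ (hXpos x ⟨h0x, hx.2.le⟩).ne']

/-- Sufficiency in the proposition on `C¹` conjugacy of flat vector fields: two continuous
vector fields equivalent at `0⁺` to `αx^r` and `βx^r` respectively, with `r > 1` and `α, β`
nonzero of the same sign, are conjugate by a germ of `C¹` diffeomorphism. -/
theorem stmt_13 (ε : ℝ) (hε : 0 < ε) (r : ℝ) (hr : 1 < r) (α β : ℝ) (hαβ : 0 < α * β)
    (X Y : ℝ → ℝ)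
    (hX : ContinuousOn X (Set.Ico 0 ε)) (hY : ContinuousOn Y (Set.Ico 0 ε))
    (hXa : Filter.Tendsto (fun x : ℝ => X x / x ^ r) (nhdsWithin 0 (Set.Ioi 0)) (nhds α))
    (hYa : Filter.Tendsto (fun x : ℝ => Y x / x ^ r) (nhdsWithin 0 (Set.Ioi 0)) (nhds β)) :
    ∃ (δ : ℝ), 0 < δ ∧ ∃ h : ℝ → ℝ,
      StrictMonoOn h (Set.Ico 0 δ) ∧
      ContDiffOn ℝ 1 h (Set.Ico 0 δ) ∧
      h 0 = 0 ∧ 0 < derivWithin h (Set.Ico 0 δ) 0 ∧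
      Set.MapsTo h (Set.Ioo 0 δ) (Set.Ioo 0 ε) ∧
      ∀ x ∈ Set.Ico (0 : ℝ) δ, X x * derivWithin h (Set.Ico 0 δ) x = Y (h x) := by
  rcases lt_trichotomy α 0 with hα|hα|hα
  · have hβ : β < 0 := by
      rcases lt_trichotomy β 0 with hb|hb|hb
      · exact hb
      · rw [hb, mul_zero] at hαβ; exact absurd hαβ (lt_irrefl 0)
      · nlinarith
    obtain ⟨δ, hδ, h, hm, hc, h0, hd, hmt, heq⟩ :=
      aux_pos ε hε r hr (-α) (-β) (by linarith) (by linarith)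
        (fun x => -X x) (fun x => -Y x) hX.neg hY.neg
        (by simpa [neg_div] using hXa.neg) (by simpa [neg_div] using hYa.neg)
    refine ⟨δ, hδ, h, hm, hc, h0, hd, hmt, ?_⟩
    intro x hx
    have h2 := heq x hx
    linarith
  · exfalso
    rw [hα, zero_mul] at hαβ
    exact lt_irrefl 0 hαβ
  · have hβ : 0 < β := by nlinarith
    exact aux_pos ε hε r hr α β hα hβ X Y hX hY hXa hYa
end

section
/- (Residues as logarithmic deviations of orbits.) Let ℓ ≥ 1, a > 0, R ∈ ℝ and ε > 0. Let X : (0,ε] → ℝ be continuous with X(y) < 0 for all y ∈ (0,ε] and X(y) = −a·y^{ℓ+1} − R·y^{2ℓ+1} + o(y^{2ℓ+1}) as y → 0⁺. Let f : (0,ε] → (0,ε] satisfy 0 < f(x) < x and ∫_{f(x)}^{x} dy/(−X(y)) = 1 for every x ∈ (0,ε] (f is the time-one map of the flow of X). Then for every x₀ ∈ (0,ε], lim_{n→∞} (a·ℓ²·n²/log n)·( 1/(a·ℓ·n) − (f^{[n]}(x₀))^ℓ ) = R/a², where f^{[n]} denotes the n-fold iterate of f. (When f(x) = x − ax^{ℓ+1}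 + bx^{2ℓ+1} + o(x^{2ℓ+1}) is a contracting germ of C^{2ℓ+1} diffeomorphism exactly ℓ-tangent to the identity, R/a² is its iterative residue Resit(f).) -/
open Filter Real Topology Set MeasureTheory Asymptotics

private lemma log_div_nat_tendsto : Tendsto (fun n : ℕ => Real.log n / n) atTop (𝓝 0) := by
  have h := Real.isLittleO_log_id_atTop.tendsto_div_nhds_zero
  exact h.comp tendsto_natCast_atTop_atTop

private lemma log_nat_tendsto : Tendsto (fun n : ℕ => Real.log n) atTop atTop :=
  Real.tendsto_log_atTop.comp tendsto_natCast_atTop_atTop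

private lemma lemA' (a L R : ℝ) (ha : 0 < a) (hL : 0 < L) (u : ℕ → ℝ)
    (hu : ∀ n, 0 < u n)
    (h : Tendsto (fun n => (u n - a*L*n - (R/a)*Real.log n)/Real.log n) atTop (𝓝 0)) :
    Tendsto (fun n : ℕ => (a*L^2*(n:ℝ)^2/Real.log n) * (1/(a*L*n) - 1/(u n)))
      atTop (𝓝 (R/a^2)) := by
  have hlogpos : ∀ᶠ n : ℕ in atTop, 0 < Real.log n := by
    filter_upwards [log_nat_tendsto.eventually_gt_atTop 0] with n hn using hn
  -- h2 : (u n - aLn)/log n → R/a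
  have h2 : Tendsto (fun n : ℕ => (u n - a*L*n)/Real.log n) atTop (𝓝 (R/a)) := by
    have := h.add_const (R/a)
    rw [zero_add] at this
    refine this.congr' ?_
    filter_upwards [hlogpos] with n hn
    field_simp
    ring
  -- h3 : u n / n → a*L
  have h3 : Tendsto (fun n : ℕ => u n / n) atTop (𝓝 (a*L)) := by
    have hm : Tendsto (fun n : ℕ => ((u n - a*L*n)/Real.log n) * (Real.log n / n) + a*L)
        atTop (𝓝 (a*L)) := by
      have := (h2.mul log_div_nat_tendsto).add_const (a*L)
      rwa [mul_zero, zero_add] at this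
    refine hm.congr' ?_
    filter_upwards [hlogpos, eventually_gt_atTop 0] with n hn hn0
    have hn0' : (0:ℝ) < n := by exact_mod_cast hn0
    field_simp
    ring
  -- final
  have h4 : Tendsto (fun n : ℕ => (L / (u n / n)) * ((u n - a*L*n)/Real.log n))
      atTop (𝓝 (R/a^2)) := by
    have hd : Tendsto (fun n : ℕ => L / (u n / n)) atTop (𝓝 (L/(a*L))) :=
      tendsto_const_nhds.div h3 (by positivity)
    have : L/(a*L) * (R/a) = R/a^2 := by field_simp
    rw [← this]
    exact hd.mul h2
  refine h4.congr' ?_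
  filter_upwards [hlogpos, eventually_gt_atTop 0] with n hn hn0
  have hn0' : (0:ℝ) < n := by exact_mod_cast hn0
  have hun := hu n
  field_simp

private lemma log_nat_tendsto' : Tendsto (fun n : ℕ => Real.log n) atTop atTop :=
  Real.tendsto_log_atTop.comp tendsto_natCast_atTop_atTop

private lemma log_le_two_sqrt {v : ℝ} (hv : 0 < v) : Real.log v ≤ 2 * Real.sqrt v := by
  have h1 : Real.log (Real.sqrt v) ≤ Real.sqrt v - 1 :=
    Real.log_le_sub_one_of_pos (Real.sqrt_pos.mpr hv)
  have h2 : Real.log (Real.sqrt v) = Real.log v / 2 := Real.log_sqrt hv.le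
  nlinarith [Real.sqrt_nonneg v]

private lemma lemB' (a L R c : ℝ) (ha : 0 < a) (hL : 0 < L)
    (u w η : ℕ → ℝ)
    (hupos : ∀ n, 0 < u n)
    (hw : Tendsto w atTop atTop)
    (hwu : ∀ n, L * w n = Real.log (u n))
    (heq : ∀ n, u n = a*L*n + c + (L*R/a)*(w n) + η n)
    (hη : Tendsto (fun n => η n / w n) atTop (𝓝 0)) :
    Tendsto (fun n : ℕ => (u n - a*L*n - (R/a)*Real.log n)/Real.log n) atTop (𝓝 0) := by
  set K : ℝ := |L*R/a| + 1 with hK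
  have hKpos : 0 < K := by positivity
  have hwpos : ∀ᶠ n in atTop, 0 < w n := hw.eventually_gt_atTop 0
  -- step1 : |(L*R/a)*w n + η n| ≤ K * w n eventually
  have step1 : ∀ᶠ n in atTop, |(L*R/a)*(w n) + η n| ≤ K * w n := by
    have h1 : ∀ᶠ n in atTop, |η n / w n - 0| < 1 :=
      hη.eventually (eventually_abs_sub_lt 0 one_pos)
    filter_upwards [h1, hwpos] with n h1n hwn
    rw [sub_zero, abs_div, abs_of_pos hwn, div_lt_one hwn] at h1n
    calc |(L*R/a)*(w n) + η n| ≤ |L*R/a| * |w n| + |η n| := by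
          refine (abs_add_le _ _).trans (by rw [abs_mul])
      _ ≤ |L*R/a| * w n + w n := by
          rw [abs_of_pos hwn]; linarith
      _ = K * w n := by ring
  -- step3 : u n ≤ 2aL n + (2c + 4 K'^2) eventually
  set K' : ℝ := K / L with hK'
  have hK'pos : 0 < K' := by positivity
  have step3 : ∀ᶠ n : ℕ in atTop, u n ≤ 2*a*L*n + (2*c + 4*K'^2) := by
    filter_upwards [step1, hwpos] with n h1 hwn
    have hlog : L * w n ≤ 2 * Real.sqrt (u n) := (hwu n) ▸ log_le_two_sqrt (hupos n)
    have hKw : K * w n ≤ u n / 2 + 2 * K'^2 := by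
      have e : K * w n = K' * (L * w n) := by rw [hK']; field_simp
      have h2 : K * w n ≤ 2 * K' * Real.sqrt (u n) := by
        rw [e]
        calc K' * (L * w n) ≤ K' * (2 * Real.sqrt (u n)) :=
              mul_le_mul_of_nonneg_left hlog hK'pos.le
          _ = 2 * K' * Real.sqrt (u n) := by ring
      have h3 : 2 * K' * Real.sqrt (u n) ≤ u n / 2 + 2 * K'^2 := by
        nlinarith [sq_nonneg (Real.sqrt (u n) - 2*K'), Real.sq_sqrt (hupos n).le]
      exact h2.trans h3
    have habs : (L*R/a)*(w n) + η n ≤ K * w n := (le_abs_self _).trans h1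
    linarith [heq n]
  -- step4 : w n ≤ (log C3 + log n)/L eventually
  set C3 : ℝ := 2*a*L + |2*c + 4*K'^2| + 1 with hC3
  have hC3pos : 0 < C3 := by positivity
  have step4 : ∀ᶠ n : ℕ in atTop, w n ≤ (Real.log C3 + Real.log n) / L := by
    filter_upwards [step3, eventually_ge_atTop 1] with n h3 hn1
    have hn1' : (1:ℝ) ≤ n := by exact_mod_cast hn1
    have hun : u n ≤ C3 * n := by
      have : 2*c + 4*K'^2 ≤ |2*c + 4*K'^2| * n := by
        calc 2*c + 4*K'^2 ≤ |2*c + 4*K'^2| := le_abs_self _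
          _ ≤ |2*c + 4*K'^2| * n := le_mul_of_one_le_right (abs_nonneg _) hn1'
      nlinarith
    have hlog : Real.log (u n) ≤ Real.log (C3 * n) := Real.log_le_log (hupos n) hun
    rw [Real.log_mul (ne_of_gt hC3pos) (by positivity)] at hlog
    rw [le_div_iff₀ hL, mul_comm]
    exact (hwu n) ▸ hlog
  -- step5 : w n / n → 0
  have step5 : Tendsto (fun n : ℕ => w n / n) atTop (𝓝 0) := by
    apply squeeze_zero'
    · filter_upwards [hwpos, eventually_gt_atTop 0] with n hwn hn
      positivity
    · filter_upwards [step4, eventually_gt_atTop 0] with n h4 hn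
      have hn' : (0:ℝ) < n := by exact_mod_cast hn
      exact div_le_div_of_nonneg_right h4 hn'.le
    · have h1 : Tendsto (fun n : ℕ => (Real.log C3 / n + Real.log n / n) / L) atTop (𝓝 0) := by
        have := (((tendsto_const_nhds (x := Real.log C3)).div_atTop
          (tendsto_natCast_atTop_atTop (R := ℝ))).add
          (Real.isLittleO_log_id_atTop.tendsto_div_nhds_zero.comp
            tendsto_natCast_atTop_atTop)).div_const L
        simpa using this
      refine h1.congr ?_
      intro n
      rw [← add_div, div_div, div_div, mul_comm]
  -- step6 : η n / n → 0
  have step6 : Tendsto (fun n : ℕ => η n / n) atTop (𝓝 0) := by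
    have h1 : Tendsto (fun n : ℕ => (η n / w n) * (w n / n)) atTop (𝓝 0) := by
      have := hη.mul step5
      simpa using this
    refine h1.congr' ?_
    filter_upwards [hwpos, eventually_gt_atTop 0] with n hwn hn
    field_simp
  -- step7 : u n / n → a*L
  have step7 : Tendsto (fun n : ℕ => u n / n) atTop (𝓝 (a*L)) := by
    have h1 : Tendsto (fun n : ℕ => a*L + c/n + (L*R/a)*(w n/n) + η n/n) atTop (𝓝 (a*L)) := by
      have := ((((tendsto_const_nhds (x := a*L)).add
        ((tendsto_const_nhds (x := c)).div_atTop (tendsto_natCast_atTop_atTop (R := ℝ)))).add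
        ((tendsto_const_nhds (x := L*R/a)).mul step5)).add step6)
      simpa using this
    refine h1.congr' ?_
    filter_upwards [eventually_gt_atTop 0] with n hn
    have hn' : (0:ℝ) < n := by exact_mod_cast hn
    rw [heq n]
    field_simp
  -- step8 : log(u n / n) → log(a*L)
  have step8 : Tendsto (fun n : ℕ => Real.log (u n / n)) atTop (𝓝 (Real.log (a*L))) :=
    ((Real.continuousAt_log (by positivity)).tendsto.comp step7)
  -- step9 : η n / log n → 0
  have step9 : Tendsto (fun n : ℕ => η n / Real.log n) atTop (𝓝 0) := by
    rw [tendsto_zero_iff_abs_tendsto_zero]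
    apply squeeze_zero' (g := fun n : ℕ =>
      |η n / w n| * ((Real.log C3 + Real.log n) / L / Real.log n))
    · filter_upwards with n using abs_nonneg _
    · filter_upwards [step4, hwpos, log_nat_tendsto'.eventually_gt_atTop 1]
        with n h4 hwn hlogn
      have hlog1 : (0:ℝ) < Real.log n := by linarith
      have hB : 0 < (Real.log C3 + Real.log n) / L := lt_of_lt_of_le hwn h4
      show |η n / Real.log n| ≤ |η n / w n| * ((Real.log C3 + Real.log n) / L / Real.log n)
      rw [abs_div, abs_div, abs_of_pos hwn, abs_of_pos hlog1, div_mul_div_comm,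
        div_le_div_iff₀ hlog1 (by positivity)]
      have hint : 0 ≤ |η n| * Real.log n * ((Real.log C3 + Real.log n) / L - w n) :=
        mul_nonneg (mul_nonneg (abs_nonneg _) hlog1.le) (sub_nonneg.mpr h4)
      nlinarith [hint]
    · have h2 : Tendsto (fun n : ℕ => (Real.log C3 / Real.log n + 1) / L) atTop (𝓝 (1/L)) := by
        have := (((tendsto_const_nhds (x := Real.log C3)).div_atTop log_nat_tendsto').add_const 1).div_const L
        simpa using this
      have h3 : Tendsto (fun n : ℕ =>
          |η n / w n| * ((Real.log C3 / Real.log n + 1) / L)) atTop (𝓝 0) := by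
        have habs : Tendsto (fun n : ℕ => |η n / w n|) atTop (𝓝 0) := by
          have := hη.abs; simpa using this
        have := habs.mul h2
        simpa using this
      refine h3.congr' ?_
      filter_upwards [log_nat_tendsto'.eventually_gt_atTop 0] with n hlogn
      congr 1
      field_simp
  -- conclusion
  have hfin : Tendsto (fun n : ℕ => c/Real.log n
      + (R/a) * Real.log (u n / n) / Real.log n + η n / Real.log n) atTop (𝓝 0) := by
    have h1 : Tendsto (fun n : ℕ => c / Real.log n) atTop (𝓝 0) :=
      tendsto_const_nhds.div_atTop log_nat_tendsto'
    have h2 : Tendsto (fun n : ℕ => (R/a) * Real.log (u n / n) / Real.log n) atTop (𝓝 0) :=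
      (step8.const_mul (R/a)).div_atTop log_nat_tendsto'
    simpa using (h1.add h2).add step9
  refine hfin.congr' ?_
  filter_upwards [log_nat_tendsto'.eventually_gt_atTop 0, eventually_gt_atTop 0] with n hlogn hn
  have hn' : (0:ℝ) < n := by exact_mod_cast hn
  have hlogdiv : Real.log (u n / n) = Real.log (u n) - Real.log n :=
    Real.log_div (hupos n).ne' (by positivity)
  have e1 : u n - a*L*n - (R/a)*Real.log n = c + (R/a)*Real.log (u n / n) + η n := by
    linear_combination heq n + (R/a) * hwu n - (R/a) * hlogdiv
  rw [e1]
  ring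

private lemma lemE1' (ℓ : ℕ) (hℓ : 1 ≤ ℓ) (a R ε : ℝ) (ha : 0 < a) (hε : 0 < ε)
    (X : ℝ → ℝ) (hXneg : ∀ y ∈ Set.Ioc (0:ℝ) ε, X y < 0)
    (hXe : Asymptotics.IsLittleO (nhdsWithin 0 (Set.Ioi 0))
      (fun y : ℝ => X y - (-a * y ^ (ℓ + 1) - R * y ^ (2 * ℓ + 1)))
      (fun y : ℝ => y ^ (2 * ℓ + 1))) :
    Tendsto (fun y : ℝ => y * (1/(-X y) - (a - R*y^ℓ)/(a^2 * y^(ℓ+1))))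
      (𝓝[>] (0:ℝ)) (𝓝 0) := by
  have ha' : a ≠ 0 := ha.ne'
  set s : ℝ → ℝ :=
    fun y => (X y - (-a * y ^ (ℓ + 1) - R * y ^ (2 * ℓ + 1))) / y ^ (2 * ℓ + 1) with hs_def
  have hs : Tendsto s (𝓝[>] (0:ℝ)) (𝓝 0) := hXe.tendsto_div_nhds_zero
  have hpow : Tendsto (fun y : ℝ => y ^ ℓ) (𝓝[>] (0:ℝ)) (𝓝 0) := by
    have h0 : Tendsto (fun y : ℝ => y ^ ℓ) (𝓝 (0:ℝ)) (𝓝 (0 ^ ℓ)) :=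
      (continuous_pow ℓ).tendsto 0
    rw [zero_pow (by omega : ℓ ≠ 0)] at h0
    exact h0.mono_left nhdsWithin_le_nhds
  have hIoo : Ioo (0:ℝ) ε ∈ 𝓝[>] (0:ℝ) :=
    Ioo_mem_nhdsGT_of_mem ⟨le_refl 0, hε⟩
  -- q y := (-X y)/y^(ℓ+1) → a
  have hq : Tendsto (fun y : ℝ => (-X y)/y^(ℓ+1)) (𝓝[>] (0:ℝ)) (𝓝 a) := by
    have h1 : Tendsto (fun y : ℝ => a + R * y^ℓ - s y * y^ℓ) (𝓝[>] (0:ℝ)) (𝓝 a) := by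
      have := ((tendsto_const_nhds (x := a)).add
        ((tendsto_const_nhds (x := R)).mul hpow)).sub (hs.mul hpow)
      simpa using this
    refine h1.congr' ?_
    filter_upwards [hIoo] with y hy
    have hy0 : y ≠ 0 := ne_of_gt hy.1
    rw [hs_def]
    field_simp
    ring
  -- numerator → 0
  have hnum : Tendsto (fun y : ℝ => R^2 * y^ℓ + (a - R * y^ℓ) * s y)
      (𝓝[>] (0:ℝ)) (𝓝 0) := by
    have := ((tendsto_const_nhds (x := R^2)).mul hpow).add
      (((tendsto_const_nhds (x := a)).sub ((tendsto_const_nhds (x := R)).mul hpow)).mul hs)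
    simpa using this
  -- combination
  have hmain : Tendsto (fun y : ℝ =>
      (R^2 * y^ℓ + (a - R * y^ℓ) * s y) / (a^2 * ((-X y)/y^(ℓ+1))))
      (𝓝[>] (0:ℝ)) (𝓝 0) := by
    have hden : Tendsto (fun y : ℝ => a^2 * ((-X y)/y^(ℓ+1))) (𝓝[>] (0:ℝ)) (𝓝 (a^2 * a)) :=
      (tendsto_const_nhds (x := a^2)).mul hq
    have := Filter.Tendsto.div hnum hden (by positivity)
    rw [zero_div] at this
    exact this
  refine hmain.congr' ?_
  filter_upwards [hIoo] with y hy
  have hy0 : y ≠ 0 := ne_of_gt hy.1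
  have hX0 : X y ≠ 0 := ne_of_lt (hXneg y ⟨hy.1, hy.2.le⟩)
  have hX0' : -X y ≠ 0 := neg_ne_zero.mpr hX0
  rw [hs_def]
  field_simp
  ring_nf

private lemma uIcc_subset_Ioc {p q ε : ℝ} (hp : p ∈ Set.Ioc (0:ℝ) ε) (hq : q ∈ Set.Ioc (0:ℝ) ε) :
    Set.uIcc p q ⊆ Set.Ioc 0 ε := fun y hy =>
  ⟨lt_of_lt_of_le (lt_min hp.1 hq.1) hy.1, hy.2.trans (max_le hp.2 hq.2)⟩

private lemma lemE3' (ε : ℝ) (hε : 0 < ε) (φ : ℝ → ℝ)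
    (hφc : ContinuousOn φ (Set.Ioc 0 ε))
    (hφ : Tendsto (fun y => y * φ y) (𝓝[>] (0:ℝ)) (𝓝 0)) :
    Tendsto (fun x => (∫ y in x..ε, φ y) / Real.log x) (𝓝[>] (0:ℝ)) (𝓝 0) := by
  have hφint : ∀ p q, p ∈ Set.Ioc (0:ℝ) ε → q ∈ Set.Ioc (0:ℝ) ε →
      IntervalIntegrable φ volume p q := fun p q hp hq =>
    (hφc.mono (uIcc_subset_Ioc hp hq)).intervalIntegrable
  rw [NormedAddCommGroup.tendsto_nhds_zero]
  intro δ hδ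
  set δ₁ : ℝ := δ/4 with hδ₁def
  have hδ₁ : 0 < δ₁ := by positivity
  have hev : ∀ᶠ y in 𝓝[>] (0:ℝ), |y * φ y - 0| < δ₁ :=
    hφ.eventually (eventually_abs_sub_lt 0 hδ₁)
  rw [eventually_iff, mem_nhdsGT_iff_exists_Ioo_subset] at hev
  obtain ⟨η, hη, hsub⟩ := hev
  set c : ℝ := min (η/2) ε with hcdef
  have hη0 : (0:ℝ) < η := hη
  have hc : 0 < c := lt_min (by linarith) hε
  have hcε : c ≤ ε := min_le_right _ _
  have hcη : c < η := lt_of_le_of_lt (min_le_left _ _) (by linarith)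
  have hcmem : c ∈ Set.Ioc (0:ℝ) ε := ⟨hc, hcε⟩
  have hbound : ∀ y ∈ Set.Ioc (0:ℝ) c, |φ y| ≤ δ₁ * (1/y) := by
    intro y hy
    have hyη : y ∈ Set.Ioo (0:ℝ) η := ⟨hy.1, lt_of_le_of_lt hy.2 hcη⟩
    have h1 : |y * φ y| < δ₁ := by
      have := hsub hyη
      simpa using this
    have hy0 : 0 < y := hy.1
    rw [abs_mul, abs_of_pos hy0] at h1
    rw [mul_one_div, le_div_iff₀ hy0, mul_comm]
    exact h1.le
  set M : ℝ := |∫ y in c..ε, φ y| with hMdef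
  set B : ℝ := max (4*(M + δ₁*|Real.log c|)/δ + 1) 1 with hBdef
  have hlogT : Tendsto (fun x : ℝ => -Real.log x) (𝓝[>] (0:ℝ)) atTop :=
    tendsto_neg_atBot_atTop.comp Real.tendsto_log_nhdsGT_zero
  filter_upwards [Ioo_mem_nhdsGT_of_mem (Set.mem_Ico.mpr ⟨le_refl (0:ℝ), hc⟩),
    hlogT.eventually_ge_atTop B] with x hx hB
  have hx0 : 0 < x := hx.1
  have hxc : x < c := hx.2
  have hxmem : x ∈ Set.Ioc (0:ℝ) ε := ⟨hx0, hxc.le.trans hcε⟩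
  have hB1 : (1:ℝ) ≤ -Real.log x := le_trans (le_max_right _ _) hB
  have hlogx : Real.log x < 0 := by linarith
  -- split the integral
  have hsplit : (∫ y in x..ε, φ y) = (∫ y in x..c, φ y) + ∫ y in c..ε, φ y :=
    (intervalIntegral.integral_add_adjacent_intervals
      (hφint x c hxmem hcmem) (hφint c ε hcmem ⟨hε, le_refl ε⟩)).symm
  -- bound the first piece
  have hint1 : IntervalIntegrable (fun y => δ₁ * (1/y)) volume x c := by
    apply ContinuousOn.intervalIntegrable
    apply ContinuousOn.mul continuousOn_const
    apply ContinuousOn.div continuousOn_const continuousOn_id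
    intro y hy
    exact ne_of_gt (lt_of_lt_of_le (lt_min hx0 hc) hy.1)
  have hb1 : ‖∫ y in x..c, φ y‖ ≤ |∫ y in x..c, δ₁ * (1/y)| := by
    apply intervalIntegral.norm_integral_le_abs_of_norm_le _ hint1
    rw [MeasureTheory.ae_restrict_iff' measurableSet_uIoc]
    apply MeasureTheory.ae_of_all
    intro y hy
    rw [Set.uIoc_of_le hxc.le] at hy
    exact hbound y ⟨lt_trans hx0 hy.1, hy.2⟩
  have hcalc : (∫ y in x..c, δ₁ * (1/y)) = δ₁ * (Real.log c - Real.log x) := by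
    rw [intervalIntegral.integral_const_mul, integral_one_div, Real.log_div hc.ne' hx0.ne']
    intro h
    rcases Set.mem_uIcc.mp h with h1 | h1
    · exact absurd h1.1 (not_le.mpr hx0)
    · exact absurd h1.1 (not_le.mpr hc)
  have hlogcx : 0 ≤ Real.log c - Real.log x :=
    sub_nonneg.mpr (Real.log_le_log hx0 hxc.le)
  have hΨ : ‖(∫ y in x..ε, φ y)‖ ≤ δ₁ * (Real.log c - Real.log x) + M := by
    rw [hsplit]
    calc ‖(∫ y in x..c, φ y) + ∫ y in c..ε, φ y‖
        ≤ ‖∫ y in x..c, φ y‖ + ‖∫ y in c..ε, φ y‖ := norm_add_le _ _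
      _ ≤ |∫ y in x..c, δ₁ * (1/y)| + M := by
          apply add_le_add hb1
          rw [hMdef]; rfl
      _ = δ₁ * (Real.log c - Real.log x) + M := by
          rw [hcalc, abs_of_nonneg (by positivity)]
  -- conclude
  have hMb : M + δ₁ * |Real.log c| ≤ (δ/4) * (-Real.log x) := by
    have h1 : 4*(M + δ₁*|Real.log c|)/δ + 1 ≤ -Real.log x := le_trans (le_max_left _ _) hB
    have hM0 : 0 ≤ M := abs_nonneg _
    have h2 : (δ/4) * (4*(M + δ₁*|Real.log c|)/δ + 1) = (M + δ₁*|Real.log c|) + δ/4 := by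
      field_simp
    have h3 := mul_le_mul_of_nonneg_left h1 (by positivity : (0:ℝ) ≤ δ/4)
    linarith
  have hfinal : ‖(∫ y in x..ε, φ y)‖ ≤ (δ/2) * (-Real.log x) := by
    have h2 : δ₁ * (Real.log c - Real.log x) ≤ δ₁ * |Real.log c| + δ₁ * (-Real.log x) := by
      have := le_abs_self (Real.log c)
      nlinarith
    have : δ₁ * (-Real.log x) = (δ/4) * (-Real.log x) := by rw [hδ₁def]
    nlinarith [hΨ]
  rw [norm_div, Real.norm_eq_abs (Real.log x), abs_of_neg hlogx, div_lt_iff₀ (by linarith)]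
  calc ‖(∫ y in x..ε, φ y)‖ ≤ (δ/2) * (-Real.log x) := hfinal
    _ < δ * (-Real.log x) := by nlinarith

private lemma uIcc_subset_Ioc' {p q ε : ℝ} (hp : p ∈ Set.Ioc (0:ℝ) ε) (hq : q ∈ Set.Ioc (0:ℝ) ε) :
    Set.uIcc p q ⊆ Set.Ioc 0 ε := fun _ hy =>
  ⟨lt_of_lt_of_le (lt_min hp.1 hq.1) hy.1, hy.2.trans (max_le hp.2 hq.2)⟩

/-- Residues as logarithmic deviations of orbits: if `f` is the time-one map of the flow of
a contracting continuous vector field `X(y) = −a·y^{ℓ+1} − R·y^{2ℓ+1} + o(y^{2ℓ+1})`, then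
for every `x₀`, `(a·ℓ²·n²/log n)·(1/(a·ℓ·n) − (fⁿ(x₀))^ℓ) → R/a²` as `n → ∞`. -/
theorem stmt_14 (ℓ : ℕ) (hℓ : 1 ≤ ℓ) (a R ε : ℝ) (ha : 0 < a) (hε : 0 < ε)
    (X f : ℝ → ℝ)
    (hXc : ContinuousOn X (Set.Ioc 0 ε))
    (hXneg : ∀ y ∈ Set.Ioc (0 : ℝ) ε, X y < 0)
    (hXe : Asymptotics.IsLittleO (nhdsWithin 0 (Set.Ioi 0))
      (fun y : ℝ => X y - (-a * y ^ (ℓ + 1) - R * y ^ (2 * ℓ + 1)))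
      (fun y : ℝ => y ^ (2 * ℓ + 1)))
    (hf : ∀ x ∈ Set.Ioc (0 : ℝ) ε,
      0 < f x ∧ f x < x ∧ (∫ y in (f x)..x, 1 / (-X y)) = 1)
    (x₀ : ℝ) (hx₀ : x₀ ∈ Set.Ioc (0 : ℝ) ε) :
    Filter.Tendsto
      (fun n : ℕ => (a * (ℓ : ℝ) ^ 2 * (n : ℝ) ^ 2 / Real.log n)
        * (1 / (a * (ℓ : ℝ) * (n : ℝ)) - (f^[n] x₀) ^ ℓ))
      Filter.atTop (nhds (R / a ^ 2)) := by
  have hℓ0 : (0:ℝ) < (ℓ:ℝ) := by exact_mod_cast hℓ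
  have ha' : a ≠ 0 := ha.ne'
  -- the vector field reciprocal
  set g : ℝ → ℝ := fun y => 1 / (-X y) with hgdef
  have hgc : ContinuousOn g (Set.Ioc 0 ε) := by
    apply ContinuousOn.div continuousOn_const hXc.neg
    intro y hy
    exact ne_of_gt (neg_pos.mpr (hXneg y hy))
  have hgint : ∀ p q, p ∈ Set.Ioc (0:ℝ) ε → q ∈ Set.Ioc (0:ℝ) ε →
      IntervalIntegrable g volume p q := fun p q hp hq =>
    (hgc.mono (uIcc_subset_Ioc' hp hq)).intervalIntegrable
  -- the orbit
  set xs : ℕ → ℝ := fun n => f^[n] x₀ with hxsdef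
  have hxss : ∀ n, xs (n+1) = f (xs n) := fun n => Function.iterate_succ_apply' f n x₀
  have hxmem : ∀ n, xs n ∈ Set.Ioc (0:ℝ) ε := by
    intro n
    induction n with
    | zero => exact hx₀
    | succ k ih =>
      rw [hxss]
      obtain ⟨h1, h2, _⟩ := hf (xs k) ih
      exact ⟨h1, h2.le.trans ih.2⟩
  have hxdec : ∀ n, xs (n+1) < xs n := by
    intro n
    rw [hxss]
    exact (hf (xs n) (hxmem n)).2.1
  -- time function
  set T : ℝ → ℝ := fun t => ∫ y in t..ε, g y with hTdef
  have hT1 : ∀ t ∈ Set.Ioc (0:ℝ) ε, T (f t) = T t + 1 := by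
    intro t ht
    obtain ⟨hf1, hf2, hf3⟩ := hf t ht
    have hftmem : f t ∈ Set.Ioc (0:ℝ) ε := ⟨hf1, hf2.le.trans ht.2⟩
    have hadd := intervalIntegral.integral_add_adjacent_intervals
      (hgint (f t) t hftmem ht) (hgint t ε ht ⟨hε, le_refl ε⟩)
    show (∫ y in (f t)..ε, g y) = (∫ y in t..ε, g y) + 1
    rw [← hadd]
    have : (∫ y in (f t)..t, g y) = 1 := hf3
    rw [this]
    ring
  have hTn : ∀ n, T (xs n) = T x₀ + n := by
    intro n
    induction n with
    | zero => simp [hxsdef]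
    | succ k ih =>
      rw [hxss, hT1 (xs k) (hxmem k), ih]
      push_cast
      ring
  -- xs tends to 0
  have hxanti : StrictAnti xs := strictAnti_nat_of_succ_lt hxdec
  have hxle : ∀ n, xs n ≤ x₀ := fun n => by
    have : xs n ≤ xs 0 := hxanti.antitone (Nat.zero_le n)
    simpa [hxsdef] using this
  set L : ℝ := ⨅ n, xs n with hLdef
  have hbdd : BddBelow (Set.range xs) := ⟨0, fun t ⟨n, hn⟩ => hn ▸ (hxmem n).1.le⟩
  have hxtend : Tendsto xs atTop (𝓝 L) := tendsto_atTop_ciInf hxanti.antitone hbdd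
  have hL0 : 0 ≤ L := le_ciInf fun n => (hxmem n).1.le
  have hLle : ∀ n, L ≤ xs n := fun n => ciInf_le hbdd n
  have hL : L = 0 := by
    by_contra hLne
    have hLpos : 0 < L := lt_of_le_of_ne hL0 (Ne.symm hLne)
    have hIccsub : Set.Icc L x₀ ⊆ Set.Ioc 0 ε := fun y hy =>
      ⟨lt_of_lt_of_le hLpos hy.1, hy.2.trans hx₀.2⟩
    obtain ⟨M, hM⟩ := (isCompact_Icc (a := L) (b := x₀)).exists_bound_of_continuousOn
      (hgc.mono hIccsub)
    have hM1 : (0:ℝ) < M + 1 := by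
      have := hM x₀ ⟨hLle 0, le_refl x₀⟩
      have h0 := norm_nonneg (g x₀)
      linarith
    have hdiff : Tendsto (fun n => xs n - xs (n+1)) atTop (𝓝 0) := by
      have h2 : Tendsto (fun n => xs (n+1)) atTop (𝓝 L) :=
        hxtend.comp (tendsto_add_atTop_nat 1)
      have := hxtend.sub h2
      simpa using this
    have hev : ∀ᶠ n in atTop, xs n - xs (n+1) < 1/(M+1) :=
      hdiff.eventually (eventually_lt_nhds (by positivity))
    obtain ⟨n, hn⟩ := hev.exists
    have hint : (∫ y in (xs (n+1))..(xs n), g y) = 1 := by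
      rw [hxss]
      exact (hf (xs n) (hxmem n)).2.2
    have hsub2 : Set.uIoc (xs (n+1)) (xs n) ⊆ Set.Icc L x₀ := by
      rw [Set.uIoc_of_le (hxdec n).le]
      intro y hy
      exact ⟨(hLle (n+1)).trans hy.1.le, hy.2.trans (hxle n)⟩
    have hbnd : ‖∫ y in (xs (n+1))..(xs n), g y‖ ≤ (M+1) * |xs n - xs (n+1)| :=
      intervalIntegral.norm_integral_le_of_norm_le_const
        (fun y hy => by
          have := hM y (hsub2 hy)
          linarith)
    rw [hint] at hbnd
    rw [abs_of_nonneg (by linarith [hxdec n] : (0:ℝ) ≤ xs n - xs (n+1))] at hbnd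
    have : (M+1) * (xs n - xs (n+1)) < (M+1) * (1/(M+1)) :=
      mul_lt_mul_of_pos_left hn hM1
    rw [mul_one_div, div_self hM1.ne'] at this
    simp only [norm_one] at hbnd
    linarith
  rw [hL] at hxtend
  have hxtendW : Tendsto xs atTop (𝓝[>] (0:ℝ)) :=
    tendsto_nhdsWithin_of_tendsto_nhds_of_eventually_within xs hxtend
      (Eventually.of_forall fun n => (hxmem n).1)
  -- the model and its antiderivative
  set m : ℝ → ℝ := fun y => (a - R*y^ℓ)/(a^2 * y^(ℓ+1)) with hmdef
  have hmc : ContinuousOn m (Set.Ioc 0 ε) := by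
    apply ContinuousOn.div (by fun_prop) (by fun_prop)
    intro y hy
    have : (0:ℝ) < y := hy.1
    positivity
  have hmint : ∀ p q, p ∈ Set.Ioc (0:ℝ) ε → q ∈ Set.Ioc (0:ℝ) ε →
      IntervalIntegrable m volume p q := fun p q hp hq =>
    (hmc.mono (uIcc_subset_Ioc' hp hq)).intervalIntegrable
  set G : ℝ → ℝ := fun t => -(1/(a*(ℓ:ℝ)*t^ℓ)) - (R/a^2)*Real.log t with hGdef
  have hG : ∀ y : ℝ, 0 < y → HasDerivAt G (m y) y := by
    intro y hy
    have hy0 : y ≠ 0 := hy.ne'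
    have h1 : HasDerivAt (fun t : ℝ => a*(ℓ:ℝ)*t^ℓ) (a*(ℓ:ℝ)*((ℓ:ℝ)*y^(ℓ-1))) y :=
      (hasDerivAt_pow ℓ y).const_mul (a*(ℓ:ℝ))
    have hden : a*(ℓ:ℝ)*y^ℓ ≠ 0 := by positivity
    have h2 : HasDerivAt (fun t : ℝ => 1/(a*(ℓ:ℝ)*t^ℓ))
        ((0 * (a*(ℓ:ℝ)*y^ℓ) - 1 * (a*(ℓ:ℝ)*((ℓ:ℝ)*y^(ℓ-1)))) / (a*(ℓ:ℝ)*y^ℓ)^2) y :=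
      (hasDerivAt_const y (1:ℝ)).div h1 hden
    have h3 : HasDerivAt (fun t : ℝ => (R/a^2)*Real.log t) ((R/a^2)*(1/y)) y := by
      have := (Real.hasDerivAt_log hy0).const_mul (R/a^2)
      simpa using this
    have h4 := h2.neg.sub h3
    have : HasDerivAt G
        (-((0 * (a*(ℓ:ℝ)*y^ℓ) - 1 * (a*(ℓ:ℝ)*((ℓ:ℝ)*y^(ℓ-1)))) / (a*(ℓ:ℝ)*y^ℓ)^2)
          - (R/a^2)*(1/y)) y := h4
    convert this using 1
    obtain ⟨k, hk⟩ : ∃ k, ℓ = k + 1 := ⟨ℓ - 1, by omega⟩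
    subst hk
    simp only [hmdef, Nat.add_sub_cancel]
    have hykne : y^k ≠ 0 := pow_ne_zero _ hy0
    field_simp
    ring
  -- deviation Ψ
  set Ψ : ℝ → ℝ := fun t => ∫ y in t..ε, (g y - m y) with hΨdef
  have hTψ : ∀ t, t ∈ Set.Ioc (0:ℝ) ε → T t = (G ε - G t) + Ψ t := by
    intro t ht
    have hGm : (∫ y in t..ε, m y) = G ε - G t := by
      apply intervalIntegral.integral_eq_sub_of_hasDerivAt
      · intro y hy
        have hy0 : 0 < y := lt_of_lt_of_le (lt_min ht.1 hε) hy.1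
        exact hG y hy0
      · exact hmint t ε ht ⟨hε, le_refl ε⟩
    have hsub : (∫ y in t..ε, (g y - m y)) = (∫ y in t..ε, g y) - ∫ y in t..ε, m y :=
      intervalIntegral.integral_sub (hgint t ε ht ⟨hε, le_refl ε⟩) (hmint t ε ht ⟨hε, le_refl ε⟩)
    show (∫ y in t..ε, g y) = (G ε - G t) + ∫ y in t..ε, (g y - m y)
    rw [hsub, hGm]
    ring
  -- Ψ estimate
  have hφ : Tendsto (fun y : ℝ => y * (g y - m y)) (𝓝[>] (0:ℝ)) (𝓝 0) := by
    have := lemE1' ℓ hℓ a R ε ha hε X hXneg hXe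
    exact this
  have hΨlog : Tendsto (fun t => Ψ t / Real.log t) (𝓝[>] (0:ℝ)) (𝓝 0) :=
    lemE3' ε hε (fun y => g y - m y) (hgc.sub hmc) hφ
  -- sequences for lemB
  set u : ℕ → ℝ := fun n => 1/(xs n)^ℓ with hudef
  set w : ℕ → ℝ := fun n => -Real.log (xs n) with hwdef
  set c : ℝ := a*(ℓ:ℝ)*(T x₀ - G ε) with hcdef
  set η : ℕ → ℝ := fun n => -(a*(ℓ:ℝ))*Ψ (xs n) with hηdef
  have hupos : ∀ n, 0 < u n := fun n => by
    have := (hxmem n).1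
    simp only [hudef]
    positivity
  have hw : Tendsto w atTop atTop := by
    have : Tendsto (fun n => Real.log (xs n)) atTop atBot :=
      Real.tendsto_log_nhdsGT_zero.comp hxtendW
    have h2 : Tendsto (fun n => -Real.log (xs n)) atTop atTop :=
      tendsto_neg_atBot_atTop.comp this
    rw [hwdef]
    exact h2
  have hwu : ∀ n, (ℓ:ℝ) * w n = Real.log (u n) := by
    intro n
    have hxp : 0 < xs n := (hxmem n).1
    simp only [hudef, hwdef, one_div, Real.log_inv, Real.log_pow]
    ring
  have heq : ∀ n, u n = a*(ℓ:ℝ)*n + c + ((ℓ:ℝ)*R/a)*(w n) + η n := by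
    intro n
    have h1 := hTn n
    rw [hTψ (xs n) (hxmem n)] at h1
    have hxp : 0 < xs n := (hxmem n).1
    have hPne : ((xs n):ℝ)^ℓ ≠ 0 := (pow_pos hxp ℓ).ne'
    have hGxs : G (xs n) = -(1/(a*(ℓ:ℝ)*(xs n)^ℓ)) - (R/a^2)*Real.log (xs n) := by
      simp only [hGdef]
    rw [hGxs] at h1
    have h2 : 1/(a*(ℓ:ℝ)*(xs n)^ℓ)
        = T x₀ + n - G ε - (R/a^2)*Real.log (xs n) - Ψ (xs n) := by
      linear_combination h1
    have h3 : (1:ℝ)/(xs n)^ℓ = (a*(ℓ:ℝ)) * (1/(a*(ℓ:ℝ)*(xs n)^ℓ)) := by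
      field_simp
    simp only [hudef, hwdef, hcdef, hηdef]
    rw [h3, h2]
    field_simp
    ring
  have hη : Tendsto (fun n => η n / w n) atTop (𝓝 0) := by
    have h1 : Tendsto (fun n => Ψ (xs n) / Real.log (xs n)) atTop (𝓝 0) :=
      hΨlog.comp hxtendW
    have h2 := h1.const_mul (a*(ℓ:ℝ))
    rw [mul_zero] at h2
    refine h2.congr ?_
    intro n
    simp only [hηdef, hwdef]
    rw [neg_mul, neg_div_neg_eq, mul_div_assoc]
  have hseq := lemB' a (ℓ:ℝ) R c ha hℓ0 u w η hupos hw hwu heq hη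
  have hfin := lemA' a (ℓ:ℝ) R ha hℓ0 u hupos hseq
  refine hfin.congr ?_
  intro n
  have hxp : 0 < xs n := (hxmem n).1
  have : 1/(u n) = (f^[n] x₀)^ℓ := by
    simp only [hudef, one_div, inv_inv, hxsdef]
  rw [← this]
end
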